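/- arXiv:1804.05394 — 9 statements merged into one kernel-verified Lean document; each statement's English description precedes it below -/
import Mathlib

section
/- Let $X=(X_n)_{n=0}^N$ be an $\mathbb{R}^d$-valued discrete-time Markov process with $\mathbb{E}|g(m, X_m)| < \infty$ for all $m$, where $g : \{0,\dots,N\}\times\mathbb{R}^d \to \mathbb{R}$ is measurable. Fix $n \in \{0,\dots,N-1\}$ and let $\tau_{n+1} = \sum_{m=n+1}^N m f_m(X_m) \prod_{j=n+1}^{m-1}(1-f_j(X_j))$ for measurable $f_{n+1},\dots,f_N : \mathbb{R}^d \to \{0,1\}$ with $f_N \equiv 1$. Then there exists a measurable function $f_n : \mathbb{R}^d \to \{0,1\}$ such that the stopping time $\tau_n = \sum_{m=n}^N m f_m(X_m) \prod_{j=n}^{m-1}(1-f_j(X_j))$ satisfies $\mathbb{E}\, g(\tau_n, X_{\tau_n}) \ge V_n - (V_{n+1} - \mathbb{E}\, g(\tau_{n+1}, X_{\tau_{n+1}}))$, where $V_k = \sup_{\tau \in \mathcal{T}_k} \mathbb{E}\, g(\tau, X_\tau)$. -/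
open MeasureTheory Filter Set

lemma aux_insert_Icc {k N : ℕ} (hk : k ≤ N) :
    Finset.Icc k N = insert k (Finset.Icc (k+1) N) := by
  ext m; simp [Finset.mem_Icc, Finset.mem_insert]; omega

lemma aux_insert_Ico {k m : ℕ} (hk : k < m) :
    Finset.Ico k m = insert k (Finset.Ico (k+1) m) := by
  ext j; simp [Finset.mem_Ico, Finset.mem_insert]; omega

lemma aux_sum_rec (a : ℕ → ℕ) {k N : ℕ} (hk : k < N) :
    ∑ m ∈ Finset.Icc k N, m * a m * ∏ j ∈ Finset.Ico k m, (1 - a j)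
      = k * a k + (1 - a k) *
        ∑ m ∈ Finset.Icc (k+1) N, m * a m * ∏ j ∈ Finset.Ico (k+1) m, (1 - a j) := by
  rw [aux_insert_Icc hk.le, Finset.sum_insert (by simp)]
  congr 1
  · simp
  · rw [Finset.mul_sum]
    refine Finset.sum_congr rfl fun m hm => ?_
    rw [Finset.mem_Icc] at hm
    rw [aux_insert_Ico (by omega), Finset.prod_insert (by simp)]
    ring

lemma aux_sum_spec (a : ℕ → ℕ) (ha : ∀ j, a j ≤ 1) (N : ℕ) (haN : a N = 1) :
    ∀ d k, N - k ≤ d → k ≤ N →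
      k ≤ (∑ m ∈ Finset.Icc k N, m * a m * ∏ j ∈ Finset.Ico k m, (1 - a j)) ∧
      (∑ m ∈ Finset.Icc k N, m * a m * ∏ j ∈ Finset.Ico k m, (1 - a j)) ≤ N ∧
      a (∑ m ∈ Finset.Icc k N, m * a m * ∏ j ∈ Finset.Ico k m, (1 - a j)) = 1 ∧
      ∀ j, k ≤ j → j < (∑ m ∈ Finset.Icc k N, m * a m * ∏ j ∈ Finset.Ico k m, (1 - a j)) →
        a j = 0 := by
  intro d
  induction d with
  | zero =>
    intro k hd hk
    have hkN : k = N := by omega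
    subst hkN
    simp [haN]
    intro j h1 h2; omega
  | succ d ih =>
    intro k hd hk
    rcases eq_or_lt_of_le hk with hkN | hkN
    · subst hkN; simp [haN]; intro j h1 h2; omega
    · rw [aux_sum_rec a hkN]
      rcases Nat.le_one_iff_eq_zero_or_eq_one.mp (ha k) with h0 | h1
      · obtain ⟨h1', h2', h3', h4'⟩ := ih (k+1) (by omega) (by omega)
        rw [h0]
        simp only [Nat.mul_zero, Nat.zero_add, Nat.sub_zero, Nat.one_mul]
        refine ⟨by omega, h2', h3', fun j hj1 hj2 => ?_⟩
        rcases eq_or_lt_of_le hj1 with rfl | hj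
        · exact h0
        · exact h4' j (by omega) hj2
      · rw [h1]
        simp only [Nat.mul_one, Nat.sub_self, Nat.zero_mul, Nat.add_zero]
        exact ⟨le_rfl, by omega, h1, fun j hj1 hj2 => by omega⟩

lemma aux_sum_eq (a : ℕ → ℕ) (ha : ∀ j, a j ≤ 1) (N : ℕ) (haN : a N = 1) {k m : ℕ}
    (hk : k ≤ m) (hm : m ≤ N) (ham : a m = 1) (h0 : ∀ j, k ≤ j → j < m → a j = 0) :
    (∑ m ∈ Finset.Icc k N, m * a m * ∏ j ∈ Finset.Ico k m, (1 - a j)) = m := by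
  obtain ⟨h1, h2, h3, h4⟩ := aux_sum_spec a ha N haN (N - k) k le_rfl (hk.trans hm)
  set S := ∑ m ∈ Finset.Icc k N, m * a m * ∏ j ∈ Finset.Ico k m, (1 - a j)
  rcases lt_trichotomy S m with h | h | h
  · exact absurd h3 (by rw [h0 S h1 h]; omega)
  · exact h
  · exact absurd ham (by rw [h4 m hk h]; omega)

lemma aux_trunc_abs (c t : ℝ) (hc : 0 ≤ c) : |max (-c) (min c t)| ≤ |t| := by
  rw [abs_le]
  constructor
  · exact le_trans (le_min (le_trans (neg_nonpos.mpr (abs_nonneg t)) hc) (neg_abs_le t))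
      (le_max_right _ _)
  · exact max_le (le_trans (neg_nonpos.mpr hc) (abs_nonneg t))
      (le_trans (min_le_right c t) (le_abs_self t))

lemma aux_trunc_eq (c t : ℝ) (h : |t| ≤ c) : max (-c) (min c t) = t := by
  rw [abs_le] at h
  rw [min_eq_right h.2, max_eq_right (by linarith [h.1])]

theorem stmt2
    {Ω : Type*} {m0 : MeasurableSpace Ω} (μ : Measure Ω) [IsProbabilityMeasure μ]
    (d N n : ℕ) (hn : n < N)
    (X : ℕ → Ω → (Fin d → ℝ)) (hX : ∀ m, StronglyMeasurable (X m))
    -- the Markov property: conditioning functions of the future on the past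
    -- is the same as conditioning on the present state
    (hMarkov : ∀ (k : ℕ) (h : (ℕ → (Fin d → ℝ)) → ℝ), Measurable h →
      (∃ C, ∀ y, |h y| ≤ C) →
      μ[(fun ω => h (fun m => X (k + 1 + m) ω)) | (MeasureTheory.Filtration.natural X hX) k]
        =ᵐ[μ] μ[(fun ω => h (fun m => X (k + 1 + m) ω)) | MeasurableSpace.comap (X k) inferInstance])
    (g : ℕ → (Fin d → ℝ) → ℝ) (hg : ∀ m, Measurable (g m))
    (hgint : ∀ m, m ≤ N → Integrable (fun ω => g m (X m ω)) μ)
    (f : ℕ → (Fin d → ℝ) → ℕ) (hf : ∀ m, Measurable (f m))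
    (hf01 : ∀ m x, f m x ≤ 1) (hfN : ∀ x, f N x = 1)
    -- the optimal values V_k over stopping times valued in {k,...,N}
    (V : ℕ → ℝ)
    (hV : ∀ k, V k = sSup ((fun τ : Ω → ℕ => ∫ ω, g (τ ω) (X (τ ω) ω) ∂μ) ''
      {τ | IsStoppingTime (MeasureTheory.Filtration.natural X hX) (fun ω => (τ ω : WithTop ℕ)) ∧
        ∀ ω, τ ω ∈ Finset.Icc k N})) :
    ∃ fn : (Fin d → ℝ) → ℕ, Measurable fn ∧ (∀ x, fn x ≤ 1) ∧
      ∫ ω, g ((fun ω => ∑ m ∈ Finset.Icc n N,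
            m * (if m = n then fn else f m) (X m ω) *
              ∏ j ∈ Finset.Ico n m, (1 - (if j = n then fn else f j) (X j ω))) ω)
          (X ((fun ω => ∑ m ∈ Finset.Icc n N,
            m * (if m = n then fn else f m) (X m ω) *
              ∏ j ∈ Finset.Ico n m, (1 - (if j = n then fn else f j) (X j ω))) ω) ω) ∂μ
        ≥ V n - (V (n + 1) -
            ∫ ω, g ((fun ω => ∑ m ∈ Finset.Icc (n + 1) N,
                m * f m (X m ω) * ∏ j ∈ Finset.Ico (n + 1) m, (1 - f j (X j ω))) ω)
              (X ((fun ω => ∑ m ∈ Finset.Icc (n + 1) N,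
                m * f m (X m ω) * ∏ j ∈ Finset.Ico (n + 1) m, (1 - f j (X j ω))) ω) ω) ∂μ) := by
  classical
  set F := MeasureTheory.Filtration.natural X hX with hFdef
  -- the stopping time τ_{n+1}
  set σ : Ω → ℕ := fun ω => ∑ m ∈ Finset.Icc (n + 1) N,
      m * f m (X m ω) * ∏ j ∈ Finset.Ico (n + 1) m, (1 - f j (X j ω)) with hσdef
  have hσspec : ∀ ω, n + 1 ≤ σ ω ∧ σ ω ≤ N ∧ f (σ ω) (X (σ ω) ω) = 1 ∧
      ∀ j, n + 1 ≤ j → j < σ ω → f j (X j ω) = 0 := fun ω =>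
    aux_sum_spec (fun m => f m (X m ω)) (fun j => hf01 j _) N (hfN _)
      (N - (n + 1)) (n + 1) le_rfl (by omega)
  -- description of the level sets of σ
  have hσlevel : ∀ i, n + 1 ≤ i → i ≤ N → {ω | σ ω = i} =
      (X i ⁻¹' (f i ⁻¹' {1})) ∩ ⋂ j ∈ Finset.Ico (n + 1) i, X j ⁻¹' (f j ⁻¹' {0}) := by
    intro i hi1 hi2
    ext ω
    simp only [Set.mem_setOf_eq, Set.mem_inter_iff, Set.mem_preimage, Set.mem_singleton_iff,
      Set.mem_iInter, Finset.mem_Ico]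
    constructor
    · rintro rfl
      obtain ⟨h1, h2, h3, h4⟩ := hσspec ω
      exact ⟨h3, fun j hj => h4 j hj.1 hj.2⟩
    · rintro ⟨h1, h2⟩
      exact aux_sum_eq (fun m => f m (X m ω)) (fun j => hf01 j _) N (hfN _) hi1 hi2 h1
        (fun j hj1 hj2 => h2 j ⟨hj1, hj2⟩)
  have hσempty : ∀ i, (i < n + 1 ∨ N < i) → {ω | σ ω = i} = ∅ := by
    intro i hi
    ext ω
    simp only [Set.mem_setOf_eq, Set.mem_empty_iff_false, iff_false]
    intro h
    obtain ⟨h1, h2, -, -⟩ := hσspec ω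
    omega
  have hcomapF : ∀ j : ℕ, MeasurableSpace.comap (X j) inferInstance ≤ F j := by
    intro j
    exact le_iSup₂ (f := fun k (_ : k ≤ j) => MeasurableSpace.comap (X k)
      (inferInstance : MeasurableSpace (Fin d → ℝ))) j le_rfl
  have hXF : ∀ j (B : Set (Fin d → ℝ)), MeasurableSet B → MeasurableSet[F j] (X j ⁻¹' B) :=
    fun j B hB => hcomapF j _ ⟨B, hB, rfl⟩
  have hσlevelF : ∀ i, MeasurableSet[F i] {ω | σ ω = i} := by
    intro i
    by_cases hi : n + 1 ≤ i ∧ i ≤ N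
    · rw [hσlevel i hi.1 hi.2]
      refine MeasurableSet.inter (hXF i _ ((hf i) (measurableSet_singleton 1))) ?_
      refine Finset.measurableSet_biInter _ fun j hj => ?_
      rw [Finset.mem_Ico] at hj
      exact F.mono hj.2.le _ (hXF j _ ((hf j) (measurableSet_singleton 0)))
    · rw [hσempty i (by omega)]
      exact @MeasurableSet.empty _ (F i)
  have hσStop : IsStoppingTime F (fun ω => (σ ω : WithTop ℕ)) :=
    isStoppingTime_of_measurableSet_eq fun i => by simpa using hσlevelF i
  have hσmeas : Measurable σ :=
    measurable_to_countable' fun i => F.le i _ (hσlevelF i)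
  -- the reward at time σ
  set G : Ω → ℝ := fun ω => g (σ ω) (X (σ ω) ω) with hGdef
  have hGrep : ∀ ω, G ω = ∑ m ∈ Finset.Icc (n+1) N, if σ ω = m then g m (X m ω) else 0 := by
    intro ω
    rw [Finset.sum_ite_eq]
    have h := hσspec ω
    rw [if_pos (Finset.mem_Icc.mpr ⟨h.1, h.2.1⟩)]
  have hGmeas : Measurable G := by
    rw [show G = fun ω => ∑ m ∈ Finset.Icc (n+1) N, if σ ω = m then g m (X m ω) else 0 from
      funext hGrep]
    refine Finset.measurable_sum _ fun m hm => Measurable.ite ?_ ((hg m).comp (hX m).measurable)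
      measurable_const
    exact hσmeas (measurableSet_singleton m)
  have hGint : Integrable G μ := by
    rw [show G = fun ω => ∑ m ∈ Finset.Icc (n+1) N, if σ ω = m then g m (X m ω) else 0 from
      funext hGrep]
    refine integrable_finset_sum _ fun m hm => ?_
    rw [Finset.mem_Icc] at hm
    rw [show (fun ω => if σ ω = m then g m (X m ω) else 0)
        = Set.indicator {ω | σ ω = m} (fun ω => g m (X m ω)) from
      funext fun ω => by simp [Set.indicator_apply]]
    exact (hgint m hm.2).indicator (hσmeas (measurableSet_singleton m))
  -- uniform bound on values of stopped rewards
  set C : ℝ := ∑ m ∈ Finset.range (N+1), ∫ ω, |g m (X m ω)| ∂μ with hCdef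
  have hkey_int : ∀ (k : ℕ) (τ : Ω → ℕ), Measurable τ → (∀ ω, τ ω ∈ Finset.Icc k N) →
      Integrable (fun ω => g (τ ω) (X (τ ω) ω)) μ ∧
      ∫ ω, g (τ ω) (X (τ ω) ω) ∂μ ≤ C := by
    intro k τ hτm hτr
    have hrep : ∀ ω, g (τ ω) (X (τ ω) ω)
        = ∑ m ∈ Finset.Icc k N, if τ ω = m then g m (X m ω) else 0 := by
      intro ω
      rw [Finset.sum_ite_eq, if_pos (hτr ω)]
    have hint : ∀ m ∈ Finset.Icc k N,
        Integrable (fun ω => if τ ω = m then g m (X m ω) else 0) μ := by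
      intro m hm
      rw [Finset.mem_Icc] at hm
      rw [show (fun ω => if τ ω = m then g m (X m ω) else 0)
          = Set.indicator {ω | τ ω = m} (fun ω => g m (X m ω)) from
        funext fun ω => by simp [Set.indicator_apply]]
      exact (hgint m hm.2).indicator (hτm (measurableSet_singleton m))
    have hfun : (fun ω => g (τ ω) (X (τ ω) ω)) = fun ω => ∑ m ∈ Finset.Icc k N,
        if τ ω = m then g m (X m ω) else 0 := funext hrep
    constructor
    · rw [hfun]
      exact integrable_finset_sum _ hint
    · rw [hfun, integral_finset_sum _ hint, hCdef]
      have h1 : ∀ m ∈ Finset.Icc k N,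
          (∫ ω, (if τ ω = m then g m (X m ω) else 0) ∂μ) ≤ ∫ ω, |g m (X m ω)| ∂μ := by
        intro m hm
        rw [Finset.mem_Icc] at hm
        refine integral_mono (hint m (Finset.mem_Icc.mpr hm)) (hgint m hm.2).abs fun ω => ?_
        by_cases h : τ ω = m
        · simp [h, le_abs_self]
        · simp [h, abs_nonneg]
      calc ∑ m ∈ Finset.Icc k N, ∫ ω, (if τ ω = m then g m (X m ω) else 0) ∂μ
          ≤ ∑ m ∈ Finset.Icc k N, ∫ ω, |g m (X m ω)| ∂μ := Finset.sum_le_sum h1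
        _ ≤ ∑ m ∈ Finset.range (N+1), ∫ ω, |g m (X m ω)| ∂μ := by
            refine Finset.sum_le_sum_of_subset_of_nonneg ?_ fun m _ _ =>
              integral_nonneg fun ω => abs_nonneg _
            intro m hm
            rw [Finset.mem_Icc] at hm
            rw [Finset.mem_range]
            omega
  -- the conditional expectation of G given X n
  set W : Ω → ℝ := μ[G | MeasurableSpace.comap (X n) inferInstance] with hWdef
  have hWint : Integrable W μ := integrable_condExp
  have h𝔪0 : MeasurableSpace.comap (X n) (inferInstance : MeasurableSpace (Fin d → ℝ)) ≤ m0 :=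
    (hcomapF n).trans (F.le n)
  have hWmeas𝔪 : Measurable[MeasurableSpace.comap (X n) inferInstance] W :=
    stronglyMeasurable_condExp.measurable
  have hWmeas : Measurable W := hWmeas𝔪.mono h𝔪0 le_rfl
  -- the functions on path space used with the Markov property
  set s0 : (ℕ → (Fin d → ℝ)) → ℕ := fun y => ∑ m ∈ Finset.Icc (n+1) N,
      m * f m (y (m - (n+1))) * ∏ j ∈ Finset.Ico (n+1) m, (1 - f j (y (j - (n+1)))) with hs0def
  have hs0meas : Measurable s0 := by
    refine Finset.measurable_sum _ fun m hm => ?_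
    refine Measurable.mul (Measurable.mul measurable_const
      ((hf m).comp (measurable_pi_apply _))) ?_
    exact Finset.measurable_prod _ fun j hj =>
      Measurable.sub measurable_const ((hf j).comp (measurable_pi_apply _))
  set H0 : (ℕ → (Fin d → ℝ)) → ℝ := fun y => ∑ m ∈ Finset.Icc (n+1) N,
      if s0 y = m then g m (y (m - (n+1))) else 0 with hH0def
  have hH0meas : Measurable H0 := Finset.measurable_sum _ fun m hm =>
    Measurable.ite (hs0meas (measurableSet_singleton m)) ((hg m).comp (measurable_pi_apply _))
      measurable_const
  have hs0X : ∀ ω, s0 (fun m => X (n + 1 + m) ω) = σ ω := by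
    intro ω
    simp only [hs0def, hσdef]
    refine Finset.sum_congr rfl fun m hm => ?_
    rw [Finset.mem_Icc] at hm
    rw [show n + 1 + (m - (n+1)) = m by omega]
    congr 1
    refine Finset.prod_congr rfl fun j hj => ?_
    rw [Finset.mem_Ico] at hj
    rw [show n + 1 + (j - (n+1)) = j by omega]
  have hH0X : ∀ ω, H0 (fun m => X (n + 1 + m) ω) = G ω := by
    intro ω
    rw [hGrep ω]
    simp only [hH0def]
    refine Finset.sum_congr rfl fun m hm => ?_
    rw [Finset.mem_Icc] at hm
    rw [hs0X ω, show n + 1 + (m - (n+1)) = m by omega]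
  -- KEY: integrals of G and W agree on F n-measurable sets
  have hKEY : ∀ A : Set Ω, MeasurableSet[F n] A →
      ∫ ω in A, G ω ∂μ = ∫ ω in A, W ω ∂μ := by
    intro A hA
    have hA0 : MeasurableSet A := F.le n A hA
    have hbound : ∀ Cn : ℕ, |(∫ ω in A, G ω ∂μ) - ∫ ω in A, W ω ∂μ|
        ≤ 2 * ∫ ω, |max (-(Cn:ℝ)) (min (Cn:ℝ) (G ω)) - G ω| ∂μ := by
      intro Cn
      have hc : (0:ℝ) ≤ (Cn:ℝ) := Nat.cast_nonneg _
      set Gb : Ω → ℝ := fun ω => max (-(Cn:ℝ)) (min (Cn:ℝ) (G ω)) with hGbdef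
      have hGbmeas : Measurable Gb := Measurable.max measurable_const
        (Measurable.min measurable_const hGmeas)
      have hGbabs : ∀ ω, |Gb ω| ≤ |G ω| := fun ω => aux_trunc_abs _ (G ω) hc
      have hGbint : Integrable Gb μ := hGint.mono hGbmeas.aestronglyMeasurable
        (ae_of_all _ fun ω => by
          rw [Real.norm_eq_abs, Real.norm_eq_abs]; exact hGbabs ω)
      -- Markov property for the truncated reward
      have hHb : Measurable fun y => max (-(Cn:ℝ)) (min (Cn:ℝ) (H0 y)) :=
        Measurable.max measurable_const (Measurable.min measurable_const hH0meas)
      have hbd : ∀ y, |max (-(Cn:ℝ)) (min (Cn:ℝ) (H0 y))| ≤ (Cn:ℝ) := by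
        intro y
        rw [abs_le]
        exact ⟨le_max_left _ _, max_le (by linarith) (min_le_left _ _)⟩
      have hM := hMarkov n (fun y => max (-(Cn:ℝ)) (min (Cn:ℝ) (H0 y))) hHb ⟨(Cn:ℝ), hbd⟩
      have hcomp : (fun ω => max (-(Cn:ℝ)) (min (Cn:ℝ) (H0 (fun m => X (n + 1 + m) ω)))) = Gb := by
        funext ω
        rw [hH0X ω]
      rw [hcomp] at hM
      set Wb : Ω → ℝ := μ[Gb | MeasurableSpace.comap (X n) inferInstance] with hWbdef
      have hWbint : Integrable Wb μ := integrable_condExp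
      have e1 : |(∫ ω in A, G ω ∂μ) - ∫ ω in A, Gb ω ∂μ| ≤ ∫ ω, |Gb ω - G ω| ∂μ := by
        rw [← integral_sub hGint.integrableOn hGbint.integrableOn]
        calc |∫ ω in A, (G ω - Gb ω) ∂μ| ≤ ∫ ω in A, |G ω - Gb ω| ∂μ := by
              simpa [Real.norm_eq_abs] using
                norm_integral_le_integral_norm (f := fun ω => G ω - Gb ω) (μ := μ.restrict A)
          _ ≤ ∫ ω, |G ω - Gb ω| ∂μ := setIntegral_le_integral (hGint.sub hGbint).abs
              (ae_of_all _ fun ω => abs_nonneg _)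
          _ = ∫ ω, |Gb ω - G ω| ∂μ := by simp_rw [abs_sub_comm]
      have e2 : ∫ ω in A, Gb ω ∂μ = ∫ ω in A, Wb ω ∂μ := by
        rw [← setIntegral_condExp (F.le n) hGbint hA]
        exact setIntegral_congr_ae hA0 (hM.mono fun ω hω _ => hω)
      have e3 : |(∫ ω in A, Wb ω ∂μ) - ∫ ω in A, W ω ∂μ| ≤ ∫ ω, |Gb ω - G ω| ∂μ := by
        have h5 : Wb - W =ᵐ[μ] μ[Gb - G | MeasurableSpace.comap (X n) inferInstance] :=
          (condExp_sub hGbint hGint _).symm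
        have h6 : ∫ ω, |Wb ω - W ω| ∂μ ≤ ∫ ω, |Gb ω - G ω| ∂μ := by
          calc ∫ ω, |Wb ω - W ω| ∂μ
              = ∫ ω, |(μ[Gb - G | MeasurableSpace.comap (X n) inferInstance]) ω| ∂μ :=
                integral_congr_ae ((h5.fun_comp abs).mono fun ω hω => hω)
            _ ≤ ∫ ω, |(Gb - G) ω| ∂μ := integral_abs_condExp_le _
            _ = ∫ ω, |Gb ω - G ω| ∂μ := rfl
        calc |(∫ ω in A, Wb ω ∂μ) - ∫ ω in A, W ω ∂μ|
            = |∫ ω in A, (Wb ω - W ω) ∂μ| := by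
              rw [integral_sub hWbint.integrableOn hWint.integrableOn]
          _ ≤ ∫ ω in A, |Wb ω - W ω| ∂μ := by
              simpa [Real.norm_eq_abs] using
                norm_integral_le_integral_norm (f := fun ω => Wb ω - W ω) (μ := μ.restrict A)
          _ ≤ ∫ ω, |Wb ω - W ω| ∂μ := setIntegral_le_integral (hWbint.sub hWint).abs
              (ae_of_all _ fun ω => abs_nonneg _)
          _ ≤ ∫ ω, |Gb ω - G ω| ∂μ := h6
      have e4 : |(∫ ω in A, G ω ∂μ) - ∫ ω in A, W ω ∂μ| ≤ 2 * ∫ ω, |Gb ω - G ω| ∂μ := by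
        calc |(∫ ω in A, G ω ∂μ) - ∫ ω in A, W ω ∂μ|
            ≤ |(∫ ω in A, G ω ∂μ) - ∫ ω in A, Gb ω ∂μ|
              + |(∫ ω in A, Gb ω ∂μ) - ∫ ω in A, W ω ∂μ| := abs_sub_le _ _ _
          _ ≤ (∫ ω, |Gb ω - G ω| ∂μ) + ∫ ω, |Gb ω - G ω| ∂μ :=
              add_le_add e1 (by rw [e2]; exact e3)
          _ = 2 * ∫ ω, |Gb ω - G ω| ∂μ := by ring
      exact e4
    have htend : Tendsto (fun Cn : ℕ => 2 * ∫ ω, |max (-(Cn:ℝ)) (min (Cn:ℝ) (G ω)) - G ω| ∂μ)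
        atTop (nhds 0) := by
      have h0 : Tendsto (fun Cn : ℕ => ∫ ω, |max (-(Cn:ℝ)) (min (Cn:ℝ) (G ω)) - G ω| ∂μ)
          atTop (nhds (∫ ω, (0:ℝ) ∂μ)) := by
        refine tendsto_integral_of_dominated_convergence (fun ω => 2 * |G ω|) ?_ ?_ ?_ ?_
        · intro Cn
          exact ((Measurable.max measurable_const
            (Measurable.min measurable_const hGmeas)).sub hGmeas).abs.aestronglyMeasurable
        · exact hGint.abs.const_mul 2
        · intro Cn
          refine ae_of_all _ fun ω => ?_
          rw [Real.norm_eq_abs, abs_abs]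
          have h1 := aux_trunc_abs (Cn:ℝ) (G ω) (Nat.cast_nonneg _)
          calc |max (-(Cn:ℝ)) (min (Cn:ℝ) (G ω)) - G ω|
              ≤ |max (-(Cn:ℝ)) (min (Cn:ℝ) (G ω))| + |G ω| := abs_sub _ _
            _ ≤ 2 * |G ω| := by linarith
        · refine ae_of_all _ fun ω => ?_
          have hev : ∀ᶠ Cn : ℕ in atTop,
              |max (-(Cn:ℝ)) (min (Cn:ℝ) (G ω)) - G ω| = 0 := by
            filter_upwards [eventually_ge_atTop ⌈|G ω|⌉₊] with Cn hCn
            have h1 : |G ω| ≤ (Cn:ℝ) := (Nat.le_ceil _).trans (Nat.cast_le.mpr hCn)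
            rw [aux_trunc_eq _ _ h1, sub_self, abs_zero]
          exact Tendsto.congr' (hev.mono fun Cn h => h.symm) tendsto_const_nhds
      rw [integral_zero] at h0
      simpa using h0.const_mul 2
    have habs : |(∫ ω in A, G ω ∂μ) - ∫ ω in A, W ω ∂μ| ≤ 0 :=
      ge_of_tendsto htend (Eventually.of_forall hbound)
    have h2 := abs_nonneg ((∫ ω in A, G ω ∂μ) - ∫ ω in A, W ω ∂μ)
    have h3 : |(∫ ω in A, G ω ∂μ) - ∫ ω in A, W ω ∂μ| = 0 := le_antisymm habs h2
    rw [abs_eq_zero, sub_eq_zero] at h3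
    exact h3
  -- the immediate reward
  set a : Ω → ℝ := fun ω => g n (X n ω) with hadef
  have haint : Integrable a μ := hgint n hn.le
  have ha_meas𝔪 : Measurable[MeasurableSpace.comap (X n) inferInstance] a :=
    (hg n).comp (measurable_iff_comap_le.mpr le_rfl)
  have hD𝔪 : MeasurableSet[MeasurableSpace.comap (X n) inferInstance] {ω | W ω ≤ a ω} :=
    measurableSet_le hWmeas𝔪 ha_meas𝔪
  obtain ⟨B, hB, hBeq⟩ := MeasurableSpace.measurableSet_comap.mp hD𝔪
  set fn : (Fin d → ℝ) → ℕ := fun x => if x ∈ B then 1 else 0 with hfndef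
  have hfnmeas : Measurable fn := Measurable.ite hB measurable_const measurable_const
  have hfn01 : ∀ x, fn x ≤ 1 := fun x => by by_cases h : x ∈ B <;> simp [hfndef, h]
  have hfn_iff : ∀ ω, (fn (X n ω) = 1 ↔ W ω ≤ a ω) := by
    intro ω
    constructor
    · intro h
      by_cases hx : X n ω ∈ B
      · have h2 : ω ∈ X n ⁻¹' B := hx
        rw [hBeq] at h2
        exact h2
      · simp [hfndef, hx] at h
    · intro h
      have h2 : ω ∈ X n ⁻¹' B := by rw [hBeq]; exact h
      simp [hfndef, Set.mem_preimage.mp h2]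
  have hDF : MeasurableSet[F n] {ω | W ω ≤ a ω} := hcomapF n _ hD𝔪
  have hD0 : MeasurableSet {ω | W ω ≤ a ω} := F.le n _ hDF
  -- integrability of the maximum
  have hmax_int : Integrable (fun ω => max (a ω) (W ω)) μ := by
    exact haint.sup hWint
  -- the new stopping rule
  set S : Ω → ℕ := fun ω => ∑ m ∈ Finset.Icc n N,
      m * (if m = n then fn else f m) (X m ω) *
        ∏ j ∈ Finset.Ico n m, (1 - (if j = n then fn else f j) (X j ω)) with hSdef
  have hS : ∀ ω, S ω = if fn (X n ω) = 1 then n else σ ω := by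
    intro ω
    have h1 : S ω = n * (if n = n then fn else f n) (X n ω)
        + (1 - (if n = n then fn else f n) (X n ω)) *
          ∑ m ∈ Finset.Icc (n+1) N, m * (if m = n then fn else f m) (X m ω) *
            ∏ j ∈ Finset.Ico (n+1) m, (1 - (if j = n then fn else f j) (X j ω)) :=
      aux_sum_rec (fun m => (if m = n then fn else f m) (X m ω)) hn
    have h3 : (∑ m ∈ Finset.Icc (n+1) N, m * (if m = n then fn else f m) (X m ω) *
        ∏ j ∈ Finset.Ico (n+1) m, (1 - (if j = n then fn else f j) (X j ω))) = σ ω := by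
      simp only [hσdef]
      refine Finset.sum_congr rfl fun m hm => ?_
      rw [Finset.mem_Icc] at hm
      rw [if_neg (by omega : ¬ m = n)]
      congr 1
      refine Finset.prod_congr rfl fun j hj => ?_
      rw [Finset.mem_Ico] at hj
      rw [if_neg (by omega : ¬ j = n)]
    rw [h1, if_pos rfl, h3]
    rcases Nat.le_one_iff_eq_zero_or_eq_one.mp (hfn01 (X n ω)) with h | h
    · rw [h, if_neg (by omega : ¬ (0:ℕ) = 1)]
      omega
    · rw [h, if_pos rfl]
      omega
  have hSg : ∀ ω, g (S ω) (X (S ω) ω) = if W ω ≤ a ω then a ω else G ω := by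
    intro ω
    rw [hS ω]
    by_cases h : fn (X n ω) = 1
    · rw [if_pos h, if_pos ((hfn_iff ω).mp h)]
    · rw [if_neg h, if_neg (fun hc => h ((hfn_iff ω).mpr hc))]
  -- the value of the new stopping rule
  have hEgmax : ∫ ω, (if W ω ≤ a ω then a ω else G ω) ∂μ = ∫ ω, max (a ω) (W ω) ∂μ := by
    have h1 : (fun ω => if W ω ≤ a ω then a ω else G ω)
        = fun ω => {ω | W ω ≤ a ω}.indicator a ω + {ω | W ω ≤ a ω}ᶜ.indicator G ω := by
      funext ω
      by_cases h : W ω ≤ a ω <;> simp [Set.indicator_apply, h]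
    rw [h1, integral_add (haint.indicator hD0) (hGint.indicator hD0.compl),
      integral_indicator hD0.compl, hKEY _ hDF.compl, ← integral_indicator hD0.compl,
      ← integral_add (haint.indicator hD0) (hWint.indicator hD0.compl)]
    refine integral_congr_ae (ae_of_all _ fun ω => ?_)
    by_cases h : W ω ≤ a ω
    · simp [Set.indicator_apply, h, max_eq_left h]
    · simp [Set.indicator_apply, h, max_eq_right (not_le.mp h).le]
  -- ∫ G = ∫ W
  have hEG_W : ∫ ω, G ω ∂μ = ∫ ω, W ω ∂μ := by
    have h1 := hKEY Set.univ (@MeasurableSet.univ _ (F n))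
    simpa [Measure.restrict_univ] using h1
  -- bounded above
  have hbdd : ∀ k, BddAbove ((fun τ : Ω → ℕ => ∫ ω, g (τ ω) (X (τ ω) ω) ∂μ) ''
      {τ | IsStoppingTime F (fun ω => (τ ω : WithTop ℕ)) ∧ ∀ ω, τ ω ∈ Finset.Icc k N}) := by
    intro k
    refine ⟨C, ?_⟩
    rintro x ⟨τ, ⟨hτs, hτr⟩, rfl⟩
    have hτm : Measurable τ :=
      measurable_to_countable' fun i => F.le i _ (by
        have h := hτs.measurableSet_eq i
        have e : {ω | τ ω = i} = {ω | ((τ ω : ℕ) : WithTop ℕ) = ((i : ℕ) : WithTop ℕ)} := by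
          ext; simp
        show MeasurableSet[F i] {ω | τ ω = i}
        rw [e]; exact h)
    exact (hkey_int k τ hτm hτr).2
  -- V (n+1) dominates ∫ G
  have hVn1_ge : ∫ ω, G ω ∂μ ≤ V (n+1) := by
    rw [hV (n+1)]
    exact le_csSup (hbdd (n+1))
      ⟨σ, ⟨hσStop, fun ω => Finset.mem_Icc.mpr ⟨(hσspec ω).1, (hσspec ω).2.1⟩⟩, rfl⟩
  -- main estimate : V n is dominated
  have hVn_le : V n ≤ (∫ ω, max (a ω) (W ω) ∂μ) + (V (n+1) - ∫ ω, G ω ∂μ) := by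
    rw [hV n]
    refine csSup_le ?_ ?_
    · exact ⟨_, ⟨fun _ => N, ⟨isStoppingTime_const F N,
        fun ω => Finset.mem_Icc.mpr ⟨hn.le, le_rfl⟩⟩, rfl⟩⟩
    rintro x ⟨τ, ⟨hτs, hτr⟩, rfl⟩
    have hτm : Measurable τ :=
      measurable_to_countable' fun i => F.le i _ (by
        have h := hτs.measurableSet_eq i
        have e : {ω | τ ω = i} = {ω | ((τ ω : ℕ) : WithTop ℕ) = ((i : ℕ) : WithTop ℕ)} := by
          ext; simp
        show MeasurableSet[F i] {ω | τ ω = i}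
        rw [e]; exact h)
    have hτint := (hkey_int n τ hτm hτr).1
    set A : Set Ω := {ω | τ ω = n} with hAdef
    have hAF : MeasurableSet[F n] A := by
      have h := hτs.measurableSet_eq n
      have e : A = {ω | ((τ ω : ℕ) : WithTop ℕ) = ((n : ℕ) : WithTop ℕ)} := by
        ext; simp [hAdef]
      rw [e]; exact h
    have hA0 : MeasurableSet A := F.le n _ hAF
    -- the combined stopping time
    set ρ : Ω → ℕ := fun ω => if τ ω = n then σ ω else τ ω with hρdef
    have hρr : ∀ ω, ρ ω ∈ Finset.Icc (n+1) N := by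
      intro ω
      rw [Finset.mem_Icc]
      by_cases h : τ ω = n
      · simp only [hρdef, if_pos h]
        exact ⟨(hσspec ω).1, (hσspec ω).2.1⟩
      · simp only [hρdef, if_neg h]
        have h2 := Finset.mem_Icc.mp (hτr ω)
        omega
    have hρlevel : ∀ i, MeasurableSet[F i] {ω | ρ ω = i} := by
      intro i
      have hrep : {ω | ρ ω = i} = (A ∩ {ω | σ ω = i}) ∪ ((Aᶜ : Set Ω) ∩ {ω | τ ω = i}) := by
        ext ω
        by_cases h : τ ω = n <;>
          simp [hρdef, hAdef, h, Set.mem_setOf_eq, Set.mem_compl_iff]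
      rw [hrep]
      by_cases hi : n ≤ i
      · exact MeasurableSet.union (MeasurableSet.inter (F.mono hi _ hAF) (hσlevelF i))
          (MeasurableSet.inter (F.mono hi _ hAF.compl) (by simpa using hτs.measurableSet_eq i))
      · have h1 : {ω | σ ω = i} = ∅ := hσempty i (by omega)
        have h2 : {ω | τ ω = i} = ∅ := by
          ext ω
          simp only [Set.mem_setOf_eq, Set.mem_empty_iff_false, iff_false]
          intro hc
          have h3 := Finset.mem_Icc.mp (hτr ω)
          omega
        rw [h1, h2]
        simp only [Set.inter_empty, Set.union_self]
        exact @MeasurableSet.empty _ (F i)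
    have hρs : IsStoppingTime F (fun ω => (ρ ω : WithTop ℕ)) :=
      isStoppingTime_of_measurableSet_eq fun i => by simpa using hρlevel i
    have hρm : Measurable ρ := measurable_to_countable' fun i => F.le i _ (hρlevel i)
    have hρint := (hkey_int (n+1) ρ hρm hρr).1
    have hρle : ∫ ω, g (ρ ω) (X (ρ ω) ω) ∂μ ≤ V (n+1) := by
      rw [hV (n+1)]
      exact le_csSup (hbdd (n+1)) ⟨ρ, ⟨hρs, hρr⟩, rfl⟩
    -- two decompositions
    have hsplit1 : ∫ ω, g (ρ ω) (X (ρ ω) ω) ∂μ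
        = (∫ ω, A.indicator G ω ∂μ)
          + ∫ ω, (Aᶜ : Set Ω).indicator (fun ω => g (τ ω) (X (τ ω) ω)) ω ∂μ := by
      rw [← integral_add (hGint.indicator hA0) (hτint.indicator hA0.compl)]
      refine integral_congr_ae (ae_of_all _ fun ω => ?_)
      show g (ρ ω) (X (ρ ω) ω)
        = A.indicator G ω + (Aᶜ : Set Ω).indicator (fun ω => g (τ ω) (X (τ ω) ω)) ω
      by_cases h : τ ω = n
      · have hmem : ω ∈ A := h
        rw [Set.indicator_of_mem hmem, Set.indicator_of_notMem (by simp [hmem]), add_zero]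
        simp only [hρdef, if_pos h]
        rfl
      · have hmem : ω ∉ A := h
        rw [Set.indicator_of_notMem hmem, Set.indicator_of_mem (by simp [hmem]), zero_add]
        simp only [hρdef, if_neg h]
    have hsplit2 : ∫ ω, g (τ ω) (X (τ ω) ω) ∂μ
        = (∫ ω, A.indicator a ω ∂μ)
          + ∫ ω, (Aᶜ : Set Ω).indicator (fun ω => g (τ ω) (X (τ ω) ω)) ω ∂μ := by
      rw [← integral_add (haint.indicator hA0) (hτint.indicator hA0.compl)]
      refine integral_congr_ae (ae_of_all _ fun ω => ?_)
      show g (τ ω) (X (τ ω) ω)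
        = A.indicator a ω + (Aᶜ : Set Ω).indicator (fun ω => g (τ ω) (X (τ ω) ω)) ω
      by_cases h : τ ω = n
      · have hmem : ω ∈ A := h
        rw [Set.indicator_of_mem hmem, Set.indicator_of_notMem (by simp [hmem]), add_zero, h]
      · have hmem : ω ∉ A := h
        rw [Set.indicator_of_notMem hmem, Set.indicator_of_mem (by simp [hmem]), zero_add]
    -- indicator of G vs W on A
    have hindGW : ∫ ω, A.indicator G ω ∂μ = ∫ ω, A.indicator W ω ∂μ := by
      rw [integral_indicator hA0, integral_indicator hA0, hKEY A hAF]
    -- pointwise estimate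
    have hindsub : ∫ ω, A.indicator (fun ω => a ω - W ω) ω ∂μ
        = (∫ ω, A.indicator a ω ∂μ) - ∫ ω, A.indicator W ω ∂μ := by
      rw [← integral_sub (haint.indicator hA0) (hWint.indicator hA0)]
      refine integral_congr_ae (ae_of_all _ fun ω => ?_)
      by_cases h : ω ∈ A <;> simp [Set.indicator_apply, h]
    have hkey_est : ∫ ω, A.indicator (fun ω => a ω - W ω) ω ∂μ
        ≤ ∫ ω, (max (a ω) (W ω) - W ω) ∂μ := by
      refine integral_mono ((haint.sub hWint).indicator hA0) (hmax_int.sub hWint) fun ω => ?_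
      by_cases h : ω ∈ A
      · rw [Set.indicator_of_mem h]
        exact sub_le_sub_right (le_max_left _ _) _
      · rw [Set.indicator_of_notMem h]
        simp [sub_nonneg, le_max_right]
    have hmaxsub : ∫ ω, (max (a ω) (W ω) - W ω) ∂μ
        = (∫ ω, max (a ω) (W ω) ∂μ) - ∫ ω, W ω ∂μ := integral_sub hmax_int hWint
    linarith [hsplit1, hsplit2, hindGW, hindsub, hkey_est, hmaxsub, hρle, hEG_W]
  -- conclusion
  refine ⟨fn, hfnmeas, hfn01, ?_⟩
  have hLHS : ∫ ω, g (S ω) (X (S ω) ω) ∂μ = ∫ ω, max (a ω) (W ω) ∂μ := by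
    rw [← hEgmax]
    exact integral_congr_ae (ae_of_all _ fun ω => hSg ω)
  show (∫ ω, g (S ω) (X (S ω) ω) ∂μ) ≥ V n - (V (n+1) - ∫ ω, g (σ ω) (X (σ ω) ω) ∂μ)
  rw [hLHS]
  have hEG : (∫ ω, g (σ ω) (X (σ ω) ω) ∂μ) = ∫ ω, G ω ∂μ := rfl
  rw [hEG]
  linarith [hVn_le]
end

section
/- Let $X=(X_n)_{n=0}^N$ be an $\mathbb{R}^d$-valued Markov process with $\mathbb{E}|g(m,X_m)| < \infty$ for all $m$, where $g$ is measurable. Then there exist measurable functions $f_0, f_1, \dots, f_N : \mathbb{R}^d \to \{0,1\}$ with $f_N \equiv 1$ such that the stopping time $\tau = \sum_{n=0}^N n f_n(X_n) \prod_{j=0}^{n-1}(1-f_j(X_j))$ satisfies $\mathbb{E}\, g(\tau, X_\tau) = \sup_{\sigma \in \mathcal{T}} \mathbb{E}\, g(\sigma, X_\sigma)$, where $\mathcal{T}$ is the set of all stopping times with respect to the filtration generated by $X$. -/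
open MeasureTheory Filter Set

lemma my_doob_dynkin {Ω β : Type*} {mβ : MeasurableSpace β} (T : Ω → β) (ψ : Ω → ℝ)
    (h : Measurable[mβ.comap T] ψ) :
    ∃ φ : β → ℝ, Measurable φ ∧ ∀ ω, ψ ω = φ (T ω) := by
  classical
  have hA : ∀ q : ℚ, ∃ B : Set β, MeasurableSet B ∧ T ⁻¹' B = {ω | ψ ω < (q : ℝ)} := by
    intro q
    have : MeasurableSet[mβ.comap T] {ω | ψ ω < (q : ℝ)} := h measurableSet_Iio
    exact this
  choose B hBmeas hBpre using hA
  set φ' : β → EReal := fun x => ⨅ q : ℚ, if x ∈ B q then ((q : ℝ) : EReal) else ⊤ with hφ'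
  have hφ'meas : Measurable φ' :=
    Measurable.iInf fun q => Measurable.ite (hBmeas q) measurable_const measurable_const
  refine ⟨fun x => (φ' x).toReal, hφ'meas.ereal_toReal, fun ω => ?_⟩
  have hmem : ∀ q : ℚ, (T ω ∈ B q) ↔ ψ ω < (q : ℝ) := by
    intro q
    constructor
    · intro hq
      have : ω ∈ T ⁻¹' B q := hq
      rw [hBpre] at this; exact this
    · intro hq
      have : ω ∈ T ⁻¹' B q := by rw [hBpre]; exact hq
      exact this
  have key : φ' (T ω) = ((ψ ω : ℝ) : EReal) := by
    apply le_antisymm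
    · by_contra hc
      push_neg at hc
      obtain ⟨q, hq1, hq2⟩ := EReal.exists_rat_btwn_of_lt hc
      have h1 : ψ ω < (q : ℝ) := by exact_mod_cast hq1
      have h2 : ((q : ℝ) : EReal) < φ' (T ω) := hq2
      have : φ' (T ω) ≤ ((q : ℝ) : EReal) := by
        refine iInf_le_of_le q ?_
        rw [if_pos ((hmem q).2 h1)]
      exact absurd h2 (not_lt.2 this)
    · refine le_iInf fun q => ?_
      by_cases hq : T ω ∈ B q
      · rw [if_pos hq]
        exact_mod_cast le_of_lt ((hmem q).1 hq)
      · rw [if_neg hq]; exact le_top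
  show ψ ω = (φ' (T ω)).toReal
  rw [key, EReal.toReal_coe]
lemma my_markov_ext {Ω : Type*} {m0 : MeasurableSpace Ω} (μ : Measure Ω) [IsProbabilityMeasure μ]
    (d : ℕ) (X : ℕ → Ω → (Fin d → ℝ)) (hX : ∀ m, StronglyMeasurable (X m))
    (hMarkov : ∀ (k : ℕ) (h : (ℕ → (Fin d → ℝ)) → ℝ), Measurable h →
      (∃ C, ∀ y, |h y| ≤ C) →
      μ[(fun ω => h (fun m => X (k + 1 + m) ω)) | (MeasureTheory.Filtration.natural X hX) k]
        =ᵐ[μ] μ[(fun ω => h (fun m => X (k + 1 + m) ω)) | MeasurableSpace.comap (X k) inferInstance])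
    (k : ℕ) (v : (Fin d → ℝ) → ℝ) (hv : Measurable v)
    (hint : Integrable (fun ω => v (X (k+1) ω)) μ) :
    μ[(fun ω => v (X (k + 1) ω)) | (MeasureTheory.Filtration.natural X hX) k]
      =ᵐ[μ] μ[(fun ω => v (X (k + 1) ω)) | MeasurableSpace.comap (X k) inferInstance] := by
  set Z : Ω → ℝ := fun ω => v (X (k+1) ω) with hZ
  set vtr : ℕ → (Fin d → ℝ) → ℝ := fun n x => max (-(n:ℝ)) (min (n:ℝ) (v x)) with hvtr
  have hvtrm : ∀ n, Measurable (vtr n) := fun n =>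
    measurable_const.max (measurable_const.min hv)
  have hvtrb : ∀ n x, |vtr n x| ≤ (n:ℝ) := by
    intro n x
    rw [abs_le]
    exact ⟨le_max_left _ _, max_le (neg_le_self (by positivity)) (min_le_left _ _)⟩
  set Ztr : ℕ → Ω → ℝ := fun n ω => vtr n (X (k+1) ω) with hZtr
  have hZtrmeas : ∀ n, Measurable (Ztr n) := fun n => (hvtrm n).comp (hX (k+1)).measurable
  have hZmeas : Measurable Z := hv.comp (hX (k+1)).measurable
  have hZtrint : ∀ n, Integrable (Ztr n) μ := by
    intro n
    refine Integrable.mono' (integrable_const ((n:ℝ))) (hZtrmeas n).aestronglyMeasurable ?_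
    exact ae_of_all _ fun ω => by simpa using hvtrb n (X (k+1) ω)
  have hbdd : ∀ n : ℕ, μ[Ztr n | (MeasureTheory.Filtration.natural X hX) k]
      =ᵐ[μ] μ[Ztr n | MeasurableSpace.comap (X k) inferInstance] := by
    intro n
    have := hMarkov k (fun y => vtr n (y 0)) ((hvtrm n).comp (measurable_pi_apply 0))
      ⟨(n:ℝ), fun y => hvtrb n (y 0)⟩
    simpa using this
  have hptw : ∀ ω, Tendsto (fun n => |Ztr n ω - Z ω|) atTop (nhds 0) := by
    intro ω
    have hev : ∀ᶠ n in atTop, |Ztr n ω - Z ω| = 0 := by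
      filter_upwards [eventually_ge_atTop ⌈|v (X (k+1) ω)|⌉₊] with n hn
      have hle : |v (X (k+1) ω)| ≤ (n:ℝ) := le_trans (Nat.le_ceil _) (by exact_mod_cast hn)
      have h1 : v (X (k+1) ω) ≤ (n:ℝ) := (abs_le.mp hle).2
      have h2 : -(n:ℝ) ≤ v (X (k+1) ω) := (abs_le.mp hle).1
      have : Ztr n ω = Z ω := by
        simp only [hZtr, hvtr, hZ]
        rw [min_eq_right h1, max_eq_right h2]
      rw [this, sub_self, abs_zero]
    exact Tendsto.congr' (EventuallyEq.symm hev) tendsto_const_nhds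
  have habs : ∀ n ω, |Ztr n ω| ≤ |Z ω| := by
    intro n ω
    rw [abs_le]
    constructor
    · exact le_trans (le_min (le_trans (neg_nonpos_of_nonneg (abs_nonneg _))
        (by positivity)) (neg_abs_le _)) (le_max_right _ _)
    · exact max_le (le_trans (neg_nonpos_of_nonneg (by positivity)) (abs_nonneg _))
        ((min_le_right _ _).trans (le_abs_self _))
  have hL1 : Tendsto (fun n => ∫ ω, |Ztr n ω - Z ω| ∂μ) atTop (nhds 0) := by
    have := MeasureTheory.tendsto_integral_of_dominated_convergence
      (F := fun n ω => |Ztr n ω - Z ω|) (f := fun _ => (0:ℝ)) (μ := μ)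
      (bound := fun ω => 2 * |Z ω|)
      (fun n => ((hZtrmeas n).sub hZmeas).abs.aestronglyMeasurable)
      (hint.abs.const_mul 2)
      (fun n => ae_of_all _ fun ω => by
        have h2 := habs n ω
        calc ‖|Ztr n ω - Z ω|‖ = |Ztr n ω - Z ω| := by simp [abs_abs]
        _ ≤ |Ztr n ω| + |Z ω| := abs_sub _ _
        _ ≤ |Z ω| + |Z ω| := by linarith
        _ = 2 * |Z ω| := by ring)
      (ae_of_all _ hptw)
    simpa using this
  set D : Ω → ℝ := fun ω => |(μ[Z|(MeasureTheory.Filtration.natural X hX) k]) ω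
    - (μ[Z|MeasurableSpace.comap (X k) inferInstance]) ω| with hD
  have hDint : Integrable D μ := (integrable_condExp.sub integrable_condExp).abs
  have hDle : ∀ n : ℕ, ∫ ω, D ω ∂μ ≤ 2 * ∫ ω, |Ztr n ω - Z ω| ∂μ := by
    intro n
    set A := μ[Z|(MeasureTheory.Filtration.natural X hX) k]
    set B := μ[Ztr n|(MeasureTheory.Filtration.natural X hX) k]
    set Cc := μ[Ztr n|MeasurableSpace.comap (X k) inferInstance]
    set E := μ[Z|MeasurableSpace.comap (X k) inferInstance]
    have hae : D ≤ᵐ[μ] fun ω => |A ω - B ω| + |Cc ω - E ω| := by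
      filter_upwards [hbdd n] with ω hω
      have hBC : B ω = Cc ω := hω
      have heq : A ω - E ω = (A ω - B ω) + (Cc ω - E ω) := by rw [hBC]; ring
      calc D ω = |A ω - E ω| := rfl
      _ = |(A ω - B ω) + (Cc ω - E ω)| := by rw [heq]
      _ ≤ _ := abs_add_le _ _
    have h1 : ∫ ω, |A ω - B ω| ∂μ ≤ ∫ ω, |Ztr n ω - Z ω| ∂μ := by
      have hsub : (fun ω => A ω - B ω)
          =ᵐ[μ] μ[Z - Ztr n|(MeasureTheory.Filtration.natural X hX) k] :=
        (condExp_sub hint (hZtrint n) _).symm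
      calc ∫ ω, |A ω - B ω| ∂μ
          = ∫ ω, |(μ[Z - Ztr n|(MeasureTheory.Filtration.natural X hX) k]) ω| ∂μ := by
            refine integral_congr_ae ?_
            filter_upwards [hsub] with ω hω
            rw [hω]
      _ ≤ ∫ ω, |(Z - Ztr n) ω| ∂μ := integral_abs_condExp_le _
      _ = ∫ ω, |Ztr n ω - Z ω| ∂μ := by
            refine integral_congr_ae (ae_of_all _ fun ω => ?_)
            simp [abs_sub_comm]
    have h2 : ∫ ω, |Cc ω - E ω| ∂μ ≤ ∫ ω, |Ztr n ω - Z ω| ∂μ := by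
      have hsub : (fun ω => Cc ω - E ω)
          =ᵐ[μ] μ[Ztr n - Z|MeasurableSpace.comap (X k) inferInstance] :=
        (condExp_sub (hZtrint n) hint _).symm
      calc ∫ ω, |Cc ω - E ω| ∂μ
          = ∫ ω, |(μ[Ztr n - Z|MeasurableSpace.comap (X k) inferInstance]) ω| ∂μ := by
            refine integral_congr_ae ?_
            filter_upwards [hsub] with ω hω
            rw [hω]
      _ ≤ ∫ ω, |(Ztr n - Z) ω| ∂μ := integral_abs_condExp_le _
      _ = ∫ ω, |Ztr n ω - Z ω| ∂μ := by
            refine integral_congr_ae (ae_of_all _ fun ω => ?_)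
            simp
    calc ∫ ω, D ω ∂μ ≤ ∫ ω, (|A ω - B ω| + |Cc ω - E ω|) ∂μ := by
          refine integral_mono_ae hDint ?_ hae
          exact ((integrable_condExp.sub integrable_condExp).abs.add
            (integrable_condExp.sub integrable_condExp).abs)
    _ = ∫ ω, |A ω - B ω| ∂μ + ∫ ω, |Cc ω - E ω| ∂μ :=
          integral_add (integrable_condExp.sub integrable_condExp).abs
            (integrable_condExp.sub integrable_condExp).abs
    _ ≤ ∫ ω, |Ztr n ω - Z ω| ∂μ + ∫ ω, |Ztr n ω - Z ω| ∂μ := add_le_add h1 h2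
    _ = 2 * ∫ ω, |Ztr n ω - Z ω| ∂μ := by ring
  have hD0 : ∫ ω, D ω ∂μ = 0 := by
    have hle0 : ∫ ω, D ω ∂μ ≤ 0 := by
      have h2 : Tendsto (fun n => 2 * ∫ ω, |Ztr n ω - Z ω| ∂μ) atTop (nhds 0) := by
        simpa using hL1.const_mul 2
      exact le_of_tendsto_of_tendsto tendsto_const_nhds h2 (Eventually.of_forall hDle)
    exact le_antisymm hle0 (integral_nonneg fun ω => abs_nonneg _)
  have hae0 : D =ᵐ[μ] 0 :=
    (integral_eq_zero_iff_of_nonneg (fun ω => abs_nonneg _) hDint).mp hD0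
  filter_upwards [hae0] with ω hω
  have h0 : |(μ[Z|(MeasureTheory.Filtration.natural X hX) k]) ω
    - (μ[Z|MeasurableSpace.comap (X k) inferInstance]) ω| = 0 := hω
  have := abs_eq_zero.mp h0
  linarith [sub_eq_zero.mp this]
theorem stmt3
    {Ω : Type*} {m0 : MeasurableSpace Ω} (μ : Measure Ω) [IsProbabilityMeasure μ]
    (d N : ℕ)
    (X : ℕ → Ω → (Fin d → ℝ)) (hX : ∀ m, StronglyMeasurable (X m))
    (hMarkov : ∀ (k : ℕ) (h : (ℕ → (Fin d → ℝ)) → ℝ), Measurable h →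
      (∃ C, ∀ y, |h y| ≤ C) →
      μ[(fun ω => h (fun m => X (k + 1 + m) ω)) | (MeasureTheory.Filtration.natural X hX) k]
        =ᵐ[μ] μ[(fun ω => h (fun m => X (k + 1 + m) ω)) | MeasurableSpace.comap (X k) inferInstance])
    (g : ℕ → (Fin d → ℝ) → ℝ) (hg : ∀ m, Measurable (g m))
    (hgint : ∀ m, m ≤ N → Integrable (fun ω => g m (X m ω)) μ) :
    ∃ f : ℕ → (Fin d → ℝ) → ℕ, (∀ m, Measurable (f m)) ∧ (∀ m x, f m x ≤ 1) ∧
      (∀ x, f N x = 1) ∧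
      ∫ ω, g ((fun ω => ∑ m ∈ Finset.Icc 0 N,
            m * f m (X m ω) * ∏ j ∈ Finset.Ico 0 m, (1 - f j (X j ω))) ω)
          (X ((fun ω => ∑ m ∈ Finset.Icc 0 N,
            m * f m (X m ω) * ∏ j ∈ Finset.Ico 0 m, (1 - f j (X j ω))) ω) ω) ∂μ
        = sSup ((fun τ : Ω → ℕ => ∫ ω, g (τ ω) (X (τ ω) ω) ∂μ) ''
            {τ | IsStoppingTime (MeasureTheory.Filtration.natural X hX) (fun ω => ((τ ω : ℕ) : WithTop ℕ)) ∧
              ∀ ω, τ ω ∈ Finset.Icc 0 N}) := by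
  classical
  set F := MeasureTheory.Filtration.natural X hX with hF
  have hFle : ∀ k : ℕ, (F k : MeasurableSpace Ω) ≤ m0 := fun k => F.le k
  -- preimages are measurable in the natural filtration
  have hpre : ∀ j k : ℕ, j ≤ k → ∀ B : Set (Fin d → ℝ), MeasurableSet B →
      MeasurableSet[F k] ((X j) ⁻¹' B) := by
    intro j k hjk B hB
    have h1 : MeasurableSet[MeasurableSpace.comap (X j) inferInstance] ((X j) ⁻¹' B) :=
      ⟨B, hB, rfl⟩
    have h2 : (MeasurableSpace.comap (X j) inferInstance : MeasurableSpace Ω) ≤ F k := by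
      have heq : (F k : MeasurableSpace Ω) =
          ⨆ i, ⨆ _ : i ≤ k, MeasurableSpace.comap (X i) inferInstance := rfl
      rw [heq]
      exact le_iSup₂ (f := fun i (_ : i ≤ k) =>
        MeasurableSpace.comap (X i) (inferInstance : MeasurableSpace (Fin d → ℝ))) j hjk
    exact h2 _ h1
  -- value process, backward recursion
  set W : ℕ → Ω → ℝ := fun j => Nat.rec (fun ω => g N (X N ω))
    (fun i Wi ω => max (g (N - (i+1)) (X (N - (i+1)) ω))
      ((μ[Wi | MeasurableSpace.comap (X (N - (i+1))) inferInstance]) ω)) j with hWdef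
  have hW0 : W 0 = fun ω => g N (X N ω) := rfl
  have hWsucc : ∀ i, W (i+1) = fun ω => max (g (N - (i+1)) (X (N - (i+1)) ω))
      ((μ[W i | MeasurableSpace.comap (X (N - (i+1))) inferInstance]) ω) := fun i => rfl
  have hWmeas : ∀ j, j ≤ N →
      Measurable[MeasurableSpace.comap (X (N - j)) inferInstance] (W j) := by
    intro j
    induction j with
    | zero =>
      intro _
      exact (hg N).comp (comap_measurable (X N))
    | succ i _ =>
      intro _
      rw [hWsucc i]
      exact Measurable.max ((hg _).comp (comap_measurable _))
        stronglyMeasurable_condExp.measurable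
  have hWint : ∀ j, Integrable (W j) μ := by
    intro j
    induction j with
    | zero => exact hgint N le_rfl
    | succ i _ =>
      rw [hWsucc i]
      exact (hgint _ (Nat.sub_le _ _)).sup integrable_condExp
  have hWge : ∀ j, ∀ ω, g (N - j) (X (N - j) ω) ≤ W j ω := by
    intro j ω
    cases j with
    | zero => simp only [Nat.sub_zero]; exact le_of_eq rfl
    | succ i => exact le_max_left _ _
  -- key conditional expectation identity
  have hkey : ∀ (k : ℕ) (Z : Ω → ℝ),
      Measurable[MeasurableSpace.comap (X (k+1)) inferInstance] Z → Integrable Z μ →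
      ∀ A : Set Ω, MeasurableSet[F k] A →
      ∫ ω in A, Z ω ∂μ =
        ∫ ω in A, (μ[Z | MeasurableSpace.comap (X k) inferInstance]) ω ∂μ := by
    intro k Z hZm hZint A hA
    obtain ⟨v, hvmeas, hveq⟩ := my_doob_dynkin (X (k+1)) Z hZm
    have hZfun : Z = fun ω => v (X (k+1) ω) := funext hveq
    have hintv : Integrable (fun ω => v (X (k+1) ω)) μ := hZfun ▸ hZint
    have hmark := my_markov_ext μ d X hX hMarkov k v hvmeas hintv
    rw [← hZfun] at hmark
    calc ∫ ω in A, Z ω ∂μ = ∫ ω in A, (μ[Z | F k]) ω ∂μ :=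
          (setIntegral_condExp (hFle k) hZint hA).symm
    _ = _ := integral_congr_ae (ae_restrict_of_ae hmark)
  -- stopping rule sets
  have hB : ∀ k : ℕ, ∃ Bk : Set (Fin d → ℝ), MeasurableSet Bk ∧
      (k < N → (X k) ⁻¹' Bk = {ω | W (N - k) ω ≤ g k (X k ω)}) ∧ (N ≤ k → Bk = univ) := by
    intro k
    by_cases hk : k < N
    · have h1 : Measurable[MeasurableSpace.comap (X k) inferInstance] (W (N - k)) := by
        have := hWmeas (N - k) (Nat.sub_le _ _)
        rwa [Nat.sub_sub_self hk.le] at this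
      have h2 : Measurable[MeasurableSpace.comap (X k) inferInstance]
          (fun ω => g k (X k ω)) := (hg k).comp (comap_measurable _)
      have hmeasset : MeasurableSet[MeasurableSpace.comap (X k) inferInstance]
          {ω | W (N - k) ω ≤ g k (X k ω)} := measurableSet_le h1 h2
      obtain ⟨Bk, hBk, hBkeq⟩ := hmeasset
      exact ⟨Bk, hBk, fun _ => hBkeq, fun hNk => absurd hk (not_lt.mpr hNk)⟩
    · exact ⟨univ, MeasurableSet.univ, fun h => absurd h hk, fun _ => rfl⟩
  choose B hBmeas hBS hBuniv using hB
  set f : ℕ → (Fin d → ℝ) → ℕ := fun k x => if x ∈ B k then 1 else 0 with hfdef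
  have hfmeas : ∀ m, Measurable (f m) := fun m =>
    Measurable.ite (hBmeas m) measurable_const measurable_const
  have hf1 : ∀ m x, f m x ≤ 1 := by
    intro m x; by_cases h : x ∈ B m <;> simp [hfdef, h]
  have hf01 : ∀ m x, f m x = 0 ∨ f m x = 1 := by
    intro m x; by_cases h : x ∈ B m <;> simp [hfdef, h]
  have hfN : ∀ m, N ≤ m → ∀ x, f m x = 1 := by
    intro m hm x; simp [hfdef, hBuniv m hm]
  have hstop : ∀ k, k ≤ N → ∀ ω, (f k (X k ω) = 1 ↔ W (N - k) ω ≤ g k (X k ω)) := by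
    intro k hk ω
    rcases lt_or_eq_of_le hk with hlt | heq
    · constructor
      · intro h1
        have hmem : X k ω ∈ B k := by
          by_contra hn; simp [hfdef, hn] at h1
        have hmem2 : ω ∈ (X k) ⁻¹' B k := hmem
        rw [hBS k hlt] at hmem2
        exact hmem2
      · intro h2
        have hmem : ω ∈ (X k) ⁻¹' B k := by rw [hBS k hlt]; exact h2
        have hmem' : X k ω ∈ B k := hmem
        simp only [hfdef]
        rw [if_pos hmem']
    · subst heq
      constructor
      · intro _
        simp only [Nat.sub_self]
        exact le_of_eq rfl
      · intro _
        exact hfN k le_rfl _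
  -- hitting times
  have hex : ∀ (k : ℕ) (ω : Ω), ∃ n, k ≤ n ∧ f n (X n ω) = 1 := fun k ω =>
    ⟨max k N, le_max_left _ _, hfN _ (le_max_right _ _) _⟩
  set T : ℕ → Ω → ℕ := fun k ω => Nat.find (hex k ω) with hTdef
  have hTge : ∀ k ω, k ≤ T k ω := fun k ω => (Nat.find_spec (hex k ω)).1
  have hTone : ∀ k ω, f (T k ω) (X (T k ω) ω) = 1 := fun k ω => (Nat.find_spec (hex k ω)).2
  have hTle' : ∀ k ω n, k ≤ n → f n (X n ω) = 1 → T k ω ≤ n := fun k ω n h1 h2 =>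
    Nat.find_le ⟨h1, h2⟩
  have hTle : ∀ k ω, k ≤ N → T k ω ≤ N := fun k ω hk => hTle' k ω N hk (hfN N le_rfl _)
  have hTmin : ∀ k ω m, k ≤ m → m < T k ω → f m (X m ω) ≠ 1 := by
    intro k ω m h1 h2 hf
    exact Nat.find_min (hex k ω) h2 ⟨h1, hf⟩
  have hTeq : ∀ k ω, f k (X k ω) = 1 → T k ω = k := fun k ω h =>
    le_antisymm (hTle' k ω k le_rfl h) (hTge k ω)
  have hTsucc : ∀ k ω, f k (X k ω) ≠ 1 → T k ω = T (k+1) ω := by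
    intro k ω hfk
    have h1 : T k ω ≤ T (k+1) ω :=
      hTle' k ω _ (le_trans (Nat.le_succ k) (hTge (k+1) ω)) (hTone (k+1) ω)
    have h2 : k + 1 ≤ T k ω := by
      rcases Nat.lt_or_ge (T k ω) (k+1) with h | h
      · exfalso
        have heqk : T k ω = k := le_antisymm (Nat.lt_succ_iff.mp h) (hTge k ω)
        have := hTone k ω
        rw [heqk] at this
        exact hfk this
      · exact h
    exact le_antisymm h1 (hTle' (k+1) ω _ h2 (hTone k ω))
  -- T k is a stopping time
  have hTst : ∀ k, IsStoppingTime F (fun ω => ((T k ω : ℕ) : WithTop ℕ)) := by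
    intro k n
    have e : {ω | ((T k ω : ℕ) : WithTop ℕ) ≤ (n : WithTop ℕ)} = {ω | T k ω ≤ n} := by
      ext ω; exact WithTop.coe_le_coe
    show MeasurableSet[F n] {ω | ((T k ω : ℕ) : WithTop ℕ) ≤ (n : WithTop ℕ)}
    rw [e]
    have hset : {ω | T k ω ≤ n} = ⋃ m, ⋃ _ : m ∈ Finset.Icc k n, {ω | f m (X m ω) = 1} := by
      ext ω
      simp only [mem_setOf_eq, mem_iUnion]
      constructor
      · intro h
        exact ⟨T k ω, Finset.mem_Icc.mpr ⟨hTge k ω, h⟩, hTone k ω⟩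
      · rintro ⟨m, hm, hfm⟩
        obtain ⟨hm1, hm2⟩ := Finset.mem_Icc.mp hm
        exact le_trans (hTle' k ω m hm1 hfm) hm2
    rw [hset]
    refine MeasurableSet.iUnion fun m => MeasurableSet.iUnion fun hm => ?_
    have hseteq : {ω | f m (X m ω) = 1} = (X m) ⁻¹' ((f m) ⁻¹' {1}) := rfl
    rw [hseteq]
    exact hpre m n (Finset.mem_Icc.mp hm).2 _ (hfmeas m (measurableSet_singleton 1))
  -- stopping times are measurable
  have hstmeas : ∀ σ : Ω → ℕ, IsStoppingTime F (fun ω => ((σ ω : ℕ) : WithTop ℕ)) → Measurable σ := by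
    intro σ hσ
    apply measurable_to_countable'
    intro n
    have h1 : ∀ m : ℕ, MeasurableSet {ω | σ ω ≤ m} := fun m => by
      have e : {ω | ((σ ω : ℕ) : WithTop ℕ) ≤ (m : WithTop ℕ)} = {ω | σ ω ≤ m} := by
        ext ω; exact WithTop.coe_le_coe
      rw [← e]; exact hFle m _ (hσ m)
    match n with
    | 0 =>
      have hseteq : σ ⁻¹' {0} = {ω | σ ω ≤ 0} := by ext ω; simp [Nat.le_zero]
      rw [hseteq]; exact h1 0
    | (n+1) =>
      have hseteq : σ ⁻¹' {n+1} = {ω | σ ω ≤ n+1} \ {ω | σ ω ≤ n} := by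
        ext ω
        simp only [mem_preimage, mem_singleton_iff, mem_diff, mem_setOf_eq, not_le]
        omega
      rw [hseteq]; exact (h1 _).diff (h1 _)
  -- stopped values are integrable
  have hstopint : ∀ σ : Ω → ℕ, Measurable σ → (∀ ω, σ ω ≤ N) →
      Integrable (fun ω => g (σ ω) (X (σ ω) ω)) μ := by
    intro σ hσm hσle
    have hrep : (fun ω => g (σ ω) (X (σ ω) ω)) =
        fun ω => ∑ m ∈ Finset.Icc 0 N,
          Set.indicator {ω' | σ ω' = m} (fun ω' => g m (X m ω')) ω := by
      funext ω
      rw [Finset.sum_eq_single_of_mem (σ ω) (Finset.mem_Icc.mpr ⟨Nat.zero_le _, hσle ω⟩)]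
      · rw [Set.indicator_of_mem (show ω ∈ {ω' | σ ω' = σ ω} from rfl)]
      · intro m _ hne
        exact Set.indicator_of_notMem (s := {ω' | σ ω' = m})
          (fun h => hne (Eq.symm h)) _
    rw [hrep]
    apply integrable_finset_sum
    intro m hm
    exact (hgint m (Finset.mem_Icc.mp hm).2).indicator (hσm (measurableSet_singleton m))
  -- main backward induction
  have main : ∀ j, j ≤ N → ∀ A : Set Ω, MeasurableSet[F (N - j)] A →
      ((∀ σ : Ω → ℕ, IsStoppingTime F (fun ω => ((σ ω : ℕ) : WithTop ℕ)) → (∀ ω, N - j ≤ σ ω) → (∀ ω, σ ω ≤ N) →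
        ∫ ω in A, g (σ ω) (X (σ ω) ω) ∂μ ≤ ∫ ω in A, W j ω ∂μ) ∧
      ∫ ω in A, g (T (N - j) ω) (X (T (N - j) ω) ω) ∂μ = ∫ ω in A, W j ω ∂μ) := by
    intro j
    induction j with
    | zero =>
      intro _ A _
      simp only [Nat.sub_zero]
      constructor
      · intro σ hσ hge hle
        have heq : (fun ω => g (σ ω) (X (σ ω) ω)) = W 0 := by
          funext ω
          have hσN : σ ω = N := le_antisymm (hle ω) (hge ω)
          rw [hσN]; rfl
        rw [heq]
      · have heq : (fun ω => g (T N ω) (X (T N ω) ω)) = W 0 := by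
          funext ω
          have hTN : T N ω = N := le_antisymm (hTle N ω le_rfl) (hTge N ω)
          rw [hTN]; rfl
        rw [heq]
    | succ i ih =>
      intro hiN A hA
      have hiN' : i ≤ N := Nat.le_of_succ_le hiN
      set k := N - (i+1) with hk
      have hk1 : k + 1 = N - i := by omega
      have hkN : k < N := by omega
      have hkN' : k ≤ N := Nat.le_of_lt hkN
      have hNk : N - k = i + 1 := by omega
      rw [← hk1] at ih
      have ihh := ih hiN'
      have hWj1 : W (i+1) = fun ω => max (g k (X k ω))
          ((μ[W i | MeasurableSpace.comap (X k) inferInstance]) ω) := by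
        rw [hWsucc i, ← hk]
      have hWimeas : Measurable[MeasurableSpace.comap (X (k+1)) inferInstance] (W i) := by
        have := hWmeas i hiN'
        rwa [← hk1] at this
      have hWWj : ∀ Bs : Set Ω, MeasurableSet[F k] Bs → ∫ ω in Bs, W i ω ∂μ =
          ∫ ω in Bs, (μ[W i | MeasurableSpace.comap (X k) inferInstance]) ω ∂μ :=
        fun Bs hBs => hkey k (W i) hWimeas (hWint i) Bs hBs
      have hcond_le : ∀ ω, (μ[W i | MeasurableSpace.comap (X k) inferInstance]) ω
          ≤ W (i+1) ω := by
        intro ω; rw [hWj1]; exact le_max_right _ _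
      have hgk_le : ∀ ω, g k (X k ω) ≤ W (i+1) ω := by
        intro ω; rw [hWj1]; exact le_max_left _ _
      have hstep : ∀ Bs : Set Ω, MeasurableSet[F k] Bs →
          ∫ ω in Bs, W i ω ∂μ ≤ ∫ ω in Bs, W (i+1) ω ∂μ := by
        intro Bs hBs
        rw [hWWj Bs hBs]
        exact setIntegral_mono integrable_condExp.integrableOn
          (hWint (i+1)).integrableOn hcond_le
      constructor
      · -- part 1 : any stopping time
        intro σ hσ hge hle
        have hσk : MeasurableSet[F k] {ω | σ ω = k} := by
          have e : {ω | ((σ ω : ℕ) : WithTop ℕ) = (k : WithTop ℕ)} = {ω | σ ω = k} := by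
            ext ω; exact WithTop.coe_eq_coe
          rw [← e]; exact hσ.measurableSet_eq k
        have hA1 : MeasurableSet[F k] (A ∩ {ω | σ ω = k}) := hA.inter hσk
        have hA2 : MeasurableSet[F k] (A ∩ {ω | σ ω = k}ᶜ) :=
          hA.inter hσk.compl
        have hsplit : A = (A ∩ {ω | σ ω = k}) ∪ (A ∩ {ω | σ ω = k}ᶜ) := by
          rw [Set.inter_union_compl]
        have hdisj : Disjoint (A ∩ {ω | σ ω = k}) (A ∩ {ω | σ ω = k}ᶜ) :=
          disjoint_compl_right.mono inf_le_right inf_le_right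
        have hgσint := hstopint σ (hstmeas σ hσ) hle
        have hsplitInt : ∀ h : Ω → ℝ, Integrable h μ → ∫ ω in A, h ω ∂μ =
            ∫ ω in A ∩ {ω | σ ω = k}, h ω ∂μ + ∫ ω in A ∩ {ω | σ ω = k}ᶜ, h ω ∂μ := by
          intro h hh
          conv_lhs => rw [hsplit]
          exact setIntegral_union hdisj (hFle k _ hA2) hh.integrableOn hh.integrableOn
        rw [hsplitInt _ hgσint, hsplitInt _ (hWint (i+1))]
        have hb1 : ∫ ω in A ∩ {ω | σ ω = k}, g (σ ω) (X (σ ω) ω) ∂μ ≤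
            ∫ ω in A ∩ {ω | σ ω = k}, W (i+1) ω ∂μ := by
          refine setIntegral_mono_on hgσint.integrableOn (hWint (i+1)).integrableOn
            (hFle k _ hA1) ?_
          intro ω hω
          have hσk : σ ω = k := hω.2
          rw [hσk]
          exact hgk_le ω
        have hb2 : ∫ ω in A ∩ {ω | σ ω = k}ᶜ, g (σ ω) (X (σ ω) ω) ∂μ ≤
            ∫ ω in A ∩ {ω | σ ω = k}ᶜ, W (i+1) ω ∂μ := by
          have hσ'st : IsStoppingTime F (fun ω => ((max (σ ω) (k+1) : ℕ) : WithTop ℕ)) := by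
            intro n
            have e : {ω | ((max (σ ω) (k+1) : ℕ) : WithTop ℕ) ≤ (n : WithTop ℕ)} = {ω | max ((σ ω : ℕ) : WithTop ℕ) ((k+1 : ℕ) : WithTop ℕ) ≤ (n : WithTop ℕ)} := by
              ext ω; exact ⟨fun h => max_le (WithTop.coe_le_coe.2 (le_trans (le_max_left _ _) (WithTop.coe_le_coe.1 h))) (WithTop.coe_le_coe.2 (le_trans (le_max_right _ _) (WithTop.coe_le_coe.1 h))), fun h => WithTop.coe_le_coe.2 (max_le (WithTop.coe_le_coe.1 (le_trans (le_max_left _ _) h)) (WithTop.coe_le_coe.1 (le_trans (le_max_right _ _) h)))⟩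
            show MeasurableSet[F n] {ω | ((max (σ ω) (k+1) : ℕ) : WithTop ℕ) ≤ (n : WithTop ℕ)}
            rw [e]; exact hσ.max_const (k+1) n
          have hσ'ge : ∀ ω, k+1 ≤ max (σ ω) (k+1) := fun ω => le_max_right _ _
          have hσ'le : ∀ ω, max (σ ω) (k+1) ≤ N := fun ω => max_le (hle ω) (by omega)
          have hA2' : MeasurableSet[F (k+1)] (A ∩ {ω | σ ω = k}ᶜ) :=
            F.mono (Nat.le_succ k) _ hA2
          have heqA2 : ∀ ω ∈ A ∩ {ω | σ ω = k}ᶜ,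
              g (σ ω) (X (σ ω) ω) = g (max (σ ω) (k+1)) (X (max (σ ω) (k+1)) ω) := by
            intro ω hω
            show g (σ ω) (X (σ ω) ω) = g (max (σ ω) (k+1)) (X (max (σ ω) (k+1)) ω)
            have h1 : σ ω ≠ k := hω.2
            have h2 : k + 1 ≤ σ ω := by have := hge ω; omega
            rw [max_eq_left h2]
          calc ∫ ω in A ∩ {ω | σ ω = k}ᶜ, g (σ ω) (X (σ ω) ω) ∂μ
              = ∫ ω in A ∩ {ω | σ ω = k}ᶜ, g (max (σ ω) (k+1)) (X (max (σ ω) (k+1)) ω) ∂μ :=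
                setIntegral_congr_fun (hFle k _ hA2) heqA2
          _ ≤ ∫ ω in A ∩ {ω | σ ω = k}ᶜ, W i ω ∂μ :=
                (ihh _ hA2').1 _ hσ'st hσ'ge hσ'le
          _ ≤ ∫ ω in A ∩ {ω | σ ω = k}ᶜ, W (i+1) ω ∂μ := hstep _ hA2
        exact add_le_add hb1 hb2
      · -- part 2 : the candidate optimal stopping time
        have hSk : MeasurableSet[F k] {ω | f k (X k ω) = 1} := by
          have hseteq : {ω | f k (X k ω) = 1} = (X k) ⁻¹' ((f k) ⁻¹' {1}) := rfl
          rw [hseteq]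
          exact hpre k k le_rfl _ (hfmeas k (measurableSet_singleton 1))
        have hA1 : MeasurableSet[F k] (A ∩ {ω | f k (X k ω) = 1}) := hA.inter hSk
        have hA2 : MeasurableSet[F k] (A ∩ {ω | f k (X k ω) = 1}ᶜ) := hA.inter hSk.compl
        have hsplit : A = (A ∩ {ω | f k (X k ω) = 1}) ∪ (A ∩ {ω | f k (X k ω) = 1}ᶜ) := by
          rw [Set.inter_union_compl]
        have hdisj : Disjoint (A ∩ {ω | f k (X k ω) = 1}) (A ∩ {ω | f k (X k ω) = 1}ᶜ) :=
          disjoint_compl_right.mono inf_le_right inf_le_right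
        have hTkint : Integrable (fun ω => g (T k ω) (X (T k ω) ω)) μ :=
          hstopint (T k) (hstmeas _ (hTst k)) (fun ω => hTle k ω hkN')
        have hsplitInt : ∀ h : Ω → ℝ, Integrable h μ → ∫ ω in A, h ω ∂μ =
            ∫ ω in A ∩ {ω | f k (X k ω) = 1}, h ω ∂μ +
            ∫ ω in A ∩ {ω | f k (X k ω) = 1}ᶜ, h ω ∂μ := by
          intro h hh
          conv_lhs => rw [hsplit]
          exact setIntegral_union hdisj (hFle k _ hA2) hh.integrableOn hh.integrableOn
        rw [hsplitInt _ hTkint, hsplitInt _ (hWint (i+1))]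
        have hb1 : ∫ ω in A ∩ {ω | f k (X k ω) = 1}, g (T k ω) (X (T k ω) ω) ∂μ =
            ∫ ω in A ∩ {ω | f k (X k ω) = 1}, W (i+1) ω ∂μ := by
          refine setIntegral_congr_fun (hFle k _ hA1) ?_
          intro ω hω
          show g (T k ω) (X (T k ω) ω) = W (i+1) ω
          have hfk : f k (X k ω) = 1 := hω.2
          have hTk : T k ω = k := hTeq k ω hfk
          have hWle : W (i+1) ω ≤ g k (X k ω) := by
            have := (hstop k hkN' ω).mp hfk
            rwa [hNk] at this
          have hWeq : g k (X k ω) = W (i+1) ω := le_antisymm (hgk_le ω) hWle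
          rw [hTk, hWeq]
        have hb2 : ∫ ω in A ∩ {ω | f k (X k ω) = 1}ᶜ, g (T k ω) (X (T k ω) ω) ∂μ =
            ∫ ω in A ∩ {ω | f k (X k ω) = 1}ᶜ, W (i+1) ω ∂μ := by
          have hA2' : MeasurableSet[F (k+1)] (A ∩ {ω | f k (X k ω) = 1}ᶜ) :=
            F.mono (Nat.le_succ k) _ hA2
          have heqT : ∀ ω ∈ A ∩ {ω | f k (X k ω) = 1}ᶜ,
              g (T k ω) (X (T k ω) ω) = g (T (k+1) ω) (X (T (k+1) ω) ω) := by
            intro ω hω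
            show g (T k ω) (X (T k ω) ω) = g (T (k+1) ω) (X (T (k+1) ω) ω)
            rw [hTsucc k ω hω.2]
          have hmaxb : ∀ ω ∈ A ∩ {ω | f k (X k ω) = 1}ᶜ,
              (μ[W i | MeasurableSpace.comap (X k) inferInstance]) ω = W (i+1) ω := by
            intro ω hω
            show (μ[W i | MeasurableSpace.comap (X k) inferInstance]) ω = W (i+1) ω
            have hne : f k (X k ω) ≠ 1 := hω.2
            have hnle : ¬ (W (i+1) ω ≤ g k (X k ω)) := by
              intro hle'
              apply hne
              refine (hstop k hkN' ω).mpr ?_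
              rwa [hNk]
            have hval : W (i+1) ω = max (g k (X k ω))
                ((μ[W i | MeasurableSpace.comap (X k) inferInstance]) ω) := by rw [hWj1]
            have hba : g k (X k ω) ≤
                (μ[W i | MeasurableSpace.comap (X k) inferInstance]) ω := by
              by_contra hh
              push_neg at hh
              exact hnle (le_of_eq (by rw [hval, max_eq_left hh.le]))
            rw [hval, max_eq_right hba]
          calc ∫ ω in A ∩ {ω | f k (X k ω) = 1}ᶜ, g (T k ω) (X (T k ω) ω) ∂μ
              = ∫ ω in A ∩ {ω | f k (X k ω) = 1}ᶜ, g (T (k+1) ω) (X (T (k+1) ω) ω) ∂μ :=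
                setIntegral_congr_fun (hFle k _ hA2) heqT
          _ = ∫ ω in A ∩ {ω | f k (X k ω) = 1}ᶜ, W i ω ∂μ := (ihh _ hA2').2
          _ = ∫ ω in A ∩ {ω | f k (X k ω) = 1}ᶜ,
                (μ[W i | MeasurableSpace.comap (X k) inferInstance]) ω ∂μ := hWWj _ hA2
          _ = ∫ ω in A ∩ {ω | f k (X k ω) = 1}ᶜ, W (i+1) ω ∂μ :=
                setIntegral_congr_fun (hFle k _ hA2) hmaxb
        rw [hb1, hb2]
  -- conclusion
  refine ⟨f, hfmeas, hf1, fun x => hfN N le_rfl x, ?_⟩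
  have hτT : (fun ω => ∑ m ∈ Finset.Icc 0 N,
      m * f m (X m ω) * ∏ j ∈ Finset.Ico 0 m, (1 - f j (X j ω))) = T 0 := by
    funext ω
    have htN : T 0 ω ≤ N := hTle 0 ω (Nat.zero_le N)
    rw [Finset.sum_eq_single_of_mem (T 0 ω) (Finset.mem_Icc.mpr ⟨Nat.zero_le _, htN⟩)]
    · have hprod : ∏ j ∈ Finset.Ico 0 (T 0 ω), (1 - f j (X j ω)) = 1 := by
        apply Finset.prod_eq_one
        intro j hj
        have hjlt : j < T 0 ω := (Finset.mem_Ico.mp hj).2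
        have hj0 : f j (X j ω) = 0 :=
          (hf01 j _).resolve_right (hTmin 0 ω j (Nat.zero_le j) hjlt)
        rw [hj0]
        rfl
      rw [hTone 0 ω, hprod, mul_one, mul_one]
    · intro m _ hne
      rcases Nat.lt_or_ge m (T 0 ω) with hlt | hge
      · have hm0 : f m (X m ω) = 0 :=
          (hf01 m _).resolve_right (hTmin 0 ω m (Nat.zero_le m) hlt)
        rw [hm0, mul_zero, zero_mul]
      · have hgt : T 0 ω < m := lt_of_le_of_ne hge (fun h => hne h.symm)
        have hzero : (1 - f (T 0 ω) (X (T 0 ω) ω)) = 0 := by rw [hTone 0 ω]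
        have hprod : ∏ j ∈ Finset.Ico 0 m, (1 - f j (X j ω)) = 0 :=
          Finset.prod_eq_zero (Finset.mem_Ico.mpr ⟨Nat.zero_le _, hgt⟩) hzero
        rw [hprod, mul_zero]
  rw [hτT]
  have hmain := main N le_rfl
  rw [Nat.sub_self] at hmain
  obtain ⟨hub, heq⟩ := hmain univ MeasurableSet.univ
  rw [setIntegral_univ, setIntegral_univ] at heq
  have hgreat : IsGreatest ((fun τ : Ω → ℕ => ∫ ω, g (τ ω) (X (τ ω) ω) ∂μ) ''
      {τ | IsStoppingTime F (fun ω => ((τ ω : ℕ) : WithTop ℕ)) ∧ ∀ ω, τ ω ∈ Finset.Icc 0 N})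
      (∫ ω, g (T 0 ω) (X (T 0 ω) ω) ∂μ) := by
    constructor
    · exact ⟨T 0, ⟨hTst 0, fun ω =>
        Finset.mem_Icc.mpr ⟨Nat.zero_le _, hTle 0 ω (Nat.zero_le N)⟩⟩, rfl⟩
    · rintro b ⟨σ, ⟨hσst, hσmem⟩, rfl⟩
      have hσle : ∀ ω, σ ω ≤ N := fun ω => (Finset.mem_Icc.mp (hσmem ω)).2
      have h1 := hub σ hσst (fun ω => Nat.zero_le _) hσle
      rw [setIntegral_univ, setIntegral_univ] at h1
      calc ∫ ω, g (σ ω) (X (σ ω) ω) ∂μ ≤ ∫ ω, W N ω ∂μ := h1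
      _ = ∫ ω, g (T 0 ω) (X (T 0 ω) ω) ∂μ := heq.symm
  exact hgreat.csSup_eq.symm
end

section
/- Let $n \in \{0,\dots,N-1\}$, let $X=(X_n)_{n=0}^N$ be an $\mathbb{R}^d$-valued process with $\mathbb{E}|g(m,X_m)| < \infty$ for all $m$, and let $\tau_{n+1}$ be a stopping time with $n+1 \le \tau_{n+1} \le N$. Then for every $\varepsilon > 0$ there exists a function $f^\theta : \mathbb{R}^d \to \{0,1\}$ of the form $f^\theta = \mathbf{1}_{[0,\infty)} \circ a_2 \circ \varphi \circ a_1$, with $a_1 : \mathbb{R}^d \to \mathbb{R}^{q_1}$ and $a_2 : \mathbb{R}^{q_1} \to \mathbb{R}$ affine and $\varphi$ the componentwise ReLU, such that $\mathbb{E}[g(n,X_n) f^\theta(X_n) + g(\tau_{n+1}, X_{\tau_{n+1}})(1 - f^\theta(X_n))] \ge \sup_{f \in \mathcal{D}} \mathbb{E}[g(n,X_n) f(X_n) + g(\tau_{n+1}, X_{\tau_{n+1}})(1 - f(X_n))] - \varepsilon$, where $\mathcal{D}$ is the set of all measurable functions $f : \mathbb{R}^d \to \{0,1\}$. -/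
open MeasureTheory Filter Set


def IsNet (d : ℕ) (F : (Fin d → ℝ) → ℝ) : Prop :=
  ∃ (q1 : ℕ) (A1 : Matrix (Fin q1) (Fin d) ℝ) (b1 : Fin q1 → ℝ) (A2 : Fin q1 → ℝ) (b2 : ℝ),
    ∀ x, F x = (∑ i, A2 i * max ((Matrix.mulVec A1 x) i + b1 i) 0) + b2

lemma isNet_const (d : ℕ) (c : ℝ) : IsNet d (fun _ => c) :=
  ⟨0, 0, 0, 0, c, fun x => by simp⟩

lemma isNet_relu (d : ℕ) (a : Fin d → ℝ) (b c : ℝ) :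
    IsNet d (fun x => c * max ((∑ i, a i * x i) + b) 0) := by
  refine ⟨1, Matrix.of (fun _ j => a j), fun _ => b, fun _ => c, 0, fun x => ?_⟩
  simp [Matrix.mulVec, dotProduct]

lemma IsNet.add {d : ℕ} {F G : (Fin d → ℝ) → ℝ} (hF : IsNet d F) (hG : IsNet d G) :
    IsNet d (fun x => F x + G x) := by
  obtain ⟨q, A1, b1, A2, b2, hq⟩ := hF
  obtain ⟨q', A1', b1', A2', b2', hq'⟩ := hG
  refine ⟨q + q', Matrix.of (fun i j => Fin.addCases (fun i₁ => A1 i₁ j) (fun i₂ => A1' i₂ j) i),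
    Fin.addCases b1 b1', Fin.addCases A2 A2', b2 + b2', fun x => ?_⟩
  simp only [hq, hq', Fin.sum_univ_add]
  have h1 : ∀ i : Fin q,
      (Fin.addCases (n := q') A2 A2' (Fin.castAdd q' i)) *
        max ((Matrix.mulVec (Matrix.of (fun i j => Fin.addCases (fun i₁ => A1 i₁ j) (fun i₂ => A1' i₂ j) i)) x) (Fin.castAdd q' i) + Fin.addCases b1 b1' (Fin.castAdd q' i)) 0
      = A2 i * max ((Matrix.mulVec A1 x) i + b1 i) 0 := by
    intro i
    simp [Matrix.mulVec, dotProduct]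
  have h2 : ∀ i : Fin q',
      (Fin.addCases (m := q) A2 A2' (Fin.natAdd q i)) *
        max ((Matrix.mulVec (Matrix.of (fun i j => Fin.addCases (fun i₁ => A1 i₁ j) (fun i₂ => A1' i₂ j) i)) x) (Fin.natAdd q i) + Fin.addCases b1 b1' (Fin.natAdd q i)) 0
      = A2' i * max ((Matrix.mulVec A1' x) i + b1' i) 0 := by
    intro i
    simp [Matrix.mulVec, dotProduct]
  rw [Finset.sum_congr rfl (fun i _ => h1 i), Finset.sum_congr rfl (fun i _ => h2 i)]
  ring

lemma IsNet.finsetSum {d : ℕ} {ι : Type*} (s : Finset ι) (f : ι → (Fin d → ℝ) → ℝ)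
    (h : ∀ i ∈ s, IsNet d (f i)) : IsNet d (fun x => ∑ i ∈ s, f i x) := by
  classical
  induction s using Finset.induction_on with
  | empty => simpa using isNet_const d 0
  | @insert a s' hni ih =>
    simp only [Finset.sum_insert hni]
    exact (h a (Finset.mem_insert_self a s')).add (ih fun i hi => h i (Finset.mem_insert_of_mem hi))

lemma IsNet.continuous {d : ℕ} {F : (Fin d → ℝ) → ℝ} (hF : IsNet d F) : Continuous F := by
  obtain ⟨q, A1, b1, A2, b2, hq⟩ := hF
  have : F = fun x => (∑ i, A2 i * max ((Matrix.mulVec A1 x) i + b1 i) 0) + b2 := funext hq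
  rw [this]
  refine Continuous.add (continuous_finset_sum _ fun i _ => ?_) continuous_const
  refine Continuous.mul continuous_const (Continuous.max (Continuous.add ?_ continuous_const) continuous_const)
  simp only [Matrix.mulVec, dotProduct]
  exact continuous_finset_sum _ fun j _ => (continuous_const.mul (continuous_apply j))

lemma max_sub_max (a Δ : ℝ) (hΔ : 0 ≤ Δ) : max a 0 - max (a - Δ) 0 = min (max a 0) Δ := by
  rcases le_total a 0 with h | h
  · rw [max_eq_right h, max_eq_right (by linarith), min_eq_left hΔ]
    ring
  · rw [max_eq_left h]
    rcases le_total a Δ with h2 | h2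
    · rw [max_eq_right (by linarith), min_eq_left h2]; ring
    · rw [max_eq_left (by linarith), min_eq_right h2]; ring

lemma pl_approx (h : ℝ → ℝ) (hc : Continuous h) (R ε : ℝ) (hε : 0 < ε) :
    ∃ (m : ℕ) (c t : Fin m → ℝ) (c0 : ℝ),
      ∀ s ∈ Set.Icc (-R) R, |(c0 + ∑ i, c i * max (s - t i) 0) - h s| ≤ ε := by
  rcases le_or_gt R 0 with hR | hR
  · refine ⟨0, fun _ => 0, fun _ => 0, h R, fun s hs => ?_⟩
    have hs1 := hs.1; have hs2 := hs.2
    have : s = R := le_antisymm hs2 (le_trans (by linarith) hs1)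
    simp only [this, Finset.univ_eq_empty, Finset.sum_empty, add_zero, sub_self, abs_zero]
    exact hε.le
  -- main case 0 < R
  obtain ⟨δ, hδ, hδ'⟩ := Metric.uniformContinuousOn_iff.mp
    (isCompact_Icc.uniformContinuousOn_of_continuous (hc.continuousOn))
    (ε/2) (by linarith)
  obtain ⟨n, hn⟩ := exists_nat_gt (2*R/δ)
  have hnR : (0:ℝ) < n := lt_of_lt_of_le (by positivity) hn.le
  have hn0 : 0 < n := by exact_mod_cast hnR
  set Δ : ℝ := 2*R/n with hΔdef
  have hΔ : 0 < Δ := by positivity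
  have hΔδ : Δ < δ := by
    rw [hΔdef, div_lt_iff₀ hnR]
    calc 2*R = (2*R/δ) * δ := by field_simp
    _ < n * δ := mul_lt_mul_of_pos_right hn hδ
    _ = δ * n := mul_comm _ _
  set p : ℕ → ℝ := fun j => -R + (j:ℝ) * Δ with hpdef
  have hpmono : ∀ {j j' : ℕ}, j ≤ j' → p j ≤ p j' := by
    intro j j' hj
    simp only [hpdef]
    have : (j:ℝ) ≤ (j':ℝ) := by exact_mod_cast hj
    nlinarith
  have hpn : p n = R := by
    simp only [hpdef, hΔdef]
    field_simp
    ring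
  have hpsucc : ∀ j : ℕ, p (j+1) = p j + Δ := by
    intro j; simp only [hpdef]; push_cast; ring
  have hpIcc : ∀ j : ℕ, j ≤ n → p j ∈ Set.Icc (-R) R := by
    intro j hj
    constructor
    · simp only [hpdef]; nlinarith [Nat.cast_nonneg (α := ℝ) j]
    · rw [← hpn]; exact hpmono hj
  set sl : ℕ → ℝ := fun j => (h (p (j+1)) - h (p j)) / Δ with hsldef
  refine ⟨n + n, Fin.addCases (fun j : Fin n => sl j) (fun j : Fin n => - sl j),
    Fin.addCases (fun j : Fin n => p j) (fun j : Fin n => p (j+1)), h (p 0), fun s hs => ?_⟩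
  have hsum : (∑ i : Fin (n+n), Fin.addCases (fun j : Fin n => sl j) (fun j : Fin n => - sl j) i
      * max (s - Fin.addCases (fun j : Fin n => p j) (fun j : Fin n => p (j+1)) i) 0)
      = ∑ j ∈ Finset.range n, sl j * min (max (s - p j) 0) Δ := by
    rw [Fin.sum_univ_add]
    simp only [Fin.addCases_left, Fin.addCases_right]
    rw [Fin.sum_univ_eq_sum_range (fun j => sl j * max (s - p j) 0) n,
      Fin.sum_univ_eq_sum_range (fun j => (- sl j) * max (s - p (j+1)) 0) n,
      ← Finset.sum_add_distrib]
    refine Finset.sum_congr rfl (fun j _ => ?_)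
    have hj : s - p (j+1) = (s - p j) - Δ := by rw [hpsucc]; ring
    rw [hj, ← max_sub_max (s - p j) Δ hΔ.le]
    ring
  rw [hsum]
  -- choose the interval index k
  set k : ℕ := min (n-1) (Nat.floor ((s+R)/Δ)) with hkdef
  have hk_le : k ≤ n - 1 := min_le_left _ _
  have hk_lt : k < n := lt_of_le_of_lt hk_le (Nat.pred_lt hn0.ne')
  have hk1 : p k ≤ s := by
    have h1 : (k:ℝ) ≤ (s+R)/Δ := by
      calc (k:ℝ) ≤ (Nat.floor ((s+R)/Δ) : ℝ) := by exact_mod_cast min_le_right _ _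
      _ ≤ (s+R)/Δ := Nat.floor_le (div_nonneg (by linarith [hs.1]) hΔ.le)
    have h2 : (k:ℝ) * Δ ≤ s + R := (le_div_iff₀ hΔ).mp h1
    simp only [hpdef]; linarith
  have hk2 : s ≤ p (k+1) := by
    rcases le_or_gt (Nat.floor ((s+R)/Δ)) (n-1) with hc1 | hc1
    · have hkf : k = Nat.floor ((s+R)/Δ) := min_eq_right hc1
      have h1 : (s+R)/Δ < (Nat.floor ((s+R)/Δ) : ℝ) + 1 := Nat.lt_floor_add_one _
      have h2 : s + R < ((k:ℝ)+1) * Δ := by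
        rw [hkf]; exact (div_lt_iff₀ hΔ).mp h1
      simp only [hpdef]; push_cast; linarith
    · have hkf : k = n - 1 := min_eq_left hc1.le
      have hkn : k + 1 = n := by omega
      rw [hkn, hpn]; exact hs.2
  have hpkIcc : p k ∈ Set.Icc (-R) R := hpIcc k hk_lt.le
  have hpk1Icc : p (k+1) ∈ Set.Icc (-R) R := hpIcc (k+1) hk_lt
  have hspk : s - p k ≤ Δ := by
    have := hpsucc k; linarith [hk2]
  -- compute the sum
  have hsplit : ∑ j ∈ Finset.range n, sl j * min (max (s - p j) 0) Δ
      = (h (p k) - h (p 0)) + sl k * (s - p k) := by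
    rw [← Finset.sum_range_add_sum_Ico _ (Nat.succ_le_of_lt hk_lt)]
    have hzero : ∑ j ∈ Finset.Ico (k+1) n, sl j * min (max (s - p j) 0) Δ = 0 := by
      refine Finset.sum_eq_zero (fun j hj => ?_)
      have hj1 : k + 1 ≤ j := (Finset.mem_Ico.mp hj).1
      have hsj : s - p j ≤ 0 := by linarith [hpmono hj1, hk2]
      rw [max_eq_right hsj, min_eq_left hΔ.le, mul_zero]
    rw [hzero, add_zero, Finset.sum_range_succ]
    have hfirst : ∑ j ∈ Finset.range k, sl j * min (max (s - p j) 0) Δ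
        = ∑ j ∈ Finset.range k, (h (p (j+1)) - h (p j)) := by
      refine Finset.sum_congr rfl (fun j hj => ?_)
      have hjk : j + 1 ≤ k := Nat.succ_le_of_lt (Finset.mem_range.mp hj)
      have h1 : Δ ≤ s - p j := by
        have := hpmono hjk
        have := hpsucc j
        linarith [hk1]
      rw [max_eq_left (by linarith), min_eq_right h1, hsldef]
      field_simp
    rw [hfirst, Finset.sum_range_sub (fun j => h (p j)) k]
    have : min (max (s - p k) 0) Δ = s - p k := by
      rw [max_eq_left (by linarith [hk1]), min_eq_left hspk]
    rw [this]
  rw [hsplit]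
  have e1 : |h (p k) - h s| ≤ ε/2 := by
    have := hδ' (p k) hpkIcc s hs (by
      rw [Real.dist_eq, abs_of_nonpos (by linarith [hk1])]
      linarith)
    rw [Real.dist_eq] at this
    linarith
  have e2 : |sl k * (s - p k)| ≤ ε/2 := by
    have hd : |h (p (k+1)) - h (p k)| ≤ ε/2 := by
      have := hδ' (p (k+1)) hpk1Icc (p k) hpkIcc (by
        rw [Real.dist_eq, hpsucc k, abs_of_nonneg (by linarith)]
        linarith)
      rw [Real.dist_eq] at this
      linarith
    rw [abs_mul, hsldef, abs_div, abs_of_pos hΔ]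
    calc |h (p (k+1)) - h (p k)| / Δ * |s - p k| ≤ |h (p (k+1)) - h (p k)| / Δ * Δ := by
          refine mul_le_mul_of_nonneg_left ?_ (by positivity)
          rw [abs_of_nonneg (by linarith [hk1])]; exact hspk
    _ = |h (p (k+1)) - h (p k)| := by field_simp
    _ ≤ ε/2 := hd
  calc |h (p 0) + (h (p k) - h (p 0) + sl k * (s - p k)) - h s|
      = |(h (p k) - h s) + sl k * (s - p k)| := by ring_nf
  _ ≤ |h (p k) - h s| + |sl k * (s - p k)| := abs_add_le _ _
  _ ≤ ε := by linarith

lemma isNet_ridge_approx {d : ℕ} (a : Fin d → ℝ) (b : ℝ) (h : ℝ → ℝ) (hc : Continuous h)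
    (K : Set (Fin d → ℝ)) (R : ℝ) (hK : ∀ x ∈ K, |(∑ i, a i * x i) + b| ≤ R)
    (ε : ℝ) (hε : 0 < ε) :
    ∃ F, IsNet d F ∧ ∀ x ∈ K, |F x - h ((∑ i, a i * x i) + b)| ≤ ε := by
  obtain ⟨m, c, t, c0, hpl⟩ := pl_approx h hc R ε hε
  refine ⟨fun x => c0 + ∑ i, c i * max ((∑ j, a j * x j) + (b - t i)) 0, ?_, ?_⟩
  · exact (isNet_const d c0).add
      (IsNet.finsetSum Finset.univ (fun i => fun x => c i * max ((∑ j, a j * x j) + (b - t i)) 0)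
        (fun i _ => isNet_relu d a (b - t i) (c i)))
  · intro x hx
    have hmem : (∑ i, a i * x i) + b ∈ Set.Icc (-R) R := by
      have := abs_le.mp (hK x hx); exact ⟨this.1, this.2⟩
    have := hpl ((∑ i, a i * x i) + b) hmem
    have harg : ∀ i, (∑ j, a j * x j) + (b - t i) = ((∑ j, a j * x j) + b) - t i :=
      fun i => by ring
    simp only [harg]
    exact this

lemma cos_span_dense {d : ℕ} (K : Set (Fin d → ℝ)) (hKc : IsCompact K)
    (c : (Fin d → ℝ) → ℝ) (hc : Continuous c) (ε : ℝ) (hε : 0 < ε) :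
    ∃ (s : Finset ((Fin d → ℝ) × ℝ)) (coef : ((Fin d → ℝ) × ℝ) → ℝ),
      ∀ x ∈ K, |(∑ p ∈ s, coef p * Real.cos ((∑ i, p.1 i * x i) + p.2)) - c x| ≤ ε := by
  haveI : CompactSpace K := isCompact_iff_compactSpace.mp hKc
  set G : (Fin d → ℝ) × ℝ → C(K, ℝ) :=
    fun p => ⟨fun z => Real.cos ((∑ i, p.1 i * (z : Fin d → ℝ) i) + p.2), by
      refine Real.continuous_cos.comp (Continuous.add ?_ continuous_const)
      exact continuous_finset_sum _ fun i _ =>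
        continuous_const.mul ((continuous_apply i).comp continuous_subtype_val)⟩ with hGdef
  have hGapp : ∀ p z, G p z = Real.cos ((∑ i, p.1 i * (z : Fin d → ℝ) i) + p.2) := fun p z => rfl
  have hkey : ∀ p q : (Fin d → ℝ) × ℝ, G p * G q
      = (1/2 : ℝ) • G (p.1 + q.1, p.2 + q.2) + (1/2 : ℝ) • G (p.1 - q.1, p.2 - q.2) := by
    intro p q
    ext z
    simp only [ContinuousMap.mul_apply, ContinuousMap.add_apply, ContinuousMap.smul_apply,
      hGapp, smul_eq_mul]
    have h1 : (∑ i, (p.1 + q.1) i * (z : Fin d → ℝ) i) + (p.2 + q.2)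
        = ((∑ i, p.1 i * (z : Fin d → ℝ) i) + p.2) + ((∑ i, q.1 i * (z : Fin d → ℝ) i) + q.2) := by
      simp only [Pi.add_apply, add_mul]
      rw [Finset.sum_add_distrib]; ring
    have h2 : (∑ i, (p.1 - q.1) i * (z : Fin d → ℝ) i) + (p.2 - q.2)
        = ((∑ i, p.1 i * (z : Fin d → ℝ) i) + p.2) - ((∑ i, q.1 i * (z : Fin d → ℝ) i) + q.2) := by
      simp only [Pi.sub_apply, sub_mul]
      rw [Finset.sum_sub_distrib]; ring
    rw [h1, h2]
    set u := (∑ i, p.1 i * (z : Fin d → ℝ) i) + p.2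
    set v := (∑ i, q.1 i * (z : Fin d → ℝ) i) + q.2
    have := Real.cos_add u v
    have := Real.cos_sub u v
    linarith
  set S : Submodule ℝ C(K, ℝ) := Submodule.span ℝ (Set.range G) with hSdef
  have hone : (1 : C(K, ℝ)) ∈ S := by
    have : (1 : C(K, ℝ)) = G (0, 0) := by
      ext z; simp [hGapp]
    rw [this]
    exact Submodule.subset_span ⟨(0, 0), rfl⟩
  have hmul : ∀ f g : C(K, ℝ), f ∈ S → g ∈ S → f * g ∈ S := by
    intro f g hf hg
    have h1 : f * g ∈ S * S := Submodule.mul_mem_mul hf hg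
    rw [hSdef, Submodule.span_mul_span] at h1
    refine Submodule.span_le.mpr ?_ h1
    rintro w ⟨w1, hw1, w2, hw2, rfl⟩
    obtain ⟨p, rfl⟩ := hw1
    obtain ⟨q, rfl⟩ := hw2
    simp only [SetLike.mem_coe]
    show G p * G q ∈ S
    rw [hkey p q]
    exact Submodule.add_mem _
      (Submodule.smul_mem _ _ (Submodule.subset_span ⟨_, rfl⟩))
      (Submodule.smul_mem _ _ (Submodule.subset_span ⟨_, rfl⟩))
  set A : Subalgebra ℝ C(K, ℝ) := S.toSubalgebra hone hmul with hAdef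
  have hsep : A.SeparatesPoints := by
    rintro x y hxy
    have hval : (x : Fin d → ℝ) ≠ (y : Fin d → ℝ) := fun hh => hxy (Subtype.ext hh)
    obtain ⟨i0, hi0⟩ := Function.ne_iff.mp hval
    set D : ℝ := ∑ i, ((x : Fin d → ℝ) i - (y : Fin d → ℝ) i)^2 with hDdef
    have hD : 0 < D := Finset.sum_pos' (fun i _ => sq_nonneg _)
      ⟨i0, Finset.mem_univ _, pow_two_pos_of_ne_zero (sub_ne_zero.mpr hi0)⟩
    set a : Fin d → ℝ := fun i => (Real.pi / D) * ((x : Fin d → ℝ) i - (y : Fin d → ℝ) i) with hadef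
    set u : ℝ := ∑ i, a i * (x : Fin d → ℝ) i with hudef
    set v : ℝ := ∑ i, a i * (y : Fin d → ℝ) i with hvdef
    have huv : u = v + Real.pi := by
      have h1 : u - v = Real.pi := by
        rw [hudef, hvdef, ← Finset.sum_sub_distrib]
        have : ∀ i ∈ Finset.univ, a i * (x : Fin d → ℝ) i - a i * (y : Fin d → ℝ) i
            = (Real.pi / D) * ((x : Fin d → ℝ) i - (y : Fin d → ℝ) i)^2 := by
          intro i _; rw [hadef]; ring
        rw [Finset.sum_congr rfl this, ← Finset.mul_sum, ← hDdef]
        field_simp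
      linarith
    by_cases hcc : Real.cos u = Real.cos v
    · -- use the sine version
      have hcv : Real.cos v = 0 := by
        rw [huv, Real.cos_add_pi] at hcc
        linarith
      have hsv : Real.sin v ≠ 0 := by
        intro h0
        have := Real.sin_sq_add_cos_sq v
        rw [h0, hcv] at this
        norm_num at this
      refine ⟨(G (a, -(Real.pi/2)) : K → ℝ), ⟨G (a, -(Real.pi/2)),
        Submodule.subset_span ⟨_, rfl⟩, rfl⟩, ?_⟩
      simp only [hGapp]
      rw [← hudef, ← hvdef]
      have hsin : ∀ w : ℝ, Real.cos (w + -(Real.pi/2)) = Real.sin w := by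
        intro w
        rw [show w + -(Real.pi/2) = -(Real.pi/2 - w) by ring, Real.cos_neg,
          Real.cos_pi_div_two_sub]
      rw [hsin, hsin, huv, Real.sin_add_pi]
      intro hh
      exact hsv (by linarith)
    · refine ⟨(G (a, 0) : K → ℝ), ⟨G (a, 0), Submodule.subset_span ⟨_, rfl⟩, rfl⟩, ?_⟩
      simp only [hGapp]
      rw [← hudef, ← hvdef]
      simpa using hcc
  obtain ⟨g, hg⟩ := ContinuousMap.exists_mem_subalgebra_near_continuous_of_separatesPoints A hsep
    (fun z : K => c z) (hc.comp continuous_subtype_val) ε hε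
  have hgS : (g : C(K, ℝ)) ∈ S := Submodule.mem_toSubalgebra.mp g.2
  obtain ⟨l, hl⟩ := Finsupp.mem_span_range_iff_exists_finsupp.mp hgS
  refine ⟨l.support, fun p => l p, fun x hx => ?_⟩
  have heval : (g : C(K, ℝ)) ⟨x, hx⟩
      = ∑ p ∈ l.support, l p * Real.cos ((∑ i, p.1 i * x i) + p.2) := by
    rw [← hl]
    rw [Finsupp.sum]
    rw [ContinuousMap.sum_apply]
    refine Finset.sum_congr rfl (fun p _ => ?_)
    simp [hGapp]
  have := hg ⟨x, hx⟩
  rw [Real.norm_eq_abs] at this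
  rw [← heval]
  exact le_of_lt (by simpa using this)

lemma isNet_approx_on_compact {d : ℕ} (K : Set (Fin d → ℝ)) (hK : IsCompact K)
    (c : (Fin d → ℝ) → ℝ) (hc : Continuous c) (ε : ℝ) (hε : 0 < ε) :
    ∃ F, IsNet d F ∧ ∀ x ∈ K, |F x - c x| ≤ ε := by
  obtain ⟨s, coef, hs⟩ := cos_span_dense K hK c hc (ε/2) (by linarith)
  have hbnd : ∀ p : (Fin d → ℝ) × ℝ, ∃ R, ∀ x ∈ K, |(∑ i, p.1 i * x i) + p.2| ≤ R := by
    intro p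
    obtain ⟨C, hC⟩ := hK.exists_bound_of_continuousOn
      (f := fun x => (∑ i, p.1 i * x i) + p.2)
      (Continuous.continuousOn (by
        exact Continuous.add (continuous_finset_sum _ fun i _ =>
          continuous_const.mul (continuous_apply i)) continuous_const))
    exact ⟨C, fun x hx => by simpa [Real.norm_eq_abs] using hC x hx⟩
  set ε' : ℝ := ε / (2 * (s.card + 1)) with hε'def
  have hε' : 0 < ε' := by positivity
  have hFp : ∀ p : (Fin d → ℝ) × ℝ, ∃ F, IsNet d F ∧
      ∀ x ∈ K, |F x - coef p * Real.cos ((∑ i, p.1 i * x i) + p.2)| ≤ ε' := by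
    intro p
    obtain ⟨R, hR⟩ := hbnd p
    exact isNet_ridge_approx p.1 p.2 (fun t => coef p * Real.cos t)
      (continuous_const.mul Real.continuous_cos) K R hR ε' hε'
  choose Fp hFp1 hFp2 using hFp
  refine ⟨fun x => ∑ p ∈ s, Fp p x, IsNet.finsetSum s _ (fun p _ => hFp1 p), fun x hx => ?_⟩
  have h1 : |∑ p ∈ s, Fp p x - ∑ p ∈ s, coef p * Real.cos ((∑ i, p.1 i * x i) + p.2)|
      ≤ s.card * ε' := by
    rw [← Finset.sum_sub_distrib]
    refine le_trans (Finset.abs_sum_le_sum_abs _ _) ?_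
    calc ∑ p ∈ s, |Fp p x - coef p * Real.cos ((∑ i, p.1 i * x i) + p.2)|
        ≤ ∑ _p ∈ s, ε' := Finset.sum_le_sum (fun p _ => hFp2 p x hx)
      _ = s.card * ε' := by rw [Finset.sum_const, nsmul_eq_mul]
  have h2 : (s.card : ℝ) * ε' ≤ ε/2 := by
    rw [hε'def, mul_div_assoc']
    have hcard : (0:ℝ) ≤ s.card := Nat.cast_nonneg _
    rw [div_le_div_iff₀ (by positivity) (by norm_num)]
    nlinarith
  have h3 := hs x hx
  calc |(∑ p ∈ s, Fp p x) - c x|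
      ≤ |∑ p ∈ s, Fp p x - ∑ p ∈ s, coef p * Real.cos ((∑ i, p.1 i * x i) + p.2)|
        + |(∑ p ∈ s, coef p * Real.cos ((∑ i, p.1 i * x i) + p.2)) - c x| := by
        have := abs_sub_abs_le_abs_sub (∑ p ∈ s, Fp p x) (c x)
        exact abs_sub_le _ _ _
    _ ≤ ε/2 + ε/2 := add_le_add (le_trans h1 h2) h3
    _ = ε := by ring

lemma net_measure_approx {d : ℕ} (ν : Measure (Fin d → ℝ)) [IsFiniteMeasure ν]
    (A : Set (Fin d → ℝ)) (hA : MeasurableSet A) (δ : ℝ) (hδ : 0 < δ) :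
    ∃ F, IsNet d F ∧ ν {x | ¬ (0 ≤ F x ↔ x ∈ A)} ≤ ENNReal.ofReal δ := by
  have hind : Integrable (A.indicator fun _ => (1:ℝ)) ν := (integrable_const 1).indicator hA
  obtain ⟨cc, _hccsupp, hccL1, hcccont, hccint⟩ :=
    hind.exists_hasCompactSupport_integral_sub_le (ε := δ/8) (by linarith)
  -- find a big ball with small complementary mass
  have htail : ∃ M : ℕ, ν ((Metric.closedBall (0 : Fin d → ℝ) M)ᶜ) < ENNReal.ofReal (δ/4) := by
    have hiI : (⋂ m : ℕ, (Metric.closedBall (0 : Fin d → ℝ) m)ᶜ) = ∅ := by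
      rw [Set.eq_empty_iff_forall_notMem]
      intro x hx
      obtain ⟨m, hm⟩ := exists_nat_gt (‖x‖)
      exact (Set.mem_iInter.mp hx m) (by
        simp only [Metric.mem_closedBall, dist_zero_right]
        exact hm.le)
    have htd := MeasureTheory.tendsto_measure_iInter_atTop
      (μ := ν) (s := fun m : ℕ => (Metric.closedBall (0 : Fin d → ℝ) m)ᶜ)
      (fun m => (Metric.isClosed_closedBall.measurableSet.compl).nullMeasurableSet)
      (fun m m' hmm => Set.compl_subset_compl.mpr
        (Metric.closedBall_subset_closedBall (by exact_mod_cast hmm)))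
      ⟨0, measure_ne_top ν _⟩
    rw [hiI, measure_empty] at htd
    have := htd.eventually_lt_const (by simp [ENNReal.ofReal_pos]; linarith :
      (0:ENNReal) < ENNReal.ofReal (δ/4))
    exact this.exists
  obtain ⟨M, hM⟩ := htail
  set K : Set (Fin d → ℝ) := Metric.closedBall 0 M with hKdef
  have hKc : IsCompact K := isCompact_closedBall _ _
  obtain ⟨F, hFnet, hFapp⟩ := isNet_approx_on_compact K hKc (fun x => cc x - 1/2)
    (hcccont.sub continuous_const) (1/4) (by norm_num)
  refine ⟨F, hFnet, ?_⟩
  set E : Set (Fin d → ℝ) := {x | ¬ (0 ≤ F x ↔ x ∈ A)} with hEdef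
  set B : Set (Fin d → ℝ) := {x | (1:ℝ)/4 ≤ |cc x - A.indicator (fun _ => 1) x|} with hBdef
  have hsub : E ⊆ Kᶜ ∪ B := by
    intro x hx
    by_cases hxK : x ∈ K
    · right
      have hF := hFapp x hxK
      by_cases hxA : x ∈ A
      · have hFx : ¬ (0 ≤ F x) := fun h0 => hx (iff_of_true h0 hxA)
        push_neg at hFx
        have h1 : cc x - 1/2 ≤ F x + 1/4 := by
          have := abs_le.mp hF
          linarith [this.1]
        rw [hBdef, Set.mem_setOf_eq, Set.indicator_of_mem hxA]
        rw [abs_sub_comm, abs_of_nonneg (by linarith)]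
        linarith
      · have hFx : 0 ≤ F x := by
          by_contra h0
          exact hx (iff_of_false h0 hxA)
        have h1 : F x - 1/4 ≤ cc x - 1/2 := by
          have := abs_le.mp hF
          linarith [this.2]
        rw [hBdef, Set.mem_setOf_eq, Set.indicator_of_notMem hxA]
        rw [sub_zero, abs_of_nonneg (by linarith)]
        linarith
    · left; exact hxK
  have hmarkov : ν B ≤ ENNReal.ofReal (δ/2) := by
    have hint2 : Integrable (fun x => ‖A.indicator (fun _ => (1:ℝ)) x - cc x‖) ν :=
      (hind.sub hccint).norm
    have hlin : ENNReal.ofReal (∫ x, ‖A.indicator (fun _ => (1:ℝ)) x - cc x‖ ∂ν)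
        = ∫⁻ x, ENNReal.ofReal ‖A.indicator (fun _ => (1:ℝ)) x - cc x‖ ∂ν :=
      MeasureTheory.ofReal_integral_eq_lintegral_ofReal hint2
        (Filter.Eventually.of_forall (fun x => norm_nonneg _))
    have hmk := MeasureTheory.mul_meas_ge_le_lintegral₀
      (μ := ν) (f := fun x => ENNReal.ofReal ‖A.indicator (fun _ => (1:ℝ)) x - cc x‖)
      (ENNReal.measurable_ofReal.comp_aemeasurable hint2.aemeasurable)
      (ENNReal.ofReal (1/4))
    have hBsub : B ⊆ {x | ENNReal.ofReal (1/4)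
        ≤ ENNReal.ofReal ‖A.indicator (fun _ => (1:ℝ)) x - cc x‖} := by
      intro x hx
      rw [hBdef, Set.mem_setOf_eq] at hx
      rw [Set.mem_setOf_eq]
      refine ENNReal.ofReal_le_ofReal ?_
      rw [Real.norm_eq_abs, abs_sub_comm]
      exact hx
    have h1 : ENNReal.ofReal (1/4) * ν B ≤ ENNReal.ofReal (δ/8) := by
      refine le_trans (mul_le_mul_right (measure_mono hBsub) _) (le_trans hmk ?_)
      rw [← hlin]
      exact ENNReal.ofReal_le_ofReal hccL1
    have h2 : ENNReal.ofReal (δ/8) = ENNReal.ofReal (1/4) * ENNReal.ofReal (δ/2) := by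
      rw [← ENNReal.ofReal_mul (by norm_num)]
      congr 1
      ring
    rw [h2] at h1
    exact (ENNReal.mul_le_mul_iff_right (by
      simp only [ne_eq, ENNReal.ofReal_eq_zero, not_le]
      norm_num) (by simp)).mp h1
  calc ν E ≤ ν (Kᶜ ∪ B) := measure_mono hsub
    _ ≤ ν Kᶜ + ν B := measure_union_le _ _
    _ ≤ ENNReal.ofReal (δ/4) + ENNReal.ofReal (δ/2) := add_le_add hM.le hmarkov
    _ = ENNReal.ofReal (δ/4 + δ/2) := (ENNReal.ofReal_add (by linarith) (by linarith)).symm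
    _ ≤ ENNReal.ofReal δ := ENNReal.ofReal_le_ofReal (by linarith)

theorem stmt6
    {Ω : Type*} {m0 : MeasurableSpace Ω} (μ : Measure Ω) [IsProbabilityMeasure μ]
    (d N n : ℕ) (hn : n < N)
    (X : ℕ → Ω → (Fin d → ℝ)) (hX : ∀ m, StronglyMeasurable (X m))
    (g : ℕ → (Fin d → ℝ) → ℝ) (hg : ∀ m, Measurable (g m))
    (hgint : ∀ m, m ≤ N → Integrable (fun ω => g m (X m ω)) μ)
    (τ : Ω → ℕ) (hτ : IsStoppingTime (MeasureTheory.Filtration.natural X hX) (fun ω => (τ ω : WithTop ℕ)))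
    (hτr : ∀ ω, τ ω ∈ Finset.Icc (n + 1) N)
    (ε : ℝ) (hε : 0 < ε) :
    ∃ (q1 : ℕ) (A1 : Matrix (Fin q1) (Fin d) ℝ) (b1 : Fin q1 → ℝ)
      (A2 : Fin q1 → ℝ) (b2 : ℝ),
      ∫ ω, (g n (X n ω) *
            (if 0 ≤ (∑ i, A2 i * max ((Matrix.mulVec A1 (X n ω)) i + b1 i) 0) + b2
              then (1 : ℝ) else 0)
          + g (τ ω) (X (τ ω) ω) *
            (1 - (if 0 ≤ (∑ i, A2 i * max ((Matrix.mulVec A1 (X n ω)) i + b1 i) 0) + b2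
              then (1 : ℝ) else 0))) ∂μ
        ≥ sSup {r : ℝ | ∃ f : (Fin d → ℝ) → ℝ, Measurable f ∧
              (∀ x, f x = 0 ∨ f x = 1) ∧
              r = ∫ ω, (g n (X n ω) * f (X n ω)
                    + g (τ ω) (X (τ ω) ω) * (1 - f (X n ω))) ∂μ}
          - ε := by
  classical
  set Gt : Ω → ℝ := fun ω => g (τ ω) (X (τ ω) ω) with hGtdef
  have hGt_eq : ∀ ω, Gt ω = ∑ m ∈ Finset.Icc (n+1) N, if τ ω = m then g m (X m ω) else 0 := by
    intro ω
    rw [Finset.sum_ite_eq (Finset.Icc (n+1) N) (τ ω) (fun m => g m (X m ω)), if_pos (hτr ω)]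
  have hτm : ∀ m, MeasurableSet {ω | τ ω = m} :=
    fun m => (MeasureTheory.Filtration.natural X hX).le m _ (by simpa using hτ.measurableSet_eq m)
  have hXn : Measurable (X n) := (hX n).measurable
  have hGt_meas : Measurable Gt := by
    rw [funext hGt_eq]
    exact Finset.measurable_sum _ (fun m _ =>
      Measurable.ite (hτm m) ((hg m).comp (hX m).measurable) measurable_const)
  have hGt_int : Integrable Gt μ := by
    rw [funext hGt_eq]
    refine integrable_finset_sum _ (fun m hm => ?_)
    have heq : (fun ω => if τ ω = m then g m (X m ω) else 0)
        = Set.indicator {ω | τ ω = m} (fun ω => g m (X m ω)) := by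
      funext ω
      rw [Set.indicator_apply]
      rfl
    rw [heq]
    exact ((hgint m (Finset.mem_Icc.mp hm).2).indicator (hτm m))
  have hgn_int : Integrable (fun ω => g n (X n ω)) μ := hgint n hn.le
  have hint_f : ∀ f : (Fin d → ℝ) → ℝ, Measurable f → (∀ x, f x = 0 ∨ f x = 1) →
      Integrable (fun ω => g n (X n ω) * f (X n ω) + Gt ω * (1 - f (X n ω))) μ := by
    intro f hf hf01
    have hb1 : ∀ ω, ‖f (X n ω)‖ ≤ 1 := fun ω => by
      rcases hf01 (X n ω) with h | h <;> simp [h]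
    have hb2 : ∀ ω, ‖1 - f (X n ω)‖ ≤ 1 := fun ω => by
      rcases hf01 (X n ω) with h | h <;> simp [h]
    have h1 : Integrable (fun ω => f (X n ω) * g n (X n ω)) μ :=
      hgn_int.bdd_mul ((hf.comp hXn).aestronglyMeasurable) (Filter.Eventually.of_forall hb1)
    have h2 : Integrable (fun ω => (1 - f (X n ω)) * Gt ω) μ :=
      hGt_int.bdd_mul ((measurable_const.sub (hf.comp hXn)).aestronglyMeasurable) (Filter.Eventually.of_forall hb2)
    exact ((h1.add h2).congr (Filter.Eventually.of_forall (fun ω => by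
      simp only [Pi.add_apply]; ring)))
  set S : Set ℝ := {r : ℝ | ∃ f : (Fin d → ℝ) → ℝ, Measurable f ∧
      (∀ x, f x = 0 ∨ f x = 1) ∧
      r = ∫ ω, (g n (X n ω) * f (X n ω)
            + g (τ ω) (X (τ ω) ω) * (1 - f (X n ω))) ∂μ} with hSdef
  have hSne : S.Nonempty := ⟨_, (fun _ => (0:ℝ)), measurable_const, fun _ => Or.inl rfl, rfl⟩
  have hSbdd : BddAbove S := by
    refine ⟨∫ ω, (|g n (X n ω)| + |Gt ω|) ∂μ, fun r hr => ?_⟩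
    obtain ⟨f, hf, hf01, rfl⟩ := hr
    refine MeasureTheory.integral_mono (hint_f f hf hf01) (hgn_int.abs.add hGt_int.abs) ?_
    intro ω
    have h0 : 0 ≤ f (X n ω) ∧ f (X n ω) ≤ 1 := by
      rcases hf01 (X n ω) with h | h <;> simp [h]
    have e1 := le_abs_self (g n (X n ω))
    have e2 := le_abs_self (Gt ω)
    have e3 := abs_nonneg (g n (X n ω))
    have e4 := abs_nonneg (Gt ω)
    show g n (X n ω) * f (X n ω) + Gt ω * (1 - f (X n ω)) ≤ |g n (X n ω)| + |Gt ω|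
    nlinarith [h0.1, h0.2]
  obtain ⟨r, hrS, hr⟩ := exists_lt_of_lt_csSup hSne
    (sub_lt_self (sSup S) (half_pos hε))
  obtain ⟨f, hf, hf01, rfl⟩ := hrS
  -- the auxiliary finite measure on ℝ^d
  set H : Ω → ℝ := fun ω => g n (X n ω) - Gt ω with hHdef
  have hH_int : Integrable H μ := hgn_int.sub hGt_int
  set w : Ω → ENNReal := fun ω => ENNReal.ofReal |H ω| with hwdef
  have hw_meas : Measurable w :=
    ENNReal.measurable_ofReal.comp (((hg n).comp hXn).sub hGt_meas).abs
  set ν : Measure (Fin d → ℝ) := Measure.map (X n) (μ.withDensity w) with hνdef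
  have hfin : IsFiniteMeasure (μ.withDensity w) := by
    constructor
    rw [withDensity_apply _ MeasurableSet.univ, setLIntegral_univ, hwdef,
      ← MeasureTheory.ofReal_integral_eq_lintegral_ofReal hH_int.abs
        (Filter.Eventually.of_forall (fun ω => abs_nonneg _))]
    exact ENNReal.ofReal_lt_top
  haveI := hfin
  haveI : IsFiniteMeasure ν := by
    constructor
    rw [hνdef, Measure.map_apply hXn MeasurableSet.univ]
    exact lt_of_le_of_lt (measure_mono (Set.subset_univ _)) (measure_lt_top _ _)
  set A : Set (Fin d → ℝ) := {x | f x = 1} with hAdef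
  have hAm : MeasurableSet A := hf (measurableSet_singleton 1)
  obtain ⟨F, hFnet, hFν⟩ := net_measure_approx ν A hAm (ε/2) (half_pos hε)
  have hFcont : Continuous F := hFnet.continuous
  have hop : MeasurableSet {x | 0 ≤ F x} :=
    (isClosed_le continuous_const hFcont).measurableSet
  set E : Set (Fin d → ℝ) := {x | ¬ (0 ≤ F x ↔ x ∈ A)} with hEdef
  have hEm : MeasurableSet E := by
    have hEeq : E = ({x | 0 ≤ F x} \ A) ∪ (A \ {x | 0 ≤ F x}) := by
      ext x
      simp only [hEdef, Set.mem_setOf_eq, Set.mem_union, Set.mem_diff, Set.mem_setOf_eq]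
      tauto
    rw [hEeq]
    exact (hop.diff hAm).union (hAm.diff hop)
  set fθ : (Fin d → ℝ) → ℝ := fun x => if 0 ≤ F x then 1 else 0 with hfθdef
  have hfθ_meas : Measurable fθ := Measurable.ite hop measurable_const measurable_const
  have hfθ01 : ∀ x, fθ x = 0 ∨ fθ x = 1 := fun x => by
    by_cases h : 0 ≤ F x <;> simp [hfθdef, h]
  have hpt : ∀ x, |f x - fθ x| ≤ Set.indicator E (fun _ => (1:ℝ)) x := by
    intro x
    by_cases hxE : x ∈ E
    · rw [Set.indicator_of_mem hxE]
      rcases hf01 x with h | h <;> rcases hfθ01 x with h' | h' <;> rw [h, h'] <;> norm_num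
    · rw [Set.indicator_of_notMem hxE]
      have hxE' : (0 ≤ F x ↔ x ∈ A) := not_not.mp hxE
      by_cases hxA : x ∈ A
      · have h1 : fθ x = 1 := if_pos (hxE'.mpr hxA)
        have h2 : f x = 1 := hxA
        rw [h1, h2]; norm_num
      · have h1 : fθ x = 0 := if_neg (fun h0 => hxA (hxE'.mp h0))
        have h2 : f x = 0 := (hf01 x).resolve_right hxA
        rw [h1, h2]; norm_num
  -- integral comparison
  set Iϝ : ℝ := ∫ ω, (g n (X n ω) * f (X n ω) + Gt ω * (1 - f (X n ω))) ∂μ with hIfdef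
  set Iθ : ℝ := ∫ ω, (g n (X n ω) * fθ (X n ω) + Gt ω * (1 - fθ (X n ω))) ∂μ with hIθdef
  have hdiff : Iϝ - Iθ = ∫ ω, (f (X n ω) - fθ (X n ω)) * H ω ∂μ := by
    rw [hIfdef, hIθdef, ← MeasureTheory.integral_sub (hint_f f hf hf01) (hint_f fθ hfθ_meas hfθ01)]
    refine MeasureTheory.integral_congr_ae (Filter.Eventually.of_forall (fun ω => ?_))
    rw [hHdef]; ring
  have hD_int : Integrable (fun ω => (f (X n ω) - fθ (X n ω)) * H ω) μ := by
    refine hH_int.bdd_mul (((hf.comp hXn).sub (hfθ_meas.comp hXn)).aestronglyMeasurable) (c := 2) (Filter.Eventually.of_forall ?_)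
    intro ω
    rcases hf01 (X n ω) with h | h <;> rcases hfθ01 (X n ω) with h' | h' <;>
      simp [h, h'] <;> norm_num
  have hR_int : Integrable (fun ω => Set.indicator E (fun _ => (1:ℝ)) (X n ω) * |H ω|) μ := by
    refine hH_int.abs.bdd_mul
      (((measurable_one.indicator hEm).comp hXn).aestronglyMeasurable) (c := 1) (Filter.Eventually.of_forall (fun ω => ?_))
    by_cases hxE : X n ω ∈ E <;> simp [Set.indicator_apply, hxE]
  have habs : |Iϝ - Iθ| ≤ ∫ ω, Set.indicator E (fun _ => (1:ℝ)) (X n ω) * |H ω| ∂μ := by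
    rw [hdiff]
    have hnorm : |∫ ω, (f (X n ω) - fθ (X n ω)) * H ω ∂μ|
        ≤ ∫ ω, |(f (X n ω) - fθ (X n ω)) * H ω| ∂μ := by
      have hh := MeasureTheory.norm_integral_le_integral_norm (μ := μ)
        (f := fun ω => (f (X n ω) - fθ (X n ω)) * H ω)
      exact hh
    refine le_trans hnorm ?_
    refine MeasureTheory.integral_mono hD_int.abs hR_int (fun ω => ?_)
    rw [abs_mul]
    have h1 := hpt (X n ω)
    have h2 := abs_nonneg (H ω)
    have h3 : (0:ℝ) ≤ Set.indicator E (fun _ => (1:ℝ)) (X n ω) := by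
      by_cases hxE : X n ω ∈ E
      · rw [Set.indicator_of_mem hxE]; norm_num
      · rw [Set.indicator_of_notMem hxE]
    exact mul_le_mul_of_nonneg_right h1 h2
  have hpre : MeasurableSet ((X n) ⁻¹' E) := hXn hEm
  have hRform : (fun ω => Set.indicator E (fun _ => (1:ℝ)) (X n ω) * |H ω|)
      = Set.indicator ((X n) ⁻¹' E) (fun ω => |H ω|) := by
    funext ω
    by_cases hxE : X n ω ∈ E <;>
      simp [Set.indicator_apply, hxE, Set.mem_preimage]
  have hνE : ν E = ENNReal.ofReal (∫ ω in (X n) ⁻¹' E, |H ω| ∂μ) := by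
    rw [hνdef, Measure.map_apply hXn hEm, withDensity_apply _ hpre, hwdef,
      ← MeasureTheory.ofReal_integral_eq_lintegral_ofReal hH_int.abs.integrableOn
        (Filter.Eventually.of_forall (fun ω => abs_nonneg _))]
  have hfinal : |Iϝ - Iθ| ≤ ε/2 := by
    refine le_trans habs ?_
    rw [hRform, MeasureTheory.integral_indicator hpre]
    have h1 : ENNReal.ofReal (∫ ω in (X n) ⁻¹' E, |H ω| ∂μ) ≤ ENNReal.ofReal (ε/2) := by
      rw [← hνE]; exact hFν
    have h2 : (0:ℝ) ≤ ∫ ω in (X n) ⁻¹' E, |H ω| ∂μ :=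
      MeasureTheory.integral_nonneg (fun ω => abs_nonneg _)
    rw [ENNReal.ofReal_le_ofReal_iff (by linarith)] at h1
    exact h1
  -- conclude
  obtain ⟨q1, A1, b1, A2, b2, hFrep⟩ := hFnet
  refine ⟨q1, A1, b1, A2, b2, ?_⟩
  have hgoal : ∫ ω, (g n (X n ω) *
        (if 0 ≤ (∑ i, A2 i * max ((Matrix.mulVec A1 (X n ω)) i + b1 i) 0) + b2
          then (1 : ℝ) else 0)
      + g (τ ω) (X (τ ω) ω) *
        (1 - (if 0 ≤ (∑ i, A2 i * max ((Matrix.mulVec A1 (X n ω)) i + b1 i) 0) + b2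
          then (1 : ℝ) else 0))) ∂μ = Iθ := by
    rw [hIθdef]
    refine MeasureTheory.integral_congr_ae (Filter.Eventually.of_forall (fun ω => ?_))
    beta_reduce
    rw [← hFrep (X n ω)]
  rw [hgoal, ge_iff_le]
  have : sSup S - ε/2 < Iϝ := hr
  have h2 := (abs_le.mp hfinal).2
  linarith
end

section
/- Let $(g(n,X_n))_{n=0}^N$ be an integrable adapted process with Snell envelope $H_n$ and Doob--Meyer decomposition $H_n = H_0 + M^H_n - A^H_n$, and let $(\varepsilon_n)_{n=0}^N$ be integrable random variables. Then $V_0 := H_0 \ge \mathbb{E}\big[\max_{0 \le n \le N}(g(n,X_n) - M^H_n - \varepsilon_n)\big] + \mathbb{E}\big[\min_{0 \le n \le N}(A^H_n + \varepsilon_n)\big]$. -/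
open MeasureTheory Filter Set

private lemma integrable_fsup {Ω : Type*} {m0 : MeasurableSpace Ω} (μ : Measure Ω)
    (s : Finset ℕ) (hs : s.Nonempty) (f : ℕ → Ω → ℝ)
    (hf : ∀ n ∈ s, Integrable (f n) μ) :
    Integrable (fun ω => s.sup' hs (fun n => f n ω)) μ := by
  revert hf
  induction hs using Finset.Nonempty.cons_induction with
  | singleton a => intro hf; simpa using hf a (by simp)
  | cons a s ha hne ih =>
    intro hf
    rw [show (fun ω => (Finset.cons a s ha).sup' (Finset.cons_nonempty ha) (fun n => f n ω)) = (fun ω => (f a ω) ⊔ s.sup' hne (fun n => f n ω)) from funext fun ω => Finset.sup'_cons hne _]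
    exact (hf a (by simp)).sup (ih (fun n hn => hf n (by simp [hn])))

private lemma integrable_finf {Ω : Type*} {m0 : MeasurableSpace Ω} (μ : Measure Ω)
    (s : Finset ℕ) (hs : s.Nonempty) (f : ℕ → Ω → ℝ)
    (hf : ∀ n ∈ s, Integrable (f n) μ) :
    Integrable (fun ω => s.inf' hs (fun n => f n ω)) μ := by
  revert hf
  induction hs using Finset.Nonempty.cons_induction with
  | singleton a => intro hf; simpa using hf a (by simp)
  | cons a s ha hne ih =>
    intro hf
    rw [show (fun ω => (Finset.cons a s ha).inf' (Finset.cons_nonempty ha) (fun n => f n ω)) = (fun ω => (f a ω) ⊓ s.inf' hne (fun n => f n ω)) from funext fun ω => Finset.inf'_cons hne _]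
    exact (hf a (by simp)).inf (ih (fun n hn => hf n (by simp [hn])))

open MeasureTheory Filter Set

theorem stmt8
    {Ω : Type*} {m0 : MeasurableSpace Ω} (μ : Measure Ω) [IsProbabilityMeasure μ]
    (ℱ : Filtration ℕ m0) (N : ℕ)
    (G H M A ε : ℕ → Ω → ℝ)
    (hGadpt : Adapted ℱ G) (hGint : ∀ n, n ≤ N → Integrable (G n) μ)
    -- `H` is the Snell envelope of `G`: it satisfies the backward dynamic programming
    -- recursion `H_N = G_N`, `H_n = max(G_n, E[H_{n+1} | F_n])`
    (hHadpt : Adapted ℱ H) (hHint : ∀ n, n ≤ N → Integrable (H n) μ)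
    (hHN : H N =ᵐ[μ] G N)
    (hHrec : ∀ n, n < N → H n =ᵐ[μ] fun ω => max (G n ω) ((μ[H (n + 1) | ℱ n]) ω))
    -- Doob--Meyer decomposition `H_n = H_0 + M_n - A_n`
    (hM : Martingale M ℱ μ) (hM0 : ∀ ω, M 0 ω = 0)
    (hAint : ∀ n, n ≤ N → Integrable (A n) μ)
    (hA0 : ∀ ω, A 0 ω = 0)
    (hAmono : ∀ᵐ ω ∂μ, ∀ n, n < N → A n ω ≤ A (n + 1) ω)
    (hApred : ∀ n, StronglyMeasurable[ℱ n] (A (n + 1)))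
    (hDM : ∀ n, n ≤ N → H n =ᵐ[μ] fun ω => H 0 ω + M n ω - A n ω)
    -- integrable noise
    (hεint : ∀ n, n ≤ N → Integrable (ε n) μ) :
    ∫ ω, H 0 ω ∂μ ≥
      (∫ ω, (Finset.range (N + 1)).sup' (Finset.nonempty_range_iff.mpr N.succ_ne_zero)
          (fun n => G n ω - M n ω - ε n ω) ∂μ)
      + ∫ ω, (Finset.range (N + 1)).inf' (Finset.nonempty_range_iff.mpr N.succ_ne_zero)
          (fun n => A n ω + ε n ω) ∂μ := by

  have hMint : ∀ n, Integrable (M n) μ := fun n => hM.integrable n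
  have hne := Finset.nonempty_range_iff.mpr N.succ_ne_zero
  have hsupInt : Integrable (fun ω => (Finset.range (N + 1)).sup' hne
      (fun n => G n ω - M n ω - ε n ω)) μ := by
    apply integrable_fsup μ _ hne
    intro n hn
    have hn' : n ≤ N := Nat.lt_succ_iff.mp (Finset.mem_range.mp hn)
    exact ((hGint n hn').sub (hMint n)).sub (hεint n hn')
  have hinfInt : Integrable (fun ω => (Finset.range (N + 1)).inf' hne
      (fun n => A n ω + ε n ω)) μ := by
    apply integrable_finf μ _ hne
    intro n hn
    have hn' : n ≤ N := Nat.lt_succ_iff.mp (Finset.mem_range.mp hn)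
    exact (hAint n hn').add (hεint n hn')
  have hGH : ∀ᵐ ω ∂μ, ∀ n, n ≤ N → G n ω ≤ H n ω := by
    rw [ae_all_iff]
    intro n
    by_cases hn : n ≤ N
    · rcases eq_or_lt_of_le hn with h | h
      · subst h
        filter_upwards [hHN] with ω hω _
        rw [hω]
      · filter_upwards [hHrec n h] with ω hω _
        rw [hω]; exact le_max_left _ _
    · filter_upwards with ω hn'; exact absurd hn' hn
  have hDM' : ∀ᵐ ω ∂μ, ∀ n, n ≤ N → H n ω = H 0 ω + M n ω - A n ω := by
    rw [ae_all_iff]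
    intro n
    by_cases hn : n ≤ N
    · filter_upwards [hDM n hn] with ω hω _; exact hω
    · filter_upwards with ω hn'; exact absurd hn' hn
  have key : ∀ᵐ ω ∂μ,
      (fun ω => (Finset.range (N + 1)).sup' hne (fun n => G n ω - M n ω - ε n ω)) ω
      + (fun ω => (Finset.range (N + 1)).inf' hne (fun n => A n ω + ε n ω)) ω ≤ H 0 ω := by
    filter_upwards [hGH, hDM'] with ω h1 h2
    obtain ⟨n₀, hn₀, hsup⟩ :=
      Finset.exists_mem_eq_sup' hne (fun n => G n ω - M n ω - ε n ω)
    have hn₀N : n₀ ≤ N := Nat.lt_succ_iff.mp (Finset.mem_range.mp hn₀)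
    have hinf : (Finset.range (N + 1)).inf' hne (fun n => A n ω + ε n ω)
        ≤ A n₀ ω + ε n₀ ω := Finset.inf'_le _ hn₀
    have e1 := h1 n₀ hn₀N
    have e2 := h2 n₀ hn₀N
    simp only [hsup]
    linarith
  rw [ge_iff_le, ← integral_add hsupInt hinfInt]
  exact integral_mono_ae (hsupInt.add hinfInt) (hHint 0 (Nat.zero_le N)) key
end

section
/- Let $(\mathcal{F}_n)_{n=0}^N$ be a filtration, $(g(n,X_n))_{n=0}^N$ an integrable adapted process, and $(\varepsilon_n)_{n=0}^N$ integrable random variables with $\mathbb{E}[\varepsilon_n \mid \mathcal{F}_n] = 0$ for all $n$. Then for every $(\mathcal{F}_n)$-martingale $(M_n)_{n=0}^N$ with $M_0 = 0$, $\sup_{\tau \in \mathcal{T}} \mathbb{E}\, g(\tau, X_\tau) \le \mathbb{E}\big[\max_{0 \le n \le N}(g(n,X_n) - M_n - \varepsilon_n)\big]$, where $\mathcal{T}$ is the set of $(\mathcal{F}_n)$-stopping times valued in $\{0,\dots,N\}$. -/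
open MeasureTheory Filter Set

private lemma integrable_finset_sup' {Ω : Type*} {m0 : MeasurableSpace Ω} {μ : Measure Ω}
    {s : Finset ℕ} (hs : s.Nonempty) {f : ℕ → Ω → ℝ} (hf : ∀ n ∈ s, Integrable (f n) μ) :
    Integrable (fun ω => s.sup' hs (fun n => f n ω)) μ := by
  induction hs using Finset.Nonempty.cons_induction with
  | singleton i =>
      simp only [Finset.sup'_singleton]
      exact hf i (Finset.mem_singleton_self i)
  | cons i t hit ht ih =>
      simp only [Finset.sup'_cons ht]
      exact (hf i (by simp)).sup (ih fun n hn => hf n (Finset.mem_cons_of_mem hn))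

private lemma withTop_untopA_natCast (n : ℕ) : ((n : WithTop ℕ)).untopA = n := rfl

private lemma enat_untopA_natCast (n : ℕ) : ((n : ℕ∞)).untopA = n := rfl

theorem stmt9
    {Ω : Type*} {m0 : MeasurableSpace Ω} (μ : Measure Ω) [IsProbabilityMeasure μ]
    (ℱ : Filtration ℕ m0) (N : ℕ)
    (G ε M : ℕ → Ω → ℝ)
    (hGadpt : Adapted ℱ G) (hGint : ∀ n, n ≤ N → Integrable (G n) μ)
    (hεint : ∀ n, n ≤ N → Integrable (ε n) μ)
    (hεcond : ∀ n, n ≤ N → μ[ε n | ℱ n] =ᵐ[μ] 0)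
    (hM : Martingale M ℱ μ) (hM0 : ∀ ω, M 0 ω = 0) :
    sSup ((fun τ : Ω → ℕ => ∫ ω, G (τ ω) ω ∂μ) ''
        {τ | IsStoppingTime ℱ (fun ω => (τ ω : WithTop ℕ)) ∧ ∀ ω, τ ω ≤ N})
      ≤ ∫ ω, (Finset.range (N + 1)).sup' (Finset.nonempty_range_iff.mpr N.succ_ne_zero)
          (fun n => G n ω - M n ω - ε n ω) ∂μ := by
  classical
  set G' : ℕ → Ω → ℝ := fun n => if n ≤ N then G n else 0 with hG'
  set ε' : ℕ → Ω → ℝ := fun n => if n ≤ N then ε n else 0 with hε'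
  have hG'int : ∀ n, Integrable (G' n) μ := by
    intro n; by_cases h : n ≤ N
    · simpa [hG', h] using hGint n h
    · simp only [hG', if_neg h]; exact integrable_zero _ _ _
  have hε'int : ∀ n, Integrable (ε' n) μ := by
    intro n; by_cases h : n ≤ N
    · simpa [hε', h] using hεint n h
    · simp only [hε', if_neg h]; exact integrable_zero _ _ _
  -- the set is nonempty
  have hne : ((fun τ : Ω → ℕ => ∫ ω, G (τ ω) ω ∂μ) ''
      {τ | IsStoppingTime ℱ (fun ω => (τ ω : WithTop ℕ)) ∧ ∀ ω, τ ω ≤ N}).Nonempty := by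
    exact ⟨_, ⟨fun _ => 0, ⟨isStoppingTime_const ℱ 0, fun ω => Nat.zero_le N⟩, rfl⟩⟩
  refine csSup_le hne ?_
  rintro x ⟨τ, ⟨hτ, hτN⟩, rfl⟩
  have hmem : ∀ ω, τ ω ∈ Finset.range (N + 1) := fun ω =>
    Finset.mem_range_succ_iff.mpr (hτN ω)
  have hmem' : ∀ ω, (τ ω : WithTop ℕ) ∈ WithTop.some '' (Finset.range (N + 1) : Set ℕ) :=
    fun ω => ⟨τ ω, hmem ω, rfl⟩
  have hτN' : ∀ ω, (τ ω : WithTop ℕ) ≤ (N : WithTop ℕ) := fun ω => WithTop.coe_le_coe.mpr (hτN ω)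
  -- integrability of stopped values
  have hGτ : Integrable (fun ω => G (τ ω) ω) μ := by
    have := integrable_stoppedValue_of_mem_finset (u := G') hτ hG'int hmem'
    refine this.congr (Eventually.of_forall fun ω => ?_)
    simp [stoppedValue, withTop_untopA_natCast, hG', hτN ω]
  have hMτ : Integrable (fun ω => M (τ ω) ω) μ :=
    integrable_stoppedValue_of_mem_finset (u := M) hτ hM.integrable hmem'
  have hετ : Integrable (fun ω => ε (τ ω) ω) μ := by
    have := integrable_stoppedValue_of_mem_finset (u := ε') hτ hε'int hmem'
    refine this.congr (Eventually.of_forall fun ω => ?_)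
    simp [stoppedValue, withTop_untopA_natCast, hε', hτN ω]
  -- E M_τ = 0 by optional stopping
  have hMint : ∫ ω, M (τ ω) ω ∂μ = 0 := by
    have h0 : IsStoppingTime ℱ (fun _ : Ω => ((0 : ℕ) : WithTop ℕ)) := isStoppingTime_const ℱ 0
    have hle : (fun _ : Ω => ((0 : ℕ) : WithTop ℕ)) ≤ (fun ω => (τ ω : WithTop ℕ)) :=
      fun ω => WithTop.coe_le_coe.mpr (Nat.zero_le _)
    have h1 := hM.submartingale.expected_stoppedValue_mono h0 hτ hle hτN'
    have h2 := hM.neg.submartingale.expected_stoppedValue_mono h0 hτ hle hτN'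
    simp only [stoppedValue, withTop_untopA_natCast, hM0, Pi.neg_apply, integral_zero, integral_neg,
      integral_const, neg_nonneg, smul_eq_mul, mul_zero, le_neg] at h1 h2
    have : (0 : ℝ) = ∫ ω, M (τ ω) ω ∂μ := by
      refine le_antisymm ?_ ?_
      · simpa using h1
      · simpa using h2
    exact this.symm
  -- E ε_τ = 0
  have hεint0 : ∫ ω, ε (τ ω) ω ∂μ = 0 := by
    have heq : (fun ω => ε (τ ω) ω) = stoppedValue ε' (fun ω => (τ ω : ℕ∞)) := by
      funext ω; simp [stoppedValue, enat_untopA_natCast, hε', hτN ω]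
    rw [heq, stoppedValue_eq (fun ω => (by exact_mod_cast hτN ω : (τ ω : ℕ∞) ≤ N))]
    simp only [Finset.sum_apply, Nat.cast_inj]
    rw [integral_finset_sum]
    · refine Finset.sum_eq_zero fun i hi => ?_
      have hiN : i ≤ N := Nat.lt_succ_iff.mp (Finset.mem_range.mp hi)
      have hmeas : MeasurableSet[ℱ i] {ω | τ ω = i} := by
        simpa using hτ.measurableSet_eq i
      rw [integral_indicator (ℱ.le i _ hmeas)]
      have hεi : ε' i = ε i := by simp [hε', hiN]
      rw [hεi, ← setIntegral_condExp (ℱ.le i) (hεint i hiN) hmeas]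
      calc ∫ ω in {ω | τ ω = i}, (μ[ε i | ℱ i]) ω ∂μ
          = ∫ ω in {ω | τ ω = i}, (0 : Ω → ℝ) ω ∂μ :=
            setIntegral_congr_ae (ℱ.le i _ hmeas)
              ((hεcond i hiN).mono fun ω hω _ => hω)
        _ = 0 := by simp
    · intro i _
      exact (hε'int i).indicator (ℱ.le i _ (by simpa using hτ.measurableSet_eq i))
  -- pointwise bound and conclusion
  have hGM : Integrable (fun ω => G (τ ω) ω - M (τ ω) ω) μ := hGτ.sub hMτ
  have hGMε : Integrable (fun ω => G (τ ω) ω - M (τ ω) ω - ε (τ ω) ω) μ := hGM.sub hετ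
  have key : ∫ ω, G (τ ω) ω ∂μ
      = ∫ ω, (G (τ ω) ω - M (τ ω) ω - ε (τ ω) ω) ∂μ := by
    rw [integral_sub hGM hετ, integral_sub hGτ hMτ, hMint, hεint0]
    ring
  show ∫ ω, G (τ ω) ω ∂μ ≤ _
  rw [key]
  refine integral_mono hGMε
    (integrable_finset_sup' _ fun n hn =>
      ((hGint n (Nat.lt_succ_iff.mp (Finset.mem_range.mp hn))).sub
        (hM.integrable n)).sub (hεint n (Nat.lt_succ_iff.mp (Finset.mem_range.mp hn))))
    fun ω => ?_
  exact Finset.le_sup' (fun n => G n ω - M n ω - ε n ω) (hmem ω)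
end

section
/- With notation as above, define $H^\Theta_n = \mathbb{E}[g(\tau^\Theta_n, X_{\tau^\Theta_n}) \mid \mathcal{F}_n]$ and continuation values $C^\Theta_n = \mathbb{E}[g(\tau^\Theta_{n+1}, X_{\tau^\Theta_{n+1}}) \mid \mathcal{F}_n]$. Then the martingale increments of $H^\Theta$ satisfy, for $n \ge 1$, $H^\Theta_n - \mathbb{E}[H^\Theta_n \mid \mathcal{F}_{n-1}] = f^{\theta_n}(X_n)\, g(n, X_n) + (1 - f^{\theta_n}(X_n))\, C^\Theta_n - C^\Theta_{n-1}$ almost surely. -/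
open MeasureTheory Filter Set

theorem stmt12
    {Ω : Type*} {m0 : MeasurableSpace Ω} (μ : Measure Ω) [IsProbabilityMeasure μ]
    (d N : ℕ)
    (X : ℕ → Ω → (Fin d → ℝ)) (hX : ∀ m, StronglyMeasurable (X m))
    (g : ℕ → (Fin d → ℝ) → ℝ) (hg : ∀ m, Measurable (g m))
    (hgint : ∀ m, m ≤ N → Integrable (fun ω => g m (X m ω)) μ)
    (f : ℕ → (Fin d → ℝ) → ℕ) (hf : ∀ m, Measurable (f m))
    (hf01 : ∀ m x, f m x ≤ 1) (hfN : ∀ x, f N x = 1)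
    (τ : ℕ → Ω → ℕ)
    (hτ : ∀ k ω, τ k ω = ∑ m ∈ Finset.Icc k N,
        m * f m (X m ω) * ∏ j ∈ Finset.Ico k m, (1 - f j (X j ω)))
    (H C : ℕ → Ω → ℝ)
    (hH : ∀ k, k ≤ N →
      H k =ᵐ[μ] μ[(fun ω => g (τ k ω) (X (τ k ω) ω)) | (MeasureTheory.Filtration.natural X hX) k])
    (hC : ∀ k, k < N →
      C k =ᵐ[μ] μ[(fun ω => g (τ (k + 1) ω) (X (τ (k + 1) ω) ω)) |
        (MeasureTheory.Filtration.natural X hX) k])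
    (n : ℕ) (hn1 : 1 ≤ n) (hnN : n ≤ N) :
    (fun ω => H n ω - (μ[H n | (MeasureTheory.Filtration.natural X hX) (n - 1)]) ω)
      =ᵐ[μ] fun ω => (f n (X n ω) : ℝ) * g n (X n ω)
        + (1 - (f n (X n ω) : ℝ)) * (if n < N then C n ω else 0) - C (n - 1) ω := by
  set F := MeasureTheory.Filtration.natural X hX with hFdef
  -- τ at N
  have hτN : ∀ ω, τ N ω = N := by
    intro ω; rw [hτ]; simp [hfN]
  -- one-step recursion for τ
  have hτstep : ∀ k, k < N → ∀ ω,
      τ k ω = k * f k (X k ω) + (1 - f k (X k ω)) * τ (k + 1) ω := by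
    intro k hk ω
    rw [hτ, hτ]
    have hins : Finset.Icc k N = insert k (Finset.Icc (k + 1) N) := by
      rw [Finset.Icc_add_one_left_eq_Ioc, Finset.Ioc_insert_left hk.le]
    rw [hins, Finset.sum_insert (by simp), Finset.mul_sum]
    simp only [Finset.Ico_self, Finset.prod_empty, mul_one]
    congr 1
    refine Finset.sum_congr rfl fun m hm => ?_
    have hkm : k < m := by
      have := Finset.mem_Icc.mp hm; omega
    rw [Finset.prod_eq_prod_Ico_succ_bot hkm]
    ring
  have hf01' : ∀ m ω, f m (X m ω) = 0 ∨ f m (X m ω) = 1 := by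
    intro m ω; have := hf01 m (X m ω); omega
  have hτ_cases : ∀ k, k < N → ∀ ω,
      (f k (X k ω) = 1 ∧ τ k ω = k) ∨ (f k (X k ω) = 0 ∧ τ k ω = τ (k + 1) ω) := by
    intro k hk ω
    rcases hf01' k ω with h | h
    · right; refine ⟨h, ?_⟩; rw [hτstep k hk ω, h]; ring
    · left; refine ⟨h, ?_⟩; rw [hτstep k hk ω, h]; simp
  -- range of τ
  have hτ_mem : ∀ j k, k + j = N → ∀ ω, k ≤ τ k ω ∧ τ k ω ≤ N := by
    intro j
    induction j with
    | zero =>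
      intro k hkN ω
      have : k = N := by omega
      subst this; rw [hτN]; omega
    | succ j ih =>
      intro k hkN ω
      have hk : k < N := by omega
      rcases hτ_cases k hk ω with ⟨_, h⟩ | ⟨_, h⟩
      · rw [h]; omega
      · rw [h]
        have := ih (k + 1) (by omega) ω
        omega
  have hτ_mem' : ∀ k, k ≤ N → ∀ ω, k ≤ τ k ω ∧ τ k ω ≤ N := fun k hk =>
    hτ_mem (N - k) k (by omega)
  -- measurability of τ
  have hτmeas : ∀ k, Measurable (τ k) := by
    intro k
    have : (τ k) = fun ω => ∑ m ∈ Finset.Icc k N,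
        m * f m (X m ω) * ∏ j ∈ Finset.Ico k m, (1 - f j (X j ω)) := funext (hτ k)
    rw [this]
    refine Finset.measurable_sum _ fun m _ => Measurable.mul ?_ ?_
    · exact (measurable_const.mul ((hf m).comp (hX m).measurable))
    · exact Finset.measurable_prod _ fun j _ =>
        (measurable_const.sub ((hf j).comp (hX j).measurable))
  -- integrability of stopped payoff
  have hYint : ∀ k, k ≤ N → Integrable (fun ω => g (τ k ω) (X (τ k ω) ω)) μ := by
    intro k hk
    have hrep : (fun ω => g (τ k ω) (X (τ k ω) ω)) = fun ω =>
        ∑ m ∈ Finset.Icc k N, Set.indicator {ω' | τ k ω' = m} (fun ω' => g m (X m ω')) ω := by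
      funext ω
      rw [Finset.sum_eq_single (τ k ω)]
      · simp [Set.indicator, Set.mem_setOf_eq]
      · intro m _ hm
        exact Set.indicator_of_notMem (by simpa [Set.mem_setOf_eq] using (Ne.symm hm)) _
      · intro hmem
        exact absurd (Finset.mem_Icc.mpr ⟨(hτ_mem' k hk ω).1, (hτ_mem' k hk ω).2⟩) hmem
    rw [hrep]
    refine integrable_finset_sum _ fun m hm => ?_
    have hmN : m ≤ N := (Finset.mem_Icc.mp hm).2
    have hset : MeasurableSet {ω' | τ k ω' = m} := hτmeas k (measurableSet_singleton m)
    exact (hgint m hmN).indicator hset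
  -- F-measurability helpers
  have hXF : ∀ i, StronglyMeasurable[F i] (X i) := fun i =>
    (MeasureTheory.Filtration.stronglyAdapted_natural hX) i
  have hfXF : ∀ i, Measurable[F i] fun ω => f i (X i ω) := fun i =>
    (hf i).comp (hXF i).measurable
  have hgXF : ∀ i, StronglyMeasurable[F i] fun ω => g i (X i ω) := fun i =>
    ((hg i).comp (hXF i).measurable).stronglyMeasurable
  -- Step A : μ[H n | F (n-1)] =ᵐ C (n-1)
  have hn1' : (n - 1) + 1 = n := by omega
  have stepA : μ[H n | F (n - 1)] =ᵐ[μ] C (n - 1) := by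
    have e1 : μ[H n | F (n - 1)] =ᵐ[μ]
        μ[μ[(fun ω => g (τ n ω) (X (τ n ω) ω)) | F n] | F (n - 1)] :=
      condExp_congr_ae (hH n hnN)
    have e2 : μ[μ[(fun ω => g (τ n ω) (X (τ n ω) ω)) | F n] | F (n - 1)] =ᵐ[μ]
        μ[(fun ω => g (τ n ω) (X (τ n ω) ω)) | F (n - 1)] :=
      condExp_condExp_of_le (F.mono (by omega)) (F.le n)
    have e3 := hC (n - 1) (by omega)
    rw [hn1'] at e3
    exact (e1.trans e2).trans e3.symm
  -- Step B : H n =ᵐ first part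
  have stepB : H n =ᵐ[μ] fun ω => (f n (X n ω) : ℝ) * g n (X n ω)
      + (1 - (f n (X n ω) : ℝ)) * (if n < N then C n ω else 0) := by
    rcases eq_or_lt_of_le hnN with hnE | hnL
    · -- n = N
      subst hnE
      have hYeq : (fun ω => g (τ n ω) (X (τ n ω) ω)) = fun ω => g n (X n ω) := by
        funext ω; rw [hτN ω]
      have hce : μ[(fun ω => g (τ n ω) (X (τ n ω) ω)) | F n] = fun ω => g n (X n ω) := by
        rw [hYeq]
        exact condExp_of_stronglyMeasurable (F.le n) (hgXF n) (hgint n le_rfl)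
      filter_upwards [hH n le_rfl] with ω hω
      rw [hω, hce]
      simp [hfN]
    · -- n < N
      set A : Set Ω := {ω | f n (X n ω) = 1} with hAdef
      have hA_F : MeasurableSet[F n] A := hfXF n (measurableSet_singleton 1)
      have hA_m0 : MeasurableSet A :=
        ((hf n).comp (hX n).measurable) (measurableSet_singleton 1)
      have hsplit : (fun ω => g (τ n ω) (X (τ n ω) ω)) =
          (A.indicator (fun ω => g n (X n ω))
            + Aᶜ.indicator (fun ω => g (τ (n + 1) ω) (X (τ (n + 1) ω) ω))) := by
        funext ω
        rcases hτ_cases n hnL ω with ⟨h1, h2⟩ | ⟨h1, h2⟩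
        · have hωA : ω ∈ A := h1
          simp [Set.indicator_of_mem hωA,
            Set.indicator_of_notMem (Set.notMem_compl_iff.mpr hωA), h2]
        · have hωA : ω ∉ A := by simp [hAdef, h1]
          simp [Set.indicator_of_notMem hωA, Set.indicator_of_mem (Set.mem_compl hωA), h2]
      have int1 : Integrable (A.indicator (fun ω => g n (X n ω))) μ :=
        (hgint n hnN).indicator hA_m0
      have intY : Integrable (fun ω => g (τ (n + 1) ω) (X (τ (n + 1) ω) ω)) μ :=
        hYint (n + 1) hnL
      have int2 : Integrable (Aᶜ.indicator (fun ω => g (τ (n + 1) ω) (X (τ (n + 1) ω) ω))) μ :=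
        intY.indicator hA_m0.compl
      have h2 : μ[(fun ω => g (τ n ω) (X (τ n ω) ω)) | F n] =ᵐ[μ]
          μ[A.indicator (fun ω => g n (X n ω)) | F n]
            + μ[Aᶜ.indicator (fun ω => g (τ (n + 1) ω) (X (τ (n + 1) ω) ω)) | F n] := by
        rw [hsplit]
        exact condExp_add int1 int2 (F n)
      have h3 : μ[A.indicator (fun ω => g n (X n ω)) | F n]
          = A.indicator (fun ω => g n (X n ω)) :=
        condExp_of_stronglyMeasurable (F.le n) ((hgXF n).indicator hA_F) int1
      have h4 : μ[Aᶜ.indicator (fun ω => g (τ (n + 1) ω) (X (τ (n + 1) ω) ω)) | F n] =ᵐ[μ]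
          Aᶜ.indicator (μ[(fun ω => g (τ (n + 1) ω) (X (τ (n + 1) ω) ω)) | F n]) :=
        condExp_indicator intY hA_F.compl
      have h5 : Aᶜ.indicator (μ[(fun ω => g (τ (n + 1) ω) (X (τ (n + 1) ω) ω)) | F n])
          =ᵐ[μ] Aᶜ.indicator (C n) := by
        filter_upwards [hC n hnL] with ω hω
        by_cases hωA : ω ∈ Aᶜ
        · simp [Set.indicator_of_mem hωA, hω]
        · simp [Set.indicator_of_notMem hωA]
      filter_upwards [hH n hnN, h2, h4, h5] with ω hω hω2 hω4 hω5
      have hHv : H n ω = A.indicator (fun ω => g n (X n ω)) ω + Aᶜ.indicator (C n) ω := by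
        rw [hω, hω2, Pi.add_apply, h3, hω4, hω5]
      rw [hHv]
      rcases hf01' n ω with h | h
      · have hωA : ω ∉ A := by simp [hAdef, h]
        simp [Set.indicator_of_notMem hωA,
          Set.indicator_of_mem (Set.mem_compl hωA), h, hnL]
      · have hωA : ω ∈ A := h
        simp [Set.indicator_of_mem hωA,
          Set.indicator_of_notMem (Set.notMem_compl_iff.mpr hωA), h]
  -- combine
  filter_upwards [stepA, stepB] with ω hA hB
  rw [hB, hA]
end

section
/- Let $H \in (0,1) \setminus \{1/2\}$ and let $(W^H_t)_{t\ge 0}$ be a fractional Brownian motion with Hurst parameter $H$. Then there exists a stopping time $\tau$ with respect to the natural filtration of $W^H$ satisfying $0 \le \tau \le 1$ a.s. and $\mathbb{E}\, W^H_\tau > 0$; in particular, restricting to stopping times valued in $\{0, t_1\}$ with $t_1 \in (0,1]$ and $\tau = t_1\mathbf{1}_A$ for a suitable $A \in \mathcal{F}_0^{W^H}$ is insufficient, but two-step rules of the form $\tau = s\mathbf{1}_{\{W^H_s \le 0\}} + t\mathbf{1}_{\{W^H_s > 0\}}$ (for $H > 1/2$, $0 < s < t \le 1$) achieve $\mathbb{E}\,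 W^H_\tau = \mathbb{E}[(W^H_t - W^H_s)\mathbf{1}_{\{W^H_s > 0\}}] > 0$. -/
open MeasureTheory ProbabilityTheory Filter Set
open scoped NNReal
open Real


lemma aux_integrable_id_gaussianReal (v : ℝ≥0) :
    Integrable (fun x : ℝ => x) (gaussianReal 0 v) := by
  by_cases hv : v = 0
  · rw [hv, gaussianReal_zero_var]
    refine (integrable_const (0:ℝ)).congr ?_
    rw [Filter.EventuallyEq, ae_dirac_eq]
    simp
  rw [gaussianReal_of_var_ne_zero 0 hv,
    integrable_withDensity_iff (measurable_gaussianPDF 0 v)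
      (Eventually.of_forall fun x => ENNReal.ofReal_lt_top)]
  have hv' : (0:ℝ) < (v:ℝ) := by positivity
  have : Integrable (fun x : ℝ => x * Real.exp (-(2*(v:ℝ))⁻¹ * x ^ 2)) :=
    integrable_mul_exp_neg_mul_sq (by positivity)
  refine (this.const_mul ((Real.sqrt (2 * π * v))⁻¹)).congr ?_
  refine Eventually.of_forall fun x => ?_
  simp only [gaussianPDF, gaussianPDFReal, ENNReal.toReal_ofReal
    (by positivity : (0:ℝ) ≤ (√(2 * π * v))⁻¹ * Real.exp (-(x - 0)^2 / (2 * v)))]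
  rw [sub_zero]
  ring_nf

lemma aux_neg_one_sq : (⟨(-1:ℝ)^2, sq_nonneg _⟩ : ℝ≥0) = 1 := by
  ext; norm_num

lemma aux_integral_id_gaussianReal (v : ℝ≥0) :
    ∫ x, x ∂(gaussianReal 0 v) = 0 := by
  have hmap : (gaussianReal 0 v).map ((-1 : ℝ) * ·) = gaussianReal 0 v := by
    rw [gaussianReal_map_const_mul, mul_zero]
    congr 1
    ext
    norm_num
  have h := integral_map (μ := gaussianReal 0 v)
    (φ := ((-1 : ℝ) * ·)) (f := fun x : ℝ => x)
    (by fun_prop) aestronglyMeasurable_id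
  rw [hmap] at h
  have : ∫ x, (-1 : ℝ) * x ∂(gaussianReal 0 v) = -∫ x, x ∂(gaussianReal 0 v) := by
    simpa using integral_const_mul (-1 : ℝ) (fun x : ℝ => x) (μ := gaussianReal 0 v)
  rw [this] at h
  linarith

lemma aux_gaussianReal_eq_map (v : ℝ≥0) :
    gaussianReal 0 v = (gaussianReal 0 1).map ((Real.sqrt v) * ·) := by
  rw [gaussianReal_map_const_mul]
  congr 1
  · rw [mul_zero]
  · ext
    simp [Real.sq_sqrt (v.coe_nonneg)]

lemma aux_integral_abs_gaussianReal (v : ℝ≥0) :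
    ∫ x, |x| ∂(gaussianReal 0 v)
      = Real.sqrt v * ∫ x, |x| ∂(gaussianReal 0 1) := by
  rw [aux_gaussianReal_eq_map v,
    integral_map (by fun_prop) measurable_abs.aestronglyMeasurable]
  simp only [abs_mul, abs_of_nonneg (Real.sqrt_nonneg (v:ℝ))]
  rw [integral_const_mul]

lemma aux_singleton_null {v : ℝ≥0} (hv : v ≠ 0) (x : ℝ) :
    gaussianReal 0 v {x} = 0 :=
  gaussianReal_absolutelyContinuous 0 hv (measure_singleton x)

lemma aux_abs_moment_pos : 0 < ∫ x, |x| ∂(gaussianReal 0 1) := by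
  rw [integral_pos_iff_support_of_nonneg_ae
    (Eventually.of_forall fun x => abs_nonneg x)
    (aux_integrable_id_gaussianReal 1).abs]
  have hs : Function.support (fun x : ℝ => |x|) = {(0:ℝ)}ᶜ := by
    ext x; simp [Function.support, abs_ne_zero]
  rw [hs]
  have h0 : gaussianReal 0 1 {(0:ℝ)} = 0 := aux_singleton_null one_ne_zero 0
  have := measure_compl (μ := gaussianReal 0 1) (measurableSet_singleton (0:ℝ))
    (by simp [h0])
  rw [this, h0]
  simp

section Transfer

variable {Ω : Type*} {m0 : MeasurableSpace Ω} {μ : Measure Ω}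

lemma aux_integrable_of_gaussian_map {f : Ω → ℝ} (hf : Measurable f) {v : ℝ≥0}
    (h : Measure.map f μ = gaussianReal 0 v) : Integrable f μ := by
  have h1 : Integrable (fun x : ℝ => x) (Measure.map f μ) := by
    rw [h]; exact aux_integrable_id_gaussianReal v
  exact (integrable_map_measure aestronglyMeasurable_id hf.aemeasurable).mp h1

lemma aux_integral_zero_of_gaussian_map {f : Ω → ℝ} (hf : Measurable f) {v : ℝ≥0}
    (h : Measure.map f μ = gaussianReal 0 v) : ∫ ω, f ω ∂μ = 0 := by
  have h2 := integral_map (μ := μ) (φ := f) (f := fun x : ℝ => x)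
    hf.aemeasurable aestronglyMeasurable_id
  rw [h, aux_integral_id_gaussianReal] at h2
  exact h2.symm

end Transfer

section Key

variable {Ω : Type*} {m0 : MeasurableSpace Ω} (μ : Measure Ω) [IsProbabilityMeasure μ]

lemma aux_key (X Y : Ω → ℝ) (hXm : Measurable X) (hYm : Measurable Y)
    (vX c vY : ℝ) (hvX : 0 < vX)
    (hmap : ∀ a b : ℝ, Measure.map (fun ω => a * X ω + b * Y ω) μ
      = gaussianReal 0 (Real.toNNReal (a^2*vX + 2*a*b*c + b^2*vY))) :
    ∫ ω in {ω | 0 < X ω}, Y ω ∂μ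
      = (∫ x, |x| ∂(gaussianReal 0 1)) / (2 * Real.sqrt vX) * c := by
  set m : ℝ := ∫ x, |x| ∂(gaussianReal 0 1) with hm
  -- laws of X and Y
  have hlawX : Measure.map X μ = gaussianReal 0 (Real.toNNReal vX) := by
    have := hmap 1 0
    simpa using this
  have hlawY : Measure.map Y μ = gaussianReal 0 (Real.toNNReal vY) := by
    have := hmap 0 1
    simpa using this
  have hIntX : Integrable X μ := aux_integrable_of_gaussian_map hXm hlawX
  have hIntY : Integrable Y μ := aux_integrable_of_gaussian_map hYm hlawY
  have hYzero : ∫ ω, Y ω ∂μ = 0 := aux_integral_zero_of_gaussian_map hYm hlawY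
  -- X = 0 is null
  have hXnull : μ {ω | X ω = 0} = 0 := by
    have h1 : {ω | X ω = 0} = X ⁻¹' {0} := rfl
    rw [h1, ← Measure.map_apply hXm (measurableSet_singleton 0), hlawX]
    exact aux_singleton_null (by simp [Real.toNNReal_pos.mpr hvX, (Real.toNNReal_pos.mpr hvX).ne']) 0
  -- the variance polynomial
  set q : ℝ → ℝ := fun u => vX + 2*u*c + u^2*vY with hq
  have hq0 : q 0 = vX := by simp [hq]
  -- value of the integral of |X + uY|
  have hval : ∀ u : ℝ, 0 ≤ q u →
      ∫ ω, |X ω + u * Y ω| ∂μ = Real.sqrt (q u) * m := by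
    intro u hqu
    have h1 : ∫ ω, |X ω + u * Y ω| ∂μ
        = ∫ x, |x| ∂(Measure.map (fun ω => 1 * X ω + u * Y ω) μ) := by
      rw [integral_map (by fun_prop) measurable_abs.aestronglyMeasurable]
      simp
    rw [h1, hmap 1 u, aux_integral_abs_gaussianReal]
    have harg : (1:ℝ)^2*vX+2*1*u*c+u^2*vY = q u := by simp only [hq]; ring
    rw [harg, Real.coe_toNNReal _ hqu]
  -- derivative of u ↦ √(q u) * m at 0
  have hqD : HasDerivAt q (2*c) 0 := by
    have h1 : HasDerivAt (fun u:ℝ => 2*u*c) (2*c) 0 := by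
      simpa using ((hasDerivAt_id (0:ℝ)).const_mul 2).mul_const c
    have h2 : HasDerivAt (fun u:ℝ => u^2*vY) 0 0 := by
      simpa using (hasDerivAt_pow 2 (0:ℝ)).mul_const vY
    have := (h1.const_add vX).add h2
    rw [add_zero] at this
    exact this
  have hDeriv1 : HasDerivAt (fun u => Real.sqrt (q u) * m) (c / Real.sqrt vX * m) 0 := by
    have hs : HasDerivAt Real.sqrt (1 / (2 * Real.sqrt (q 0))) (q 0) :=
      Real.hasDerivAt_sqrt (by rw [hq0]; exact hvX.ne')
    have := (hs.comp 0 hqD).mul_const m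
    refine this.congr_deriv ?_
    rw [hq0]
    field_simp
  -- derivative of the integral at 0, via dominated convergence
  set sgn : Ω → ℝ := fun ω => if 0 < X ω then 1 else -1 with hsgn
  have hsgnm : Measurable sgn :=
    Measurable.ite (measurableSet_lt measurable_const hXm) measurable_const measurable_const
  have hDeriv2 : Integrable (fun ω => sgn ω * Y ω) μ ∧
      HasDerivAt (fun u => ∫ ω, |X ω + u * Y ω| ∂μ)
        (∫ ω, sgn ω * Y ω ∂μ) 0 := by
    apply hasDerivAt_integral_of_dominated_loc_of_lip
      (F := fun u ω => |X ω + u * Y ω|) (bound := fun ω => |Y ω|)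
      (s := Metric.ball 0 1) (Metric.ball_mem_nhds 0 one_pos)
    · exact Eventually.of_forall fun u => ((hXm.add (hYm.const_mul u)).abs).aestronglyMeasurable
    · refine hIntX.abs.congr (Eventually.of_forall fun ω => ?_)
      simp
    · exact (hsgnm.mul hYm).aestronglyMeasurable
    · refine Eventually.of_forall fun ω => ?_
      have hL : LipschitzWith (Real.nnabs (|Y ω|)) (fun u => |X ω + u * Y ω|) := by
        refine LipschitzWith.of_dist_le_mul fun u v => ?_
        simp only [Real.dist_eq, Real.coe_nnabs, abs_abs]
        calc |(|X ω + u * Y ω|) - (|X ω + v * Y ω|)| ≤ |(X ω + u * Y ω) - (X ω + v * Y ω)| :=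
              abs_abs_sub_abs_le_abs_sub _ _
          _ = |Y ω| * |u - v| := by rw [← abs_mul]; ring_nf
      exact hL.lipschitzOnWith
    · exact hIntY.abs
    · have hae : ∀ᵐ ω ∂μ, X ω ≠ 0 := by
        rw [ae_iff]
        simpa using hXnull
      refine hae.mono fun ω hω => ?_
      have hlin : HasDerivAt (fun u : ℝ => X ω + u * Y ω) (Y ω) 0 := by
        simpa using ((hasDerivAt_id (0:ℝ)).mul_const (Y ω)).const_add (X ω)
      have hcont : ContinuousAt (fun u : ℝ => X ω + u * Y ω) 0 := hlin.continuousAt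
      rcases hω.lt_or_gt with hneg | hpos
      · have hev : ∀ᶠ u in nhds (0:ℝ), X ω + u * Y ω < 0 :=
          hcont.eventually (eventually_lt_nhds (by simpa using hneg))
        have : HasDerivAt (fun u : ℝ => -(X ω + u * Y ω)) (-(Y ω)) 0 := hlin.neg
        refine HasDerivAt.congr_of_eventuallyEq ?_ (hev.mono fun u hu => abs_of_neg hu)
        simpa [hsgn, not_lt.mpr hneg.le, hneg.not_gt] using this
      · have hev : ∀ᶠ u in nhds (0:ℝ), 0 < X ω + u * Y ω :=
          hcont.eventually (eventually_gt_nhds (by simpa using hpos))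
        refine HasDerivAt.congr_of_eventuallyEq ?_ (hev.mono fun u hu => abs_of_pos hu)
        simpa [hsgn, hpos] using hlin
  -- identify the derivative
  have hqpos : ∀ᶠ u in nhds (0:ℝ), 0 < q u := by
    have hqc : ContinuousAt q 0 := by fun_prop
    exact hqc.eventually (eventually_gt_nhds (by rwa [hq0]))
  have hEq : (fun u => ∫ ω, |X ω + u * Y ω| ∂μ) =ᶠ[nhds (0:ℝ)] fun u => Real.sqrt (q u) * m :=
    hqpos.mono fun u hu => hval u hu.le
  have hDeriv1' : HasDerivAt (fun u => ∫ ω, |X ω + u * Y ω| ∂μ) (c / Real.sqrt vX * m) 0 :=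
    hDeriv1.congr_of_eventuallyEq hEq
  have huniq : ∫ ω, sgn ω * Y ω ∂μ = c / Real.sqrt vX * m := hDeriv2.2.unique hDeriv1'
  -- relate to the set integral
  have hset : MeasurableSet {ω | 0 < X ω} := measurableSet_lt measurable_const hXm
  have hptw : ∀ ω, sgn ω * Y ω = 2 * ({ω | 0 < X ω}.indicator Y ω) - Y ω := by
    intro ω
    by_cases h : 0 < X ω <;> simp [hsgn, h, Set.indicator_apply] <;> ring
  have hIntInd : Integrable ({ω | 0 < X ω}.indicator Y) μ := hIntY.indicator hset
  have hsplit : ∫ ω, sgn ω * Y ω ∂μ = 2 * ∫ ω in {ω | 0 < X ω}, Y ω ∂μ := by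
    calc ∫ ω, sgn ω * Y ω ∂μ
        = ∫ ω, (2 * ({ω | 0 < X ω}.indicator Y ω) - Y ω) ∂μ := by
          exact integral_congr_ae (Eventually.of_forall hptw)
      _ = 2 * ∫ ω, {ω | 0 < X ω}.indicator Y ω ∂μ - ∫ ω, Y ω ∂μ := by
          rw [integral_sub (hIntInd.const_mul 2) hIntY, integral_const_mul]
      _ = 2 * ∫ ω in {ω | 0 < X ω}, Y ω ∂μ := by
          rw [integral_indicator hset, hYzero, sub_zero]
  have hsqrt : (0:ℝ) < Real.sqrt vX := Real.sqrt_pos.mpr hvX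
  rw [hsplit] at huniq
  field_simp at huniq ⊢
  linarith

end Key
section Rpow

lemma aux_rpow_superadd {p x y : ℝ} (hp : 1 < p) (hx : 0 < x) (hy : 0 < y) :
    x ^ p + y ^ p < (x + y) ^ p := by
  have hxy : (0:ℝ) < x + y := by linarith
  have hp1 : (0:ℝ) < p - 1 := by linarith
  have hx1 : x ^ p = x * x ^ (p - 1) := by
    rw [← Real.rpow_one_add' hx.le (by linarith)]; ring_nf
  have hy1 : y ^ p = y * y ^ (p - 1) := by
    rw [← Real.rpow_one_add' hy.le (by linarith)]; ring_nf
  have hxy1 : (x + y) ^ p = (x + y) * (x + y) ^ (p - 1) := by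
    rw [← Real.rpow_one_add' hxy.le (by linarith)]; ring_nf
  have h1 : x ^ (p-1) < (x+y) ^ (p-1) := Real.rpow_lt_rpow hx.le (by linarith) hp1
  have h2 : y ^ (p-1) < (x+y) ^ (p-1) := Real.rpow_lt_rpow hy.le (by linarith) hp1
  calc x ^ p + y ^ p = x * x ^ (p-1) + y * y ^ (p-1) := by rw [hx1, hy1]
    _ < x * (x+y) ^ (p-1) + y * (x+y) ^ (p-1) := by
        have := mul_lt_mul_of_pos_left h1 hx
        have := mul_lt_mul_of_pos_left h2 hy
        linarith
    _ = (x + y) ^ p := by rw [hxy1]; ring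

lemma aux_rpow_subadd {p x y : ℝ} (hp0 : 0 < p) (hp : p < 1) (hx : 0 < x) (hy : 0 < y) :
    (x + y) ^ p < x ^ p + y ^ p := by
  have hxy : (0:ℝ) < x + y := by linarith
  have hp1 : p - 1 < 0 := by linarith
  have hx1 : x ^ p = x * x ^ (p - 1) := by
    rw [← Real.rpow_one_add' hx.le (by linarith)]; ring_nf
  have hy1 : y ^ p = y * y ^ (p - 1) := by
    rw [← Real.rpow_one_add' hy.le (by linarith)]; ring_nf
  have hxy1 : (x + y) ^ p = (x + y) * (x + y) ^ (p - 1) := by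
    rw [← Real.rpow_one_add' hxy.le (by linarith)]; ring_nf
  have h1 : (x+y) ^ (p-1) < x ^ (p-1) := Real.rpow_lt_rpow_of_neg hx (by linarith) hp1
  have h2 : (x+y) ^ (p-1) < y ^ (p-1) := Real.rpow_lt_rpow_of_neg hy (by linarith) hp1
  calc (x + y) ^ p = x * (x+y) ^ (p-1) + y * (x+y) ^ (p-1) := by rw [hxy1]; ring
    _ < x * x ^ (p-1) + y * y ^ (p-1) := by
        have := mul_lt_mul_of_pos_left h1 hx
        have := mul_lt_mul_of_pos_left h2 hy
        linarith
    _ = x ^ p + y ^ p := by rw [hx1, hy1]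

end Rpow

section SplitStop

variable {Ω : Type*} {m0 : MeasurableSpace Ω} {μ : Measure Ω}

lemma aux_stopping (W : ℝ≥0 → Ω → ℝ) (hW : ∀ t, StronglyMeasurable (W t))
    (s u v : ℝ≥0) (hsu : s ≤ u) (hsv : s ≤ v) :
    IsStoppingTime (MeasureTheory.Filtration.natural W hW)
      (fun ω => ((if 0 < W s ω then u else v : ℝ≥0) : WithTop ℝ≥0)) := by
  have hA : MeasurableSet[(MeasureTheory.Filtration.natural W hW) s] {ω | 0 < W s ω} := by
    have h := (MeasureTheory.Filtration.stronglyAdapted_natural hW s).measurable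
      (measurableSet_Ioi (a := (0:ℝ)))
    exact h
  intro r
  simp only [WithTop.coe_le_coe]
  by_cases hur : u ≤ r <;> by_cases hvr : v ≤ r
  · have : {ω | (if 0 < W s ω then u else v) ≤ r} = Set.univ := by
      ext ω; by_cases h : 0 < W s ω <;> simp [h, hur, hvr]
    rw [this]; exact MeasurableSet.univ
  · have : {ω | (if 0 < W s ω then u else v) ≤ r} = {ω | 0 < W s ω} := by
      ext ω; by_cases h : 0 < W s ω <;> simp [h, hur, hvr]
    rw [this]
    exact (MeasureTheory.Filtration.natural W hW).mono (hsu.trans hur) _ hA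
  · have : {ω | (if 0 < W s ω then u else v) ≤ r} = {ω | 0 < W s ω}ᶜ := by
      ext ω; by_cases h : 0 < W s ω <;> simp [h, hur, hvr]
    rw [this]
    exact ((MeasureTheory.Filtration.natural W hW).mono (hsv.trans hvr) _ hA).compl
  · have : {ω | (if 0 < W s ω then u else v) ≤ r} = ∅ := by
      ext ω; by_cases h : 0 < W s ω <;> simp [h, hur, hvr]
    rw [this]
    exact @MeasurableSet.empty _ (MeasureTheory.Filtration.natural W hW r)

lemma aux_split (X f g : Ω → ℝ) (hXm : Measurable X)
    (hf : Integrable f μ) (hg : Integrable g μ) :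
    ∫ ω, (if 0 < X ω then f ω else g ω) ∂μ
      = (∫ ω in {ω | 0 < X ω}, (f ω - g ω) ∂μ) + ∫ ω, g ω ∂μ := by
  have hset : MeasurableSet {ω | 0 < X ω} := measurableSet_lt measurable_const hXm
  have hptw : ∀ ω, (if 0 < X ω then f ω else g ω)
      = {ω | 0 < X ω}.indicator (fun ω => f ω - g ω) ω + g ω := by
    intro ω
    by_cases h : 0 < X ω <;> simp [h, Set.indicator_apply]
  have h1 : Integrable ({ω | 0 < X ω}.indicator (fun ω => f ω - g ω)) μ :=
    (hf.sub hg).indicator hset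
  rw [integral_congr_ae (Eventually.of_forall hptw), integral_add h1 hg,
    integral_indicator hset]

end SplitStop

/-- Covariance function of fractional Brownian motion with Hurst parameter `H`. -/
noncomputable def fbmCov (H : ℝ) (s t : ℝ≥0) : ℝ :=
  ((s : ℝ) ^ (2 * H) + (t : ℝ) ^ (2 * H) - |(s : ℝ) - (t : ℝ)| ^ (2 * H)) / 2

theorem stmt16
    {Ω : Type*} {m0 : MeasurableSpace Ω} (μ : Measure Ω) [IsProbabilityMeasure μ]
    (H : ℝ) (hH0 : 0 < H) (hH1 : H < 1) (hH : H ≠ 1 / 2)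
    (W : ℝ≥0 → Ω → ℝ) (hW : ∀ t, StronglyMeasurable (W t))
    -- `W` is a centered Gaussian process with the fBM covariance structure:
    -- every linear combination of two coordinates is a centered Gaussian
    (hjoint : ∀ s t : ℝ≥0, ∀ a b : ℝ,
      Measure.map (fun ω => a * W s ω + b * W t ω) μ =
        ProbabilityTheory.gaussianReal 0
          (Real.toNNReal (a ^ 2 * fbmCov H s s + 2 * a * b * fbmCov H s t
            + b ^ 2 * fbmCov H t t))) :
    (∃ τ : Ω → ℝ≥0,
      IsStoppingTime (MeasureTheory.Filtration.natural W hW) (fun ω => (τ ω : WithTop ℝ≥0)) ∧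
      (∀ ω, τ ω ≤ 1) ∧
      0 < ∫ ω, W (τ ω) ω ∂μ) ∧
    (1 / 2 < H → ∀ s t : ℝ≥0, 0 < s → s < t → t ≤ 1 →
      (∫ ω, W (if 0 < W s ω then t else s) ω ∂μ
          = ∫ ω in {ω | 0 < W s ω}, (W t ω - W s ω) ∂μ) ∧
      0 < ∫ ω in {ω | 0 < W s ω}, (W t ω - W s ω) ∂μ) := by
  have hp0 : (0:ℝ) < 2 * H := by linarith
  -- one-dimensional laws, integrability, centering
  have hlaw : ∀ r : ℝ≥0,
      Measure.map (W r) μ = gaussianReal 0 (Real.toNNReal (fbmCov H r r)) := by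
    intro r
    have h := hjoint r r 1 0
    have hfun : (fun ω => (1:ℝ) * W r ω + 0 * W r ω) = W r := by funext ω; ring
    rw [hfun] at h
    rw [h]
    congr 1
    ring
  have hInt : ∀ r, Integrable (W r) μ :=
    fun r => aux_integrable_of_gaussian_map (hW r).measurable (hlaw r)
  have hzero : ∀ r, ∫ ω, W r ω ∂μ = 0 :=
    fun r => aux_integral_zero_of_gaussian_map (hW r).measurable (hlaw r)
  -- diagonal covariance
  have hss : ∀ s : ℝ≥0, fbmCov H s s = (s:ℝ) ^ (2*H) := by
    intro s
    simp only [fbmCov, sub_self, abs_zero, Real.zero_rpow hp0.ne']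
    ring
  have hvXpos : ∀ s : ℝ≥0, 0 < s → 0 < fbmCov H s s := by
    intro s hs
    rw [hss]
    exact Real.rpow_pos_of_pos (by exact_mod_cast hs) _
  -- off-diagonal covariance difference
  have hc : ∀ s t : ℝ≥0, s < t →
      fbmCov H s t - fbmCov H s s
        = ((t:ℝ) ^ (2*H) - (s:ℝ) ^ (2*H) - ((t:ℝ) - (s:ℝ)) ^ (2*H)) / 2 := by
    intro s t hst
    have hst' : (s:ℝ) < (t:ℝ) := by exact_mod_cast hst
    have habs : |(s:ℝ) - (t:ℝ)| = (t:ℝ) - (s:ℝ) := by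
      rw [abs_of_neg (by linarith), neg_sub]
    rw [hss]
    simp only [fbmCov, habs]
    ring
  -- the key quantity
  have hkey : ∀ s t : ℝ≥0, 0 < s → s < t →
      ∫ ω in {ω | 0 < W s ω}, (W t ω - W s ω) ∂μ
        = (∫ x, |x| ∂(gaussianReal 0 1)) / (2 * Real.sqrt (fbmCov H s s))
          * (fbmCov H s t - fbmCov H s s) := by
    intro s t hs hst
    refine aux_key μ (W s) (fun ω => W t ω - W s ω) (hW s).measurable
      ((hW t).measurable.sub (hW s).measurable)
      (fbmCov H s s) (fbmCov H s t - fbmCov H s s)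
      (fbmCov H s s - 2 * fbmCov H s t + fbmCov H t t) (hvXpos s hs) ?_
    intro a b
    have hfun : (fun ω => (a - b) * W s ω + b * W t ω)
        = (fun ω => a * W s ω + b * (W t ω - W s ω)) := by funext ω; ring
    have h := hjoint s t (a - b) b
    rw [hfun] at h
    rw [h]
    congr 1
    ring
  have hmpos : 0 < ∫ x, |x| ∂(gaussianReal 0 1) := aux_abs_moment_pos
  have hkpos : ∀ s : ℝ≥0, 0 < s →
      0 < (∫ x, |x| ∂(gaussianReal 0 1)) / (2 * Real.sqrt (fbmCov H s s)) := by
    intro s hs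
    have := Real.sqrt_pos.mpr (hvXpos s hs)
    positivity
  -- sign of covariance difference
  have hcpos : 1/2 < H → ∀ s t : ℝ≥0, 0 < s → s < t →
      0 < fbmCov H s t - fbmCov H s s := by
    intro hH' s t hs hst
    have hs' : (0:ℝ) < (s:ℝ) := by exact_mod_cast hs
    have hst' : (s:ℝ) < (t:ℝ) := by exact_mod_cast hst
    have h := aux_rpow_superadd (p := 2*H) (by linarith)
      (x := (s:ℝ)) (y := (t:ℝ) - (s:ℝ)) hs' (by linarith)
    have hxy : (s:ℝ) + ((t:ℝ) - (s:ℝ)) = (t:ℝ) := by ring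
    rw [hxy] at h
    rw [hc s t hst]
    linarith
  have hcneg : H < 1/2 → ∀ s t : ℝ≥0, 0 < s → s < t →
      fbmCov H s t - fbmCov H s s < 0 := by
    intro hH' s t hs hst
    have hs' : (0:ℝ) < (s:ℝ) := by exact_mod_cast hs
    have hst' : (s:ℝ) < (t:ℝ) := by exact_mod_cast hst
    have h := aux_rpow_subadd (p := 2*H) hp0 (by linarith)
      (x := (s:ℝ)) (y := (t:ℝ) - (s:ℝ)) hs' (by linarith)
    have hxy : (s:ℝ) + ((t:ℝ) - (s:ℝ)) = (t:ℝ) := by ring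
    rw [hxy] at h
    rw [hc s t hst]
    linarith
  -- the two-step integral identity
  have hident : ∀ s t : ℝ≥0,
      ∫ ω, W (if 0 < W s ω then t else s) ω ∂μ
        = ∫ ω in {ω | 0 < W s ω}, (W t ω - W s ω) ∂μ := by
    intro s t
    have hfun : (fun ω => W (if 0 < W s ω then t else s) ω)
        = (fun ω => if 0 < W s ω then W t ω else W s ω) := by
      funext ω; by_cases h : 0 < W s ω <;> simp [h]
    calc ∫ ω, W (if 0 < W s ω then t else s) ω ∂μ
        = ∫ ω, (if 0 < W s ω then W t ω else W s ω) ∂μ := by rw [hfun]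
      _ = ∫ ω in {ω | 0 < W s ω}, (W t ω - W s ω) ∂μ := by
          rw [aux_split (W s) (W t) (W s) (hW s).measurable (hInt t) (hInt s),
            hzero s, add_zero]
  constructor
  · -- existence of a profitable stopping time
    have hs0 : (0:ℝ≥0) < 1/2 := by norm_num
    have hst0 : (1/2:ℝ≥0) < 1 := by
      rw [← NNReal.coe_lt_coe]; norm_num
    rcases lt_or_gt_of_ne hH with hlt | hgt
    · -- H < 1/2 : stop at 1/2 if positive, else continue to 1
      refine ⟨fun ω => if 0 < W (1/2) ω then (1/2:ℝ≥0) else 1, ?_, ?_, ?_⟩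
      · exact aux_stopping W hW (1/2) (1/2) 1 le_rfl hst0.le
      · intro ω; dsimp only; split_ifs
        · exact hst0.le
        · exact le_rfl
      · have hfun : (fun ω => W (if 0 < W (1/2:ℝ≥0) ω then (1/2:ℝ≥0) else 1) ω)
            = (fun ω => if 0 < W (1/2:ℝ≥0) ω then W (1/2:ℝ≥0) ω else W 1 ω) := by
          funext ω; split_ifs <;> rfl
        rw [hfun, aux_split (W (1/2)) (W (1/2)) (W 1) (hW (1/2)).measurable
          (hInt (1/2)) (hInt 1), hzero 1, add_zero]
        have hneg : (fun ω => W (1/2:ℝ≥0) ω - W 1 ω)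
            = (fun ω => -(W 1 ω - W (1/2:ℝ≥0) ω)) := by funext ω; ring
        rw [show (∫ ω in {ω | 0 < W (1/2:ℝ≥0) ω}, (W (1/2:ℝ≥0) ω - W 1 ω) ∂μ)
            = -∫ ω in {ω | 0 < W (1/2:ℝ≥0) ω}, (W 1 ω - W (1/2:ℝ≥0) ω) ∂μ from by
          rw [← integral_neg]; exact congrArg _ (funext fun ω => by ring)]
        rw [hkey (1/2) 1 hs0 hst0]
        have := hcneg hlt (1/2) 1 hs0 hst0
        have := hkpos (1/2) hs0
        nlinarith
    · -- 1/2 < H : continue to 1 if positive at 1/2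
      refine ⟨fun ω => if 0 < W (1/2) ω then (1:ℝ≥0) else 1/2, ?_, ?_, ?_⟩
      · exact aux_stopping W hW (1/2) 1 (1/2) hst0.le le_rfl
      · intro ω; dsimp only; split_ifs
        · exact le_rfl
        · exact hst0.le
      · rw [hident (1/2) 1, hkey (1/2) 1 hs0 hst0]
        exact mul_pos (hkpos (1/2) hs0) (hcpos hgt (1/2) 1 hs0 hst0)
  · intro hH' s t hs hst _
    refine ⟨hident s t, ?_⟩
    rw [hkey s t hs hst]
    exact mul_pos (hkpos s hs) (hcpos hH' s t hs hst)
end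

section
/- Let $X = (X_n)_{n=0}^N$ be adapted to $(\mathcal{F}_n)$ with $g(n, X_n)$ integrable for all $n$, and let $\tau_{n+1} \in \mathcal{T}_{n+1}$ be any stopping time. Define $f_n(x) = \mathbf{1}_{\{g(n,x) \ge h_n(x)\}}$ where $h_n(X_n)$ is a version of $\mathbb{E}[g(\tau_{n+1}, X_{\tau_{n+1}}) \mid X_n]$ and this conditional expectation also equals $\mathbb{E}[g(\tau_{n+1}, X_{\tau_{n+1}}) \mid \mathcal{F}_n]$ a.s. Then the stopping time $\tau_n = n\mathbf{1}_{\{f_n(X_n)=1\}} + \tau_{n+1}\mathbf{1}_{\{f_n(X_n)=0\}}$ satisfies $\mathbb{E}\, g(\tau_n, X_{\tau_n}) = \mathbb{E}[\max(g(n,X_n), h_n(X_n))] \ge \mathbb{E}\, g(\tau, X_\tau)$ for every stopping time $\tau \in \mathcal{T}_n$ of the form $\tau = n\mathbf{1}_E + \tau_{n+1}\mathbf{1}_{E^c}$ with $E \in \mathcal{F}_n$. -/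
open MeasureTheory Filter Set Classical

theorem stmt17
    {Ω : Type*} {m0 : MeasurableSpace Ω} (μ : Measure Ω) [IsProbabilityMeasure μ]
    (ℱ : Filtration ℕ m0) (d N n : ℕ) (hn : n < N)
    (X : ℕ → Ω → (Fin d → ℝ)) (hXadpt : ∀ m, StronglyMeasurable[ℱ m] (X m))
    (g : ℕ → (Fin d → ℝ) → ℝ) (hg : ∀ m, Measurable (g m))
    (hgint : ∀ m, m ≤ N → Integrable (fun ω => g m (X m ω)) μ)
    (τ1 : Ω → ℕ) (hτ1 : IsStoppingTime ℱ (fun ω => (τ1 ω : WithTop ℕ)))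
    (hτ1r : ∀ ω, τ1 ω ∈ Finset.Icc (n + 1) N)
    (hτ1int : Integrable (fun ω => g (τ1 ω) (X (τ1 ω) ω)) μ)
    (h : (Fin d → ℝ) → ℝ) (hh : Measurable h)
    -- `h(X_n)` is a version of the continuation value, both as a conditional
    -- expectation given `X_n` and given `F_n`
    (hhX : (fun ω => h (X n ω)) =ᵐ[μ]
      μ[(fun ω => g (τ1 ω) (X (τ1 ω) ω)) | MeasurableSpace.comap (X n) inferInstance])
    (hhF : (fun ω => h (X n ω)) =ᵐ[μ]
      μ[(fun ω => g (τ1 ω) (X (τ1 ω) ω)) | ℱ n])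
    (τn : Ω → ℕ)
    (hτn : ∀ ω, τn ω = if h (X n ω) ≤ g n (X n ω) then n else τ1 ω) :
    ∫ ω, g (τn ω) (X (τn ω) ω) ∂μ = ∫ ω, max (g n (X n ω)) (h (X n ω)) ∂μ ∧
    ∀ E : Set Ω, MeasurableSet[ℱ n] E →
      ∫ ω, g ((fun ω' => if ω' ∈ E then n else τ1 ω') ω) (X ((fun ω' => if ω' ∈ E then n else τ1 ω') ω) ω) ∂μ
        ≤ ∫ ω, g (τn ω) (X (τn ω) ω) ∂μ := by
  set G : Ω → ℝ := fun ω => g (τ1 ω) (X (τ1 ω) ω) with hGdef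
  set f1 : Ω → ℝ := fun ω => g n (X n ω) with hf1def
  set f2 : Ω → ℝ := fun ω => h (X n ω) with hf2def
  have hf1int : Integrable f1 μ := hgint n hn.le
  have hf2int : Integrable f2 μ := (integrable_condExp).congr hhF.symm
  -- key computation for any E ∈ ℱ n
  have key : ∀ E : Set Ω, MeasurableSet[ℱ n] E →
      ∫ ω, g ((if ω ∈ E then n else τ1 ω)) (X (if ω ∈ E then n else τ1 ω) ω) ∂μ
        = ∫ ω, E.piecewise f1 f2 ω ∂μ := by
    intro E hE
    have hE0 : MeasurableSet E := ℱ.le n E hE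
    have h1 : (fun ω => g ((if ω ∈ E then n else τ1 ω)) (X (if ω ∈ E then n else τ1 ω) ω))
        = E.piecewise f1 G := by
      funext ω
      by_cases hω : ω ∈ E <;> simp [Set.piecewise, hω, hGdef, hf1def]
    rw [h1, integral_piecewise hE0 hf1int.integrableOn hτ1int.integrableOn,
      integral_piecewise hE0 hf1int.integrableOn hf2int.integrableOn]
    congr 1
    calc ∫ ω in Eᶜ, G ω ∂μ
        = ∫ ω in Eᶜ, (μ[G | ℱ n]) ω ∂μ :=
          (setIntegral_condExp (ℱ.le n) hτ1int hE.compl).symm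
      _ = ∫ ω in Eᶜ, f2 ω ∂μ :=
          setIntegral_congr_ae ((ℱ.le n) Eᶜ hE.compl)
            (hhF.symm.mono fun ω hω _ => hω)
  -- the set where we stop
  set E₀ : Set Ω := {ω | h (X n ω) ≤ g n (X n ω)} with hE₀def
  have hE₀ : MeasurableSet[ℱ n] E₀ := by
    have hXn : Measurable[ℱ n] (X n) := (hXadpt n).measurable
    exact measurableSet_le (hh.comp hXn) ((hg n).comp hXn)
  have hτneq : (fun ω => g (τn ω) (X (τn ω) ω))
      = fun ω => g ((if ω ∈ E₀ then n else τ1 ω)) (X (if ω ∈ E₀ then n else τ1 ω) ω) := by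
    funext ω
    rw [hτn ω]
    by_cases hω : h (X n ω) ≤ g n (X n ω) <;>
      simp [hE₀def, Set.mem_setOf_eq, hω]
  have hmaxeq : ∫ ω, E₀.piecewise f1 f2 ω ∂μ = ∫ ω, max (g n (X n ω)) (h (X n ω)) ∂μ := by
    apply integral_congr_ae
    filter_upwards with ω
    by_cases hω : h (X n ω) ≤ g n (X n ω)
    · simp [Set.piecewise, hE₀def, Set.mem_setOf_eq, hω, max_eq_left hω, hf1def]
    · simp [Set.piecewise, hE₀def, Set.mem_setOf_eq, hω, hf2def,
        max_eq_right (le_of_not_ge hω)]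
  have hfirst : ∫ ω, g (τn ω) (X (τn ω) ω) ∂μ = ∫ ω, max (g n (X n ω)) (h (X n ω)) ∂μ := by
    rw [hτneq, key E₀ hE₀, hmaxeq]
  refine ⟨hfirst, fun E hE => ?_⟩
  rw [hfirst, key E hE]
  have hmaxint : Integrable (fun ω => max (g n (X n ω)) (h (X n ω))) μ := hf1int.sup hf2int
  apply integral_mono _ hmaxint
  · intro ω
    by_cases hω : ω ∈ E <;> simp [Set.piecewise, hω, le_max_left, le_max_right, hf1def, hf2def]
  · exact Integrable.piecewise (ℱ.le n E hE) hf1int.integrableOn hf2int.integrableOn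
end

section
/- Let $H_n = \operatorname{ess\,sup}_{\tau \in \mathcal{T}_n} \mathbb{E}[g(\tau, X_\tau) \mid \mathcal{F}_n]$ be the Snell envelope of an integrable adapted process $(g(n,X_n))_{n=0}^N$, with Doob decomposition $H_n = H_0 + M^H_n - A^H_n$. If $(M_n, \varepsilon_n) = (M^H_n, 0)$, then the dual upper bound is tight: $\mathbb{E}\big[\max_{0 \le n \le N}(g(n,X_n) - M^H_n)\big] = H_0 = \sup_{\tau \in \mathcal{T}}\mathbb{E}\, g(\tau, X_\tau)$. -/
open MeasureTheory Filter Set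

theorem stmt19_aux (N : ℕ) (g h m a e : ℕ → ℝ)
    (hrec : ∀ n, n < N → h n = max (g n) (e n))
    (hN : h N = g N)
    (hdm : ∀ n, n ≤ N → h n = h 0 + m n - a n)
    (hinc : ∀ n, n < N → e n = h 0 + m n - a (n + 1))
    (ha0 : a 0 = 0)
    (hamono : ∀ n, n < N → a n ≤ a (n + 1)) :
    g (sInf {n | N ≤ n ∨ h n = g n}) - m (sInf {n | N ≤ n ∨ h n = g n}) = h 0
    ∧ (Finset.range (N + 1)).sup' (Finset.nonempty_range_iff.mpr N.succ_ne_zero)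
        (fun n => g n - m n) = h 0 := by
  set S : Set ℕ := {n | N ≤ n ∨ h n = g n} with hS
  have hNS : N ∈ S := Or.inl le_rfl
  set τ : ℕ := sInf S with hτ
  have hτN : τ ≤ N := Nat.sInf_le hNS
  have hbelow : ∀ k, k < τ → k < N ∧ h k ≠ g k := by
    intro k hk
    have : k ∉ S := Nat.notMem_of_lt_sInf hk
    simp only [hS, Set.mem_setOf_eq, not_or, not_le] at this
    exact this
  have haτ : ∀ k, k ≤ τ → a k = 0 := by
    intro k hk
    induction k with
    | zero => exact ha0
    | succ k ih =>
      have hkτ : k < τ := hk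
      obtain ⟨hkN, hne⟩ := hbelow k hkτ
      have hak : a k = 0 := ih hkτ.le
      have hmax := hrec k hkN
      have hke : h k = e k := by
        rcases max_cases (g k) (e k) with ⟨h1, _⟩ | ⟨h1, _⟩
        · exact absurd (hmax.trans h1) hne
        · exact hmax.trans h1
      have := (hdm k hkN.le).symm.trans (hke.trans (hinc k hkN))
      have : a (k + 1) = a k := by linarith
      rw [this, hak]
  have hτeq : h τ = g τ := by
    rcases lt_or_eq_of_le hτN with hlt | heq
    · have hmem : τ ∈ S := Nat.sInf_mem ⟨N, hNS⟩
      rcases hmem with hc | hc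
      · exact absurd hc (not_le_of_gt hlt)
      · exact hc
    · rw [heq]; exact hN
  have hanonneg : ∀ n, n ≤ N → 0 ≤ a n := by
    intro n hn
    induction n with
    | zero => simp [ha0]
    | succ k ih => exact (ih (Nat.le_of_succ_le hn)).trans (hamono k hn)
  have hgh : ∀ n, n ≤ N → g n ≤ h n := by
    intro n hn
    rcases lt_or_eq_of_le hn with hlt | heq
    · rw [hrec n hlt]; exact le_max_left _ _
    · subst heq; exact hN.ge
  have hkey : g τ - m τ = h 0 := by
    rw [hτeq.symm]
    linarith [hdm τ hτN, haτ τ le_rfl]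
  refine ⟨hkey, le_antisymm ?_ ?_⟩
  · apply Finset.sup'_le
    intro n hn
    have hn' : n ≤ N := Nat.lt_succ_iff.mp (Finset.mem_range.mp hn)
    have := hgh n hn'
    have := hdm n hn'
    have := hanonneg n hn'
    linarith
  · rw [← hkey]
    exact Finset.le_sup' (fun n => g n - m n) (Finset.mem_range.mpr (Nat.lt_succ_of_le hτN))

theorem stmt19
    {Ω : Type*} {m0 : MeasurableSpace Ω} (μ : Measure Ω) [IsProbabilityMeasure μ]
    (ℱ : Filtration ℕ m0) (N : ℕ)
    (G H M A : ℕ → Ω → ℝ)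
    (hGadpt : Adapted ℱ G) (hGint : ∀ n, n ≤ N → Integrable (G n) μ)
    -- `H` is the Snell envelope of `G`: backward dynamic programming recursion
    (hHadpt : Adapted ℱ H) (hHint : ∀ n, n ≤ N → Integrable (H n) μ)
    (hHN : H N =ᵐ[μ] G N)
    (hHrec : ∀ n, n < N → H n =ᵐ[μ] fun ω => max (G n ω) ((μ[H (n + 1) | ℱ n]) ω))
    -- Doob decomposition `H_n = H_0 + M_n - A_n` with `M` martingale and `A`
    -- predictable, nonnegative and nondecreasing
    (hM : Martingale M ℱ μ) (hM0 : ∀ ω, M 0 ω = 0)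
    (hAint : ∀ n, n ≤ N → Integrable (A n) μ)
    (hA0 : ∀ ω, A 0 ω = 0)
    (hAmono : ∀ᵐ ω ∂μ, ∀ n, n < N → A n ω ≤ A (n + 1) ω)
    (hApred : ∀ n, StronglyMeasurable[ℱ n] (A (n + 1)))
    (hDM : ∀ n, n ≤ N → H n =ᵐ[μ] fun ω => H 0 ω + M n ω - A n ω) :
    (∫ ω, (Finset.range (N + 1)).sup' (Finset.nonempty_range_iff.mpr N.succ_ne_zero)
        (fun n => G n ω - M n ω) ∂μ) = ∫ ω, H 0 ω ∂μ ∧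
    ∫ ω, H 0 ω ∂μ = sSup ((fun τ : Ω → ℕ => ∫ ω, G (τ ω) ω ∂μ) ''
        {τ | IsStoppingTime ℱ (fun ω => (τ ω : WithTop ℕ)) ∧ ∀ ω, τ ω ≤ N}) := by
  have hH0int : Integrable (H 0) μ := hHint 0 (Nat.zero_le N)
  -- increment identity for the conditional expectation
  have hinc : ∀ n, n < N →
      (μ[H (n + 1)|ℱ n]) =ᵐ[μ] fun ω => H 0 ω + M n ω - A (n + 1) ω := by
    intro n hn
    have h1 : μ[H (n + 1)|ℱ n] =ᵐ[μ] μ[(H 0 + M (n + 1)) - A (n + 1)|ℱ n] := by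
      refine condExp_congr_ae ?_
      filter_upwards [hDM (n + 1) hn] with ω hω
      simpa using hω
    have h2 : μ[(H 0 + M (n + 1)) - A (n + 1)|ℱ n]
        =ᵐ[μ] μ[H 0 + M (n + 1)|ℱ n] - μ[A (n + 1)|ℱ n] :=
      condExp_sub (hH0int.add (hM.integrable (n + 1))) (hAint (n + 1) hn) _
    have h3 : μ[H 0 + M (n + 1)|ℱ n] =ᵐ[μ] μ[H 0|ℱ n] + μ[M (n + 1)|ℱ n] :=
      condExp_add hH0int (hM.integrable (n + 1)) _
    have h4 : μ[H 0|ℱ n] = H 0 :=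
      condExp_of_stronglyMeasurable (ℱ.le n) ((hHadpt 0).mono (ℱ.mono (Nat.zero_le n)) le_rfl).stronglyMeasurable hH0int
    have h5 := hM.condExp_ae_eq (Nat.le_succ n)
    have h6 : μ[A (n + 1)|ℱ n] = A (n + 1) :=
      condExp_of_stronglyMeasurable (ℱ.le n) (hApred n) (hAint (n + 1) hn)
    filter_upwards [h1, h2, h3, h5] with ω e1 e2 e3 e5
    simp only [Pi.add_apply, Pi.sub_apply] at e1 e2 e3 e5 ⊢
    rw [e1, e2, e3, e5, h4, h6]
  -- upgrade to pointwise-a.e. statements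
  have hrec' : ∀ᵐ ω ∂μ, ∀ n, n < N → H n ω = max (G n ω) ((μ[H (n + 1)|ℱ n]) ω) := by
    refine ae_all_iff.2 fun n => ?_
    by_cases hn : n < N
    · filter_upwards [hHrec n hn] with ω h _; exact h
    · exact ae_of_all _ fun ω h => absurd h hn
  have hdm' : ∀ᵐ ω ∂μ, ∀ n, n ≤ N → H n ω = H 0 ω + M n ω - A n ω := by
    refine ae_all_iff.2 fun n => ?_
    by_cases hn : n ≤ N
    · filter_upwards [hDM n hn] with ω h _; exact h
    · exact ae_of_all _ fun ω h => absurd h hn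
  have hinc' : ∀ᵐ ω ∂μ, ∀ n, n < N →
      (μ[H (n + 1)|ℱ n]) ω = H 0 ω + M n ω - A (n + 1) ω := by
    refine ae_all_iff.2 fun n => ?_
    by_cases hn : n < N
    · filter_upwards [hinc n hn] with ω h _; exact h
    · exact ae_of_all _ fun ω h => absurd h hn
  set τstar : Ω → ℕ := fun ω => sInf {n | N ≤ n ∨ H n ω = G n ω} with hτstar
  have key : ∀ᵐ ω ∂μ,
      (G (τstar ω) ω - M (τstar ω) ω = H 0 ω) ∧
      (Finset.range (N + 1)).sup' (Finset.nonempty_range_iff.mpr N.succ_ne_zero)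
        (fun n => G n ω - M n ω) = H 0 ω := by
    filter_upwards [hrec', hHN, hdm', hinc', hAmono] with ω e1 e2 e3 e4 e5
    exact stmt19_aux N (fun n => G n ω) (fun n => H n ω) (fun n => M n ω) (fun n => A n ω)
      (fun n => (μ[H (n + 1)|ℱ n]) ω) e1 e2 e3 e4 (hA0 ω) e5
  -- stopped martingale has mean zero
  have hMint0 : ∀ τ : Ω → ℕ, IsStoppingTime ℱ (fun ω => (τ ω : WithTop ℕ)) → (∀ ω, τ ω ≤ N) →
      ∫ ω, M (τ ω) ω ∂μ = 0 := by
    intro τ hτ hbdd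
    have hle := hM.submartingale.expected_stoppedValue_mono (isStoppingTime_const ℱ 0) hτ
      (fun ω => WithTop.coe_le_coe.mpr (Nat.zero_le _)) (fun ω => WithTop.coe_le_coe.mpr (hbdd ω))
    have hge := hM.neg.submartingale.expected_stoppedValue_mono (isStoppingTime_const ℱ 0) hτ
      (fun ω => WithTop.coe_le_coe.mpr (Nat.zero_le _)) (fun ω => WithTop.coe_le_coe.mpr (hbdd ω))
    simp only [stoppedValue, WithTop.untopA, WithTop.untopD_coe, Pi.neg_apply, hM0, integral_zero, integral_neg] at hle hge
    change 0 ≤ ∫ x, M (τ x) x ∂μ at hle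
    change -0 ≤ -∫ x, M (τ x) x ∂μ at hge
    linarith
  -- τstar is a bounded stopping time
  have hτstarN : ∀ ω, τstar ω ≤ N := fun ω => Nat.sInf_le (Or.inl le_rfl)
  have hτstarST : IsStoppingTime ℱ (fun ω => (τstar ω : WithTop ℕ)) := by
    intro n
    suffices MeasurableSet[ℱ n] {ω | τstar ω ≤ n} by
      convert this using 1
      ext ω; simp
    have hset : {ω | τstar ω ≤ n} = ⋃ k ∈ Finset.Iic n, {ω | N ≤ k ∨ H k ω = G k ω} := by
      ext ω
      simp only [Set.mem_setOf_eq, Set.mem_iUnion, exists_prop, Finset.mem_Iic]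
      constructor
      · intro hle
        have hmem := Nat.sInf_mem
          (⟨N, Or.inl le_rfl⟩ : {n | N ≤ n ∨ H n ω = G n ω}.Nonempty)
        exact ⟨τstar ω, hle, hmem⟩
      · rintro ⟨k, hk, hmem⟩
        exact le_trans (Nat.sInf_le hmem) hk
    rw [show {ω | τstar ω ≤ n} = _ from hset]
    refine MeasurableSet.biUnion (Finset.Iic n).countable_toSet fun k hk => ?_
    have hkn : k ≤ n := Finset.mem_Iic.mp hk
    by_cases hNk : N ≤ k
    · have : {ω | N ≤ k ∨ H k ω = G k ω} = Set.univ := Set.eq_univ_of_forall fun ω => Or.inl hNk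
      rw [this]; exact MeasurableSet.univ
    · have : {ω | N ≤ k ∨ H k ω = G k ω} = {ω | H k ω = G k ω} := by
        ext ω; simp [hNk]
      rw [this]
      exact ℱ.mono hkn _ (measurableSet_eq_fun (hHadpt k) (hGadpt k))
  -- attained value
  have hmem : ∫ ω, G (τstar ω) ω ∂μ = ∫ ω, H 0 ω ∂μ := by
    have he : (fun ω => G (τstar ω) ω) =ᵐ[μ] fun ω => H 0 ω + M (τstar ω) ω := by
      filter_upwards [key] with ω h
      linarith [h.1]
    have hMτint : Integrable (fun ω => M (τstar ω) ω) μ :=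
      integrable_stoppedValue ℕ hτstarST hM.integrable (fun ω => WithTop.coe_le_coe.mpr (hτstarN ω))
    rw [integral_congr_ae he, integral_add hH0int hMτint, hMint0 τstar hτstarST hτstarN, add_zero]
  -- upper bound for every bounded stopping time
  have hApos : ∀ᵐ ω ∂μ, ∀ n, n ≤ N → 0 ≤ A n ω := by
    filter_upwards [hAmono] with ω hω
    intro n
    induction n with
    | zero => intro _; simp [hA0]
    | succ k ih => intro h; exact (ih (by omega)).trans (hω k (by omega))
  have hGleH : ∀ᵐ ω ∂μ, ∀ n, n ≤ N → G n ω ≤ H 0 ω + M n ω - A n ω := by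
    filter_upwards [hrec', hHN, hdm'] with ω e1 e2 e3
    intro n hn
    rw [← e3 n hn]
    rcases lt_or_eq_of_le hn with hlt | heq
    · rw [e1 n hlt]; exact le_max_left _ _
    · subst heq; exact e2.ge
  have hub : ∀ τ : Ω → ℕ, IsStoppingTime ℱ (fun ω => (τ ω : WithTop ℕ)) → (∀ ω, τ ω ≤ N) →
      ∫ ω, G (τ ω) ω ∂μ ≤ ∫ ω, H 0 ω ∂μ := by
    intro τ hτ hbdd
    have hG'int : ∀ n, Integrable (fun ω => G (min n N) ω) μ :=
      fun n => hGint _ (min_le_right n N)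
    have hA'int : ∀ n, Integrable (fun ω => A (min n N) ω) μ :=
      fun n => hAint _ (min_le_right n N)
    have hGτint : Integrable (fun ω => G (τ ω) ω) μ := by
      refine (integrable_stoppedValue ℕ hτ hG'int (fun ω => WithTop.coe_le_coe.mpr (hbdd ω))).congr (ae_of_all _ fun ω => ?_)
      show G (min (τ ω) N) ω = G (τ ω) ω
      rw [min_eq_left (hbdd ω)]
    have hMτint : Integrable (fun ω => M (τ ω) ω) μ :=
      integrable_stoppedValue ℕ hτ hM.integrable (fun ω => WithTop.coe_le_coe.mpr (hbdd ω))
    have hAτint : Integrable (fun ω => A (τ ω) ω) μ := by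
      refine (integrable_stoppedValue ℕ hτ hA'int (fun ω => WithTop.coe_le_coe.mpr (hbdd ω))).congr (ae_of_all _ fun ω => ?_)
      show A (min (τ ω) N) ω = A (τ ω) ω
      rw [min_eq_left (hbdd ω)]
    have hle : (fun ω => G (τ ω) ω) ≤ᵐ[μ]
        fun ω => H 0 ω + M (τ ω) ω - A (τ ω) ω := by
      filter_upwards [hGleH] with ω hω
      exact hω (τ ω) (hbdd ω)
    have hAnn : 0 ≤ ∫ ω, A (τ ω) ω ∂μ := by
      refine integral_nonneg_of_ae ?_
      filter_upwards [hApos] with ω hω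
      exact hω (τ ω) (hbdd ω)
    calc ∫ ω, G (τ ω) ω ∂μ
        ≤ ∫ ω, (H 0 ω + M (τ ω) ω - A (τ ω) ω) ∂μ :=
          integral_mono_ae hGτint ((hH0int.add hMτint).sub hAτint) hle
      _ = ∫ ω, H 0 ω ∂μ + ∫ ω, M (τ ω) ω ∂μ - ∫ ω, A (τ ω) ω ∂μ := by
          have hHM : Integrable (fun ω => H 0 ω + M (τ ω) ω) μ := hH0int.add hMτint
          rw [integral_sub hHM hAτint, integral_add hH0int hMτint]
      _ ≤ ∫ ω, H 0 ω ∂μ := by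
          rw [hMint0 τ hτ hbdd]
          linarith
  constructor
  · exact integral_congr_ae (key.mono fun ω h => h.2)
  · have hubS : ∀ x ∈ (fun τ : Ω → ℕ => ∫ ω, G (τ ω) ω ∂μ) ''
        {τ | IsStoppingTime ℱ (fun ω => (τ ω : WithTop ℕ)) ∧ ∀ ω, τ ω ≤ N}, x ≤ ∫ ω, H 0 ω ∂μ := by
      rintro x ⟨τ, ⟨h1, h2⟩, rfl⟩
      exact hub τ h1 h2
    have hmemS : (∫ ω, H 0 ω ∂μ) ∈ (fun τ : Ω → ℕ => ∫ ω, G (τ ω) ω ∂μ) ''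
        {τ | IsStoppingTime ℱ (fun ω => (τ ω : WithTop ℕ)) ∧ ∀ ω, τ ω ≤ N} :=
      ⟨τstar, ⟨hτstarST, hτstarN⟩, hmem⟩
    exact le_antisymm (le_csSup ⟨_, hubS⟩ hmemS) (csSup_le ⟨_, hmemS⟩ hubS)
end
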